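/- arXiv:1707.06748 — 12 statements merged into one kernel-verified Lean document; each statement's English description precedes it below -/
import Mathlib

section
/- Let n, k ≥ 1 and let A : Fin k → Matrix (Fin n) (Fin n) ℂ be a tuple of n×n complex matrices. If the Burnside graph of A is not strongly connected (i.e., there exist i j : Fin n with ¬ Relation.ReflTransGen E i j), then the algebra generated by the A m is not the full matrix algebra: Algebra.adjoin ℂ (Set.range A) ≠ ⊤. -/
/-- **Obstacle to full algebra.** If the Burnside graph of a tuple of `n × n`
complex matrices is not strongly connected, then the matrices do not generate
the full matrix algebra. -/
theorem burnside_graph_not_strongly_connected_adjoin_ne_top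
    (n k : ℕ) (hn : 1 ≤ n) (hk : 1 ≤ k)
    (A : Fin k → Matrix (Fin n) (Fin n) ℂ)
    (hnc : ∃ i j : Fin n,
      ¬ Relation.ReflTransGen (fun i j : Fin n => i ≠ j ∧ ∃ m, A m i j ≠ 0) i j) :
    Algebra.adjoin ℂ (Set.range A) ≠ ⊤ := by
  obtain ⟨i, j, hij⟩ := hnc
  set E := fun i j : Fin n => i ≠ j ∧ ∃ m, A m i j ≠ 0 with hE
  set reach := fun p : Fin n => Relation.ReflTransGen E i p with hreach
  have key : ∀ X ∈ Algebra.adjoin ℂ (Set.range A),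
      ∀ p q : Fin n, reach p → ¬ reach q → X p q = 0 := by
    intro X hX
    induction hX using Algebra.adjoin_induction with
    | mem x hx =>
      obtain ⟨m, rfl⟩ := hx
      intro p q hp hq
      by_contra h
      have hpq : p ≠ q := by rintro rfl; exact hq hp
      exact hq (hp.tail ⟨hpq, m, h⟩)
    | algebraMap c =>
      intro p q hp hq
      have hpq : p ≠ q := by rintro rfl; exact hq hp
      simp [Matrix.algebraMap_matrix_apply, hpq]
    | add x y hx hy ihx ihy =>
      intro p q hp hq
      simp [Matrix.add_apply, ihx p q hp hq, ihy p q hp hq]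
    | mul x y hx hy ihx ihy =>
      intro p q hp hq
      rw [Matrix.mul_apply]
      apply Finset.sum_eq_zero
      intro r _
      by_cases hr : reach r
      · rw [ihy r q hr hq, mul_zero]
      · rw [ihx p r hp hr, zero_mul]
  intro htop
  have hmem : (Matrix.single i j (1 : ℂ)) ∈ Algebra.adjoin ℂ (Set.range A) := by
    rw [htop]; trivial
  have := key _ hmem i j Relation.ReflTransGen.refl hij
  simp [Matrix.single] at this
end

section
/- Every unital ℂ-subalgebra 𝒜 of Matrix (Fin n) (Fin n) ℂ (n ≥ 1) can be put into block upper triangular form whose diagonal blocks are full matrix algebras: there exist m ≥ 1, block sizes d : Fin m → ℕ with d i ≥ 1 for all i and ∑ i, d i = n, an index bijection e : (Σ i : Fin m, Fin (d i)) ≃ Fin n, and a unitary matrix U ∈ Matrix.unitaryGroup (Fin n) ℂ, such that, writing for M ∈ 𝒜 the conjugate M' := (star U) * M * U and its (i,j) block M'_{ij} : Matrix (Fin (d i)) (Fin (d j)) ℂ given by (M'_{ij}) a b := M' (e ⟨i,a⟩) (e ⟨j,b⟩), the following hold: (a) for every M ∈ 𝒜 and all block indices i, j : Fin m with j < i, the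 block M'_{ij} = 0; and (b) for every i : Fin m, the map M ↦ M'_{ii} from 𝒜 to Matrix (Fin (d i)) (Fin (d i)) ℂ is surjective. -/
open Matrix Module

open Matrix

namespace BurnsideAux

variable {n : ℕ}

/-- `M ↦ M.mulVec x` as a linear map. -/
noncomputable def phi (x : Fin n → ℂ) : Matrix (Fin n) (Fin n) ℂ →ₗ[ℂ] (Fin n → ℂ) where
  toFun M := M.mulVec x
  map_add' A B := Matrix.add_mulVec A B x
  map_smul' c A := by simp [Matrix.smul_mulVec]

@[simp] lemma phi_apply (x : Fin n → ℂ) (M : Matrix (Fin n) (Fin n) ℂ) :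
    phi x M = M.mulVec x := rfl

lemma schur (hn : 1 ≤ n) (𝒜 : Subalgebra ℂ (Matrix (Fin n) (Fin n) ℂ))
    (hirr : ∀ W : Submodule ℂ (Fin n → ℂ),
      (∀ M ∈ 𝒜, ∀ v ∈ W, M.mulVec v ∈ W) → W = ⊥ ∨ W = ⊤)
    (f : (Fin n → ℂ) →ₗ[ℂ] (Fin n → ℂ))
    (hf : ∀ M ∈ 𝒜, ∀ v, f (M.mulVec v) = M.mulVec (f v)) :
    ∃ c : ℂ, ∀ v, f v = c • v := by
  have hnt : Nontrivial (Fin n → ℂ) := by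
    have : Nonempty (Fin n) := ⟨⟨0, hn⟩⟩
    infer_instance
  obtain ⟨μ, hμ⟩ := Module.End.exists_eigenvalue (f : Module.End ℂ (Fin n → ℂ))
  obtain ⟨x, hx⟩ := hμ.exists_hasEigenvector
  refine ⟨μ, ?_⟩
  have hinv : ∀ M ∈ 𝒜, ∀ v ∈ Module.End.eigenspace (f : Module.End ℂ (Fin n → ℂ)) μ,
      M.mulVec v ∈ Module.End.eigenspace (f : Module.End ℂ (Fin n → ℂ)) μ := by
    intro M hM v hv
    rw [Module.End.mem_eigenspace_iff] at hv ⊢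
    show f (M.mulVec v) = μ • M.mulVec v
    rw [hf M hM, hv]
    exact Matrix.mulVec_smul M μ v
  have hW : Module.End.eigenspace (f : Module.End ℂ (Fin n → ℂ)) μ = ⊤ := by
    rcases hirr _ hinv with h | h
    · exact absurd h hμ
    · exact h
  intro v
  have : v ∈ Module.End.eigenspace (f : Module.End ℂ (Fin n → ℂ)) μ := hW ▸ Submodule.mem_top
  exact Module.End.mem_eigenspace_iff.mp this

lemma density (hn : 1 ≤ n) (𝒜 : Subalgebra ℂ (Matrix (Fin n) (Fin n) ℂ))
    (hirr : ∀ W : Submodule ℂ (Fin n → ℂ),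
      (∀ M ∈ 𝒜, ∀ v ∈ W, M.mulVec v ∈ W) → W = ⊥ ∨ W = ⊤) :
    ∀ (k : ℕ) (v : Fin k → (Fin n → ℂ)), LinearIndependent ℂ v →
      ∀ w : Fin k → (Fin n → ℂ), ∃ M ∈ 𝒜, ∀ i, M.mulVec (v i) = w i := by
  intro k
  induction k with
  | zero => exact fun v _ w => ⟨0, zero_mem _, fun i => i.elim0⟩
  | succ k ih =>
    intro v hv w
    set v' : Fin k → (Fin n → ℂ) := fun i => v i.castSucc with hv'def
    have hv' : LinearIndependent ℂ v' := hv.comp _ (Fin.castSucc_injective k)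
    -- the left ideal of elements of 𝒜 killing all v' i
    set K : Submodule ℂ (Matrix (Fin n) (Fin n) ℂ) :=
      Subalgebra.toSubmodule 𝒜 ⊓ ⨅ i : Fin k, LinearMap.ker (phi (v' i)) with hKdef
    set J : Submodule ℂ (Fin n → ℂ) := K.map (phi (v (Fin.last k))) with hJdef
    have hJinv : ∀ M ∈ 𝒜, ∀ z ∈ J, M.mulVec z ∈ J := by
      rintro M hM z ⟨C, hC, rfl⟩
      simp only [SetLike.mem_coe] at hC
      rw [Submodule.mem_inf] at hC
      refine ⟨M * C, Submodule.mem_inf.mpr ⟨(Subalgebra.mem_toSubmodule 𝒜).mpr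
        (mul_mem hM ((Subalgebra.mem_toSubmodule 𝒜).mp hC.1)), ?_⟩, ?_⟩
      · rw [Submodule.mem_iInf]
        intro i
        have hCi := Submodule.mem_iInf _ |>.mp hC.2 i
        rw [LinearMap.mem_ker] at hCi ⊢
        simp only [phi_apply] at hCi ⊢
        rw [← Matrix.mulVec_mulVec, hCi, Matrix.mulVec_zero]
      · simp only [phi_apply]
        rw [← Matrix.mulVec_mulVec]
    rcases hirr J hJinv with hJ | hJ
    · -- J = ⊥ : derive contradiction with linear independence
      exfalso
      -- linear algebra setup
      set As := Subalgebra.toSubmodule 𝒜 with hAs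
      set Φ : As →ₗ[ℂ] (Fin k → (Fin n → ℂ)) :=
        (LinearMap.pi (fun i => phi (v' i))).comp As.subtype with hΦ
      set Ψ : As →ₗ[ℂ] (Fin n → ℂ) := (phi (v (Fin.last k))).comp As.subtype with hΨ
      have hΦsurj : LinearMap.range Φ = ⊤ := by
        rw [LinearMap.range_eq_top]
        intro x
        obtain ⟨M, hM, hMx⟩ := ih v' hv' x
        exact ⟨⟨M, hM⟩, funext fun i => hMx i⟩
      have hker : LinearMap.ker Φ ≤ LinearMap.ker Ψ := by
        intro M hM
        rw [LinearMap.mem_ker] at hM ⊢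
        have hMK : (M : Matrix (Fin n) (Fin n) ℂ) ∈ K := by
          refine Submodule.mem_inf.mpr ⟨M.2, ?_⟩
          rw [Submodule.mem_iInf]
          intro i
          rw [LinearMap.mem_ker]
          exact congrFun hM i
        have : phi (v (Fin.last k)) (M : Matrix (Fin n) (Fin n) ℂ) ∈ J :=
          ⟨M, hMK, rfl⟩
        rw [hJ, Submodule.mem_bot] at this
        exact this
      obtain ⟨σ, hσ⟩ := Φ.exists_rightInverse_of_surjective hΦsurj
      set g : (Fin k → (Fin n → ℂ)) →ₗ[ℂ] (Fin n → ℂ) := Ψ.comp σ with hg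
      have hgΦ : ∀ M : As, g (Φ M) = Ψ M := by
        intro M
        have h1 : Φ (σ (Φ M) - M) = 0 := by
          have : Φ (σ (Φ M)) = Φ M := congrFun (congrArg DFunLike.coe hσ) (Φ M)
          rw [map_sub, this, sub_self]
        have h2 : σ (Φ M) - M ∈ LinearMap.ker Ψ := hker (LinearMap.mem_ker.mpr h1)
        rw [LinearMap.mem_ker, map_sub, sub_eq_zero] at h2
        simpa [hg] using h2
      have hgequiv : ∀ N ∈ 𝒜, ∀ x : Fin k → (Fin n → ℂ),
          g (fun i => N.mulVec (x i)) = N.mulVec (g x) := by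
        intro N hN x
        have : ∃ M : As, Φ M = x := by
          have := hΦsurj
          rw [LinearMap.range_eq_top] at this
          exact this x
        obtain ⟨M, rfl⟩ := this
        have hNM : (N * (M : Matrix (Fin n) (Fin n) ℂ)) ∈ 𝒜 := mul_mem hN M.2
        have h1 : (fun i => N.mulVec (Φ M i)) = Φ ⟨N * M, hNM⟩ := by
          funext i
          simp only [hΦ, LinearMap.comp_apply, LinearMap.pi_apply, phi_apply,
            Submodule.subtype_apply]
          rw [← Matrix.mulVec_mulVec]
        rw [h1, hgΦ, hgΦ]
        simp only [hΨ, LinearMap.comp_apply, phi_apply, Submodule.subtype_apply]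
        rw [← Matrix.mulVec_mulVec]
      -- components of g are scalars by Schur
      have hscal : ∀ i : Fin k, ∃ c : ℂ, ∀ u, g (Pi.single i u) = c • u := by
        intro i
        have key : ∀ N ∈ 𝒜, ∀ u,
            (g.comp (LinearMap.single ℂ (fun _ : Fin k => Fin n → ℂ) i)) (N.mulVec u)
              = N.mulVec ((g.comp (LinearMap.single ℂ (fun _ : Fin k => Fin n → ℂ) i)) u) := by
          intro N hN u
          simp only [LinearMap.comp_apply, LinearMap.single_apply]
          have h1 : (Pi.single i (N.mulVec u) : Fin k → (Fin n → ℂ))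
              = fun j => N.mulVec (Pi.single (M := fun _ : Fin k => Fin n → ℂ) i u j) := by
            funext j
            by_cases h : j = i
            · subst h; simp
            · simp [Pi.single_eq_of_ne h]
          rw [h1, hgequiv N hN]
        obtain ⟨c, hc⟩ := schur hn 𝒜 hirr _ key
        exact ⟨c, fun u => by simpa using hc u⟩
      choose c hc using hscal
      -- v last = Σ c i • v' i
      have h1A : (1 : Matrix (Fin n) (Fin n) ℂ) ∈ 𝒜 := one_mem 𝒜
      have hlast : v (Fin.last k) = ∑ i, c i • v' i := by
        have e1 : Ψ ⟨1, h1A⟩ = v (Fin.last k) := by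
          simp [hΨ, Matrix.one_mulVec]
        have e2 : Φ ⟨1, h1A⟩ = v' := by
          funext i; simp [hΦ, Matrix.one_mulVec]
        have := hgΦ ⟨1, h1A⟩
        rw [e1, e2] at this
        have e3 : v' = ∑ i, Pi.single i (v' i) := by
          rw [Finset.univ_sum_single]
        have e4 : g v' = ∑ i, c i • v' i := by
          conv_lhs => rw [e3]
          rw [map_sum]
          exact Finset.sum_congr rfl (fun i _ => hc i (v' i))
        rw [← this, e4]
      -- contradiction with linear independence
      have hnotmem : v (Fin.last k) ∉ Submodule.span ℂ (v '' Set.range Fin.castSucc) := by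
        apply hv.notMem_span_image
        rintro ⟨i, hi⟩
        have := congrArg Fin.val hi
        simp [Fin.last] at this
        omega
      apply hnotmem
      rw [hlast]
      apply Submodule.sum_mem
      intro i _
      exact Submodule.smul_mem _ _
        (Submodule.subset_span (Set.mem_image_of_mem v ⟨i, rfl⟩))
    · -- J = ⊤ : extend
      obtain ⟨M₀, hM₀, hM₀w⟩ := ih v' hv' (fun i => w i.castSucc)
      have : w (Fin.last k) - M₀.mulVec (v (Fin.last k)) ∈ J := hJ ▸ Submodule.mem_top
      obtain ⟨C, hC, hCval⟩ := this
      simp only [SetLike.mem_coe] at hC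
      rw [Submodule.mem_inf] at hC
      refine ⟨M₀ + C, add_mem hM₀ ((Subalgebra.mem_toSubmodule 𝒜).mp hC.1), fun i => ?_⟩
      rcases Fin.eq_castSucc_or_eq_last i with ⟨j, rfl⟩ | rfl
      · have hCj : C.mulVec (v j.castSucc) = 0 := by
          have := hC.2
          rw [Submodule.mem_iInf] at this
          have := this j
          rw [LinearMap.mem_ker] at this
          exact this
        rw [Matrix.add_mulVec, hCj, add_zero]
        exact hM₀w j
      · rw [Matrix.add_mulVec]
        simp only [phi_apply] at hCval
        rw [hCval]
        abel

lemma burnside (hn : 1 ≤ n) (𝒜 : Subalgebra ℂ (Matrix (Fin n) (Fin n) ℂ))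
    (hirr : ∀ W : Submodule ℂ (Fin n → ℂ),
      (∀ M ∈ 𝒜, ∀ v ∈ W, M.mulVec v ∈ W) → W = ⊥ ∨ W = ⊤) :
    𝒜 = ⊤ := by
  rw [eq_top_iff]
  intro X _
  have hb : LinearIndependent ℂ (fun i : Fin n => (Pi.single i 1 : Fin n → ℂ)) := by
    have h1 : (fun i : Fin n => (Pi.single i 1 : Fin n → ℂ)) = ⇑(Pi.basisFun ℂ (Fin n)) := by
      funext i
      ext j
      simp [Pi.basisFun_apply]
    rw [h1]
    exact (Pi.basisFun ℂ (Fin n)).linearIndependent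
  obtain ⟨M, hM, h⟩ := density hn 𝒜 hirr n _ hb (fun i => X.mulVec (Pi.single i 1))
  have : M = X := by
    ext p q
    have := congrFun (h q) p
    simpa [Matrix.mulVec_single] using this
  exact this ▸ hM




lemma fin_split {m₁ m₂ : ℕ} (i : Fin (m₁ + m₂)) :
    (∃ j, i = Fin.castAdd m₂ j) ∨ (∃ j, i = Fin.natAdd m₁ j) := by
  rcases lt_or_ge i.val m₁ with h | h
  · exact Or.inl ⟨⟨i.val, h⟩, Fin.ext rfl⟩
  · exact Or.inr ⟨⟨i.val - m₁, by have := i.isLt; omega⟩,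
      Fin.ext (by simp [Fin.natAdd]; omega)⟩

lemma glue {m₁ m₂ k l n : ℕ} (d₁ : Fin m₁ → ℕ) (d₂ : Fin m₂ → ℕ)
    (e₁ : (Σ i, Fin (d₁ i)) ≃ Fin k) (e₂ : (Σ i, Fin (d₂ i)) ≃ Fin l)
    (τ : Fin k ⊕ Fin l ≃ Fin n) :
    ∃ (d : Fin (m₁ + m₂) → ℕ) (h₁ : ∀ i, d (Fin.castAdd m₂ i) = d₁ i)
      (h₂ : ∀ i, d (Fin.natAdd m₁ i) = d₂ i)
      (e : (Σ i, Fin (d i)) ≃ Fin n),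
      (∀ i a, e ⟨Fin.castAdd m₂ i, a⟩ = τ (Sum.inl (e₁ ⟨i, Fin.cast (h₁ i) a⟩))) ∧
      (∀ i a, e ⟨Fin.natAdd m₁ i, a⟩ = τ (Sum.inr (e₂ ⟨i, Fin.cast (h₂ i) a⟩))) := by
  refine ⟨Fin.append d₁ d₂, Fin.append_left d₁ d₂, Fin.append_right d₁ d₂, ?_⟩
  set d := Fin.append d₁ d₂ with hd
  set F : (Σ i : Fin (m₁ + m₂), Fin (d i)) → Fin n := fun x =>
    Fin.addCases (motive := fun i => Fin (d i) → Fin n)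
      (fun i a => τ (Sum.inl (e₁ ⟨i, Fin.cast (Fin.append_left d₁ d₂ i) a⟩)))
      (fun i a => τ (Sum.inr (e₂ ⟨i, Fin.cast (Fin.append_right d₁ d₂ i) a⟩))) x.1 x.2
    with hFdef
  have hF₁ : ∀ i a, F ⟨Fin.castAdd m₂ i, a⟩
      = τ (Sum.inl (e₁ ⟨i, Fin.cast (Fin.append_left d₁ d₂ i) a⟩)) := by
    intro i a
    simp only [hFdef, Fin.addCases_left]
  have hF₂ : ∀ i a, F ⟨Fin.natAdd m₁ i, a⟩
      = τ (Sum.inr (e₂ ⟨i, Fin.cast (Fin.append_right d₁ d₂ i) a⟩)) := by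
    intro i a
    simp only [hFdef, Fin.addCases_right]
  have hinj : Function.Injective F := by
    rintro ⟨i, a⟩ ⟨j, b⟩ hab
    rcases fin_split i with ⟨i', rfl⟩ | ⟨i', rfl⟩ <;>
      rcases fin_split j with ⟨j', rfl⟩ | ⟨j', rfl⟩
    · rw [hF₁, hF₁] at hab
      have h1 := e₁.injective (Sum.inl_injective (τ.injective hab))
      obtain ⟨h2, h3⟩ := Sigma.ext_iff.mp h1
      simp only at h2 h3
      subst h2
      have h3' := eq_of_heq h3
      have h5 := congrArg Fin.val h3'
      have h4 : a = b := Fin.ext h5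
      rw [h4]
    · rw [hF₁, hF₂] at hab
      exact absurd (τ.injective hab) (by simp)
    · rw [hF₂, hF₁] at hab
      exact absurd (τ.injective hab) (by simp)
    · rw [hF₂, hF₂] at hab
      have h1 := e₂.injective (Sum.inr_injective (τ.injective hab))
      obtain ⟨h2, h3⟩ := Sigma.ext_iff.mp h1
      simp only at h2 h3
      subst h2
      have h3' := eq_of_heq h3
      have h5 := congrArg Fin.val h3'
      have h4 : a = b := Fin.ext h5
      rw [h4]
  have hsurj : Function.Surjective F := by
    intro p
    rcases hsq : τ.symm p with q | q
    · obtain ⟨⟨i, a⟩, ha⟩ := e₁.surjective q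
      refine ⟨⟨Fin.castAdd m₂ i, Fin.cast (Fin.append_left d₁ d₂ i).symm a⟩, ?_⟩
      rw [hF₁]
      have h5 : Fin.cast (Fin.append_left d₁ d₂ i)
          (Fin.cast (Fin.append_left d₁ d₂ i).symm a) = a := Fin.ext rfl
      rw [h5, ha, ← hsq, Equiv.apply_symm_apply]
    · obtain ⟨⟨i, a⟩, ha⟩ := e₂.surjective q
      refine ⟨⟨Fin.natAdd m₁ i, Fin.cast (Fin.append_right d₁ d₂ i).symm a⟩, ?_⟩
      rw [hF₂]
      have h5 : Fin.cast (Fin.append_right d₁ d₂ i)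
          (Fin.cast (Fin.append_right d₁ d₂ i).symm a) = a := Fin.ext rfl
      rw [h5, ha, ← hsq, Equiv.apply_symm_apply]
  exact ⟨Equiv.ofBijective F ⟨hinj, hsurj⟩, hF₁, hF₂⟩






lemma split_data {n : ℕ} (𝒜 : Subalgebra ℂ (Matrix (Fin n) (Fin n) ℂ))
    (W : Submodule ℂ (Fin n → ℂ)) (hWbot : W ≠ ⊥) (hWtop : W ≠ ⊤)
    (hWinv : ∀ M ∈ 𝒜, ∀ v ∈ W, M.mulVec v ∈ W) :
    ∃ (k l : ℕ) (_ : k + l = n) (τ : Fin k ⊕ Fin l ≃ Fin n)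
      (U : Matrix (Fin n) (Fin n) ℂ),
      1 ≤ k ∧ 1 ≤ l ∧ U ∈ Matrix.unitaryGroup (Fin n) ℂ ∧
      ∀ M ∈ 𝒜, ∀ (a : Fin l) (b : Fin k),
        (star U * M * U) (τ (Sum.inr a)) (τ (Sum.inl b)) = 0 := by
  set E := EuclideanSpace ℂ (Fin n) with hE
  set ι : E ≃ₗ[ℂ] (Fin n → ℂ) := WithLp.linearEquiv 2 ℂ (Fin n → ℂ) with hι
  set W' : Submodule ℂ E := W.comap (ι : E →ₗ[ℂ] (Fin n → ℂ)) with hW'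
  have hmem : ∀ x : E, x ∈ W' ↔ ι x ∈ W := fun x => Submodule.mem_comap
  have hW'bot : W' ≠ ⊥ := by
    intro h
    apply hWbot
    rw [eq_bot_iff]
    intro x hx
    have h1 : ι.symm x ∈ W' := by
      rw [hmem, LinearEquiv.apply_symm_apply]
      exact hx
    rw [h, Submodule.mem_bot] at h1
    have : x = ι (ι.symm x) := (LinearEquiv.apply_symm_apply ι x).symm
    rw [this, h1, map_zero]
    exact Submodule.zero_mem _
  have hW'top : W' ≠ ⊤ := by
    intro h
    apply hWtop
    rw [eq_top_iff]
    intro x _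
    have h1 : ι.symm x ∈ W' := h ▸ Submodule.mem_top
    rw [hmem, LinearEquiv.apply_symm_apply] at h1
    exact h1
  have hkl : finrank ℂ W' + finrank ℂ W'ᗮ = n := by
    have h1 := Submodule.finrank_add_finrank_orthogonal W'
    rwa [finrank_euclideanSpace_fin] at h1
  have hk : 1 ≤ finrank ℂ W' := by
    rw [Nat.one_le_iff_ne_zero]
    intro h
    exact hW'bot (Submodule.finrank_eq_zero.mp h)
  have hl : 1 ≤ finrank ℂ W'ᗮ := by
    rw [Nat.one_le_iff_ne_zero]
    intro h
    exact hW'top (Submodule.orthogonal_eq_bot_iff.mp (Submodule.finrank_eq_zero.mp h))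
  set k := finrank ℂ W'
  set l := finrank ℂ W'ᗮ
  set b₁ : OrthonormalBasis (Fin k) ℂ W' := stdOrthonormalBasis ℂ W' with hb₁
  set b₂ : OrthonormalBasis (Fin l) ℂ W'ᗮ := stdOrthonormalBasis ℂ W'ᗮ with hb₂
  set u : Fin k ⊕ Fin l → E :=
    Sum.elim (fun i => (b₁ i : E)) (fun j => (b₂ j : E)) with hu
  have humem₁ : ∀ i, u (Sum.inl i) ∈ W' := fun i => SetLike.coe_mem _
  have humem₂ : ∀ j, u (Sum.inr j) ∈ W'ᗮ := fun j => SetLike.coe_mem _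
  have hon : Orthonormal ℂ u := by
    rw [orthonormal_iff_ite]
    rintro (i | i) (j | j)
    · have h1 := orthonormal_iff_ite.mp b₁.orthonormal i j
      rw [Submodule.coe_inner] at h1
      simpa [hu] using h1
    · rw [Submodule.inner_right_of_mem_orthogonal (humem₁ i) (humem₂ j)]
      simp
    · rw [Submodule.inner_left_of_mem_orthogonal (humem₁ j) (humem₂ i)]
      simp
    · have h1 := orthonormal_iff_ite.mp b₂.orthonormal i j
      rw [Submodule.coe_inner] at h1
      simpa [hu] using h1
  set τ : Fin k ⊕ Fin l ≃ Fin n := finSumFinEquiv.trans (finCongr hkl) with hτ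
  set U : Matrix (Fin n) (Fin n) ℂ := fun p q => ι (u (τ.symm q)) p with hU
  have hinner : ∀ x y : E, (inner ℂ x y : ℂ) = ∑ p, (starRingEnd ℂ) (ι x p) * ι y p := by
    intro x y
    rw [PiLp.inner_apply]
    simp only [RCLike.inner_apply]
    exact Finset.sum_congr rfl fun p _ => mul_comm _ _
  have hUG : U ∈ Matrix.unitaryGroup (Fin n) ℂ := by
    rw [Matrix.mem_unitaryGroup_iff']
    ext q q'
    rw [Matrix.mul_apply]
    simp only [Matrix.star_apply]
    simp only [hU]
    have h1 : ∑ p, star (ι (u (τ.symm q)) p) * ι (u (τ.symm q')) p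
        = (inner ℂ (u (τ.symm q)) (u (τ.symm q')) : ℂ) := by
      rw [hinner]
      simp only [starRingEnd_apply]
    rw [h1, orthonormal_iff_ite.mp hon, Matrix.one_apply]
    by_cases h : q = q'
    · subst h
      rw [if_pos rfl, if_pos rfl]
    · rw [if_neg (fun hc => h (τ.symm.injective hc)), if_neg h]
  have hconj : ∀ (M : Matrix (Fin n) (Fin n) ℂ) (p q : Fin n),
      (star U * M * U) p q
        = (inner ℂ (u (τ.symm p)) (ι.symm (M.mulVec (ι (u (τ.symm q))))) : ℂ) := by
    intro M p q
    rw [hinner]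
    simp only [LinearEquiv.apply_symm_apply]
    simp only [Matrix.mul_apply, Matrix.star_apply, Matrix.mulVec, dotProduct,
      Finset.sum_mul, Finset.mul_sum]
    simp only [hU]
    rw [Finset.sum_comm]
    refine Finset.sum_congr rfl fun a _ => Finset.sum_congr rfl fun b _ => ?_
    rw [starRingEnd_apply]
    ring
  refine ⟨k, l, hkl, τ, U, hk, hl, hUG, ?_⟩
  intro M hM a b
  rw [hconj]
  simp only [Equiv.symm_apply_apply]
  have hz : ι.symm (M.mulVec (ι (u (Sum.inl b)))) ∈ W' := by
    rw [hmem, LinearEquiv.apply_symm_apply]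
    exact hWinv M hM _ ((hmem _).mp (humem₁ b))
  exact Submodule.inner_left_of_mem_orthogonal hz (humem₂ a)






variable {k l n : ℕ}

lemma block_one (f : Fin k → Fin n) (hf : Function.Injective f) :
    (Matrix.of fun a b => (1 : Matrix (Fin n) (Fin n) ℂ) (f a) (f b))
      = (1 : Matrix (Fin k) (Fin k) ℂ) := by
  ext a b
  simp only [Matrix.of_apply, Matrix.one_apply]
  by_cases h : a = b
  · subst h; simp
  · rw [if_neg (fun hc => h (hf hc)), if_neg h]

lemma block11_mul (τ : Fin k ⊕ Fin l ≃ Fin n) (A B : Matrix (Fin n) (Fin n) ℂ)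
    (hB : ∀ a b, B (τ (Sum.inr a)) (τ (Sum.inl b)) = 0) :
    (Matrix.of fun a b => (A * B) (τ (Sum.inl a)) (τ (Sum.inl b)))
      = (Matrix.of fun a b => A (τ (Sum.inl a)) (τ (Sum.inl b)))
        * (Matrix.of fun a b => B (τ (Sum.inl a)) (τ (Sum.inl b))) := by
  ext a b
  simp only [Matrix.of_apply, Matrix.mul_apply]
  rw [← Fintype.sum_equiv τ (fun s => A (τ (Sum.inl a)) (τ s) * B (τ s) (τ (Sum.inl b)))
    (fun p => A (τ (Sum.inl a)) p * B p (τ (Sum.inl b))) (fun s => rfl)]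
  rw [Fintype.sum_sum_type]
  simp [hB]

lemma block22_mul (τ : Fin k ⊕ Fin l ≃ Fin n) (A B : Matrix (Fin n) (Fin n) ℂ)
    (hA : ∀ a b, A (τ (Sum.inr a)) (τ (Sum.inl b)) = 0) :
    (Matrix.of fun a b => (A * B) (τ (Sum.inr a)) (τ (Sum.inr b)))
      = (Matrix.of fun a b => A (τ (Sum.inr a)) (τ (Sum.inr b)))
        * (Matrix.of fun a b => B (τ (Sum.inr a)) (τ (Sum.inr b))) := by
  ext a b
  simp only [Matrix.of_apply, Matrix.mul_apply]
  rw [← Fintype.sum_equiv τ (fun s => A (τ (Sum.inr a)) (τ s) * B (τ s) (τ (Sum.inr b)))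
    (fun p => A (τ (Sum.inr a)) p * B p (τ (Sum.inr b))) (fun s => rfl)]
  rw [Fintype.sum_sum_type]
  simp [hA]

lemma star_submatrix_equiv (X : Matrix (Fin k ⊕ Fin l) (Fin k ⊕ Fin l) ℂ)
    (τ : Fin k ⊕ Fin l ≃ Fin n) :
    star (X.submatrix ⇑τ.symm ⇑τ.symm) = (star X).submatrix ⇑τ.symm ⇑τ.symm := by
  rw [Matrix.star_eq_conjTranspose, Matrix.star_eq_conjTranspose,
    Matrix.conjTranspose_submatrix]

lemma fromBlocks_submatrix_unitary (τ : Fin k ⊕ Fin l ≃ Fin n)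
    (U₁ : Matrix (Fin k) (Fin k) ℂ) (U₂ : Matrix (Fin l) (Fin l) ℂ)
    (h₁ : U₁ ∈ Matrix.unitaryGroup (Fin k) ℂ) (h₂ : U₂ ∈ Matrix.unitaryGroup (Fin l) ℂ) :
    (Matrix.fromBlocks U₁ 0 0 U₂).submatrix ⇑τ.symm ⇑τ.symm
      ∈ Matrix.unitaryGroup (Fin n) ℂ := by
  rw [Matrix.mem_unitaryGroup_iff']
  rw [star_submatrix_equiv]
  rw [Matrix.submatrix_mul_equiv _ _ _ τ.symm _]
  have hs : star (Matrix.fromBlocks U₁ 0 0 U₂)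
      = Matrix.fromBlocks (star U₁) 0 0 (star U₂) := by
    rw [Matrix.star_eq_conjTranspose, Matrix.fromBlocks_conjTranspose]
    simp [Matrix.star_eq_conjTranspose]
  rw [hs, Matrix.fromBlocks_multiply]
  simp only [Matrix.zero_mul, Matrix.mul_zero, add_zero, zero_add,
    Matrix.mem_unitaryGroup_iff'.mp h₁, Matrix.mem_unitaryGroup_iff'.mp h₂]
  rw [Matrix.fromBlocks_one, Matrix.submatrix_one_equiv]

lemma conj_block (τ : Fin k ⊕ Fin l ≃ Fin n)
    (U₁ : Matrix (Fin k) (Fin k) ℂ) (U₂ : Matrix (Fin l) (Fin l) ℂ)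
    (Y : Matrix (Fin n) (Fin n) ℂ)
    (hY : ∀ a b, Y (τ (Sum.inr a)) (τ (Sum.inl b)) = 0) :
    star ((Matrix.fromBlocks U₁ 0 0 U₂).submatrix ⇑τ.symm ⇑τ.symm) * Y *
      (Matrix.fromBlocks U₁ 0 0 U₂).submatrix ⇑τ.symm ⇑τ.symm
    = (Matrix.fromBlocks
        (star U₁ * (Matrix.of fun a b => Y (τ (Sum.inl a)) (τ (Sum.inl b))) * U₁)
        (star U₁ * (Matrix.of fun a b => Y (τ (Sum.inl a)) (τ (Sum.inr b))) * U₂)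
        0
        (star U₂ * (Matrix.of fun a b => Y (τ (Sum.inr a)) (τ (Sum.inr b))) * U₂)).submatrix
          ⇑τ.symm ⇑τ.symm := by
  have hYdec : Y = (Matrix.fromBlocks
      (Matrix.of fun a b => Y (τ (Sum.inl a)) (τ (Sum.inl b)))
      (Matrix.of fun a b => Y (τ (Sum.inl a)) (τ (Sum.inr b)))
      0
      (Matrix.of fun a b => Y (τ (Sum.inr a)) (τ (Sum.inr b)))).submatrix ⇑τ.symm ⇑τ.symm := by
    ext p q
    rw [Matrix.submatrix_apply]
    rcases hsp : τ.symm p with s | s <;> rcases hsq : τ.symm q with t | t <;>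
      have hp : p = τ (τ.symm p) := (Equiv.apply_symm_apply τ p).symm <;>
      have hq : q = τ (τ.symm q) := (Equiv.apply_symm_apply τ q).symm <;>
      rw [hsp] at hp <;> rw [hsq] at hq
    · rw [Matrix.fromBlocks_apply₁₁, hp, hq]; rfl
    · rw [Matrix.fromBlocks_apply₁₂, hp, hq]; rfl
    · rw [Matrix.fromBlocks_apply₂₁, hp, hq, hY s t]; rfl
    · rw [Matrix.fromBlocks_apply₂₂, hp, hq]; rfl
  conv_lhs => rw [hYdec]
  rw [star_submatrix_equiv]
  rw [Matrix.submatrix_mul_equiv _ _ _ τ.symm _, Matrix.submatrix_mul_equiv _ _ _ τ.symm _]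
  congr 1
  have hs : star (Matrix.fromBlocks U₁ 0 0 U₂)
      = Matrix.fromBlocks (star U₁) 0 0 (star U₂) := by
    rw [Matrix.star_eq_conjTranspose, Matrix.fromBlocks_conjTranspose]
    simp [Matrix.star_eq_conjTranspose]
  rw [hs, Matrix.fromBlocks_multiply, Matrix.fromBlocks_multiply]
  simp [Matrix.mul_assoc]






def Goal (n : ℕ) (𝒜 : Subalgebra ℂ (Matrix (Fin n) (Fin n) ℂ)) : Prop :=
  ∃ (m : ℕ) (_ : 1 ≤ m) (d : Fin m → ℕ) (_ : ∀ i, 1 ≤ d i) (_ : ∑ i, d i = n)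
    (e : (Σ i : Fin m, Fin (d i)) ≃ Fin n)
    (U : Matrix (Fin n) (Fin n) ℂ), U ∈ Matrix.unitaryGroup (Fin n) ℂ ∧
    (∀ M ∈ 𝒜, ∀ i j : Fin m, j < i →
      ∀ (a : Fin (d i)) (b : Fin (d j)),
        (star U * M * U) (e ⟨i, a⟩) (e ⟨j, b⟩) = 0) ∧
    (∀ i : Fin m, ∀ N : Matrix (Fin (d i)) (Fin (d i)) ℂ,
      ∃ M ∈ 𝒜, ∀ (a b : Fin (d i)),
        (star U * M * U) (e ⟨i, a⟩) (e ⟨i, b⟩) = N a b)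

def oneBlockEquiv (n : ℕ) : (Σ _ : Fin 1, Fin n) ≃ Fin n where
  toFun x := x.2
  invFun p := ⟨0, p⟩
  left_inv := by
    rintro ⟨i, a⟩
    obtain rfl : i = 0 := Subsingleton.elim i 0
    rfl
  right_inv p := rfl

lemma goal_of_top {n : ℕ} (hn : 1 ≤ n) (𝒜 : Subalgebra ℂ (Matrix (Fin n) (Fin n) ℂ))
    (htop : 𝒜 = ⊤) : Goal n 𝒜 := by
  subst htop
  refine ⟨1, le_refl 1, fun _ => n, fun _ => hn, by simp, oneBlockEquiv n, 1, ?_, ?_, ?_⟩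
  · rw [Matrix.mem_unitaryGroup_iff]
    simp
  · intro M hM i j hij a b
    exfalso
    obtain rfl : j = i := Subsingleton.elim j i
    exact lt_irrefl _ hij
  · intro i N
    refine ⟨Matrix.of fun p q =>
      N (((oneBlockEquiv n).symm p).2) (((oneBlockEquiv n).symm q).2),
      Algebra.mem_top, ?_⟩
    intro a b
    have h1 : star (1 : Matrix (Fin n) (Fin n) ℂ) = 1 := star_one _
    rw [h1, Matrix.one_mul, Matrix.mul_one]
    show N (((oneBlockEquiv n).symm ((oneBlockEquiv n) ⟨i, a⟩)).2)
      (((oneBlockEquiv n).symm ((oneBlockEquiv n) ⟨i, b⟩)).2) = N a b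
    rw [Equiv.symm_apply_apply, Equiv.symm_apply_apply]

lemma main_goal : ∀ n : ℕ, ∀ 𝒜 : Subalgebra ℂ (Matrix (Fin n) (Fin n) ℂ),
    1 ≤ n → Goal n 𝒜 := by
  intro n
  induction n using Nat.strong_induction_on with
  | _ n IH =>
    intro 𝒜 hn
    by_cases hred : ∃ W : Submodule ℂ (Fin n → ℂ),
        (∀ M ∈ 𝒜, ∀ v ∈ W, M.mulVec v ∈ W) ∧ W ≠ ⊥ ∧ W ≠ ⊤
    · obtain ⟨W, hWinv, hWbot, hWtop⟩ := hred
      obtain ⟨k, l, hkl, τ, U, hk, hl, hUG, hlow⟩ := split_data 𝒜 W hWbot hWtop hWinv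
      have hU2 : U * star U = 1 := Matrix.mem_unitaryGroup_iff.mp hUG
      have hconjmul : ∀ X Y : Matrix (Fin n) (Fin n) ℂ,
          star U * (X * Y) * U = (star U * X * U) * (star U * Y * U) := by
        intro X Y
        calc star U * (X * Y) * U = star U * X * ((U * star U) * (Y * U)) := by
              rw [hU2, Matrix.one_mul]
              simp only [Matrix.mul_assoc]
          _ = (star U * X * U) * (star U * Y * U) := by
              simp only [Matrix.mul_assoc]
      -- the two corner algebra homs
      have hτinj₁ : Function.Injective (fun a : Fin k => τ (Sum.inl a)) :=
        fun a b h => Sum.inl_injective (τ.injective h)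
      have hτinj₂ : Function.Injective (fun a : Fin l => τ (Sum.inr a)) :=
        fun a b h => Sum.inr_injective (τ.injective h)
      set L₁ : ↥𝒜 →ₗ[ℂ] Matrix (Fin k) (Fin k) ℂ :=
        { toFun := fun M => Matrix.of fun a b =>
            (star U * (M : Matrix (Fin n) (Fin n) ℂ) * U) (τ (Sum.inl a)) (τ (Sum.inl b))
          map_add' := fun X Y => by
            ext a b
            simp [Matrix.mul_add, Matrix.add_mul]
          map_smul' := fun c X => by
            ext a b
            simp [Matrix.mul_smul, Matrix.smul_mul] } with hL₁
      set L₂ : ↥𝒜 →ₗ[ℂ] Matrix (Fin l) (Fin l) ℂ :=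
        { toFun := fun M => Matrix.of fun a b =>
            (star U * (M : Matrix (Fin n) (Fin n) ℂ) * U) (τ (Sum.inr a)) (τ (Sum.inr b))
          map_add' := fun X Y => by
            ext a b
            simp [Matrix.mul_add, Matrix.add_mul]
          map_smul' := fun c X => by
            ext a b
            simp [Matrix.mul_smul, Matrix.smul_mul] } with hL₂
      have hL₁one : L₁ 1 = 1 := by
        have h0 : star U * ((1 : ↥𝒜) : Matrix (Fin n) (Fin n) ℂ) * U = 1 := by
          rw [OneMemClass.coe_one, Matrix.mul_one, Matrix.mem_unitaryGroup_iff'.mp hUG]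
        show (Matrix.of fun a b =>
          (star U * ((1 : ↥𝒜) : Matrix (Fin n) (Fin n) ℂ) * U) (τ (Sum.inl a)) (τ (Sum.inl b))) = 1
        rw [h0]
        exact block_one _ hτinj₁
      have hL₂one : L₂ 1 = 1 := by
        have h0 : star U * ((1 : ↥𝒜) : Matrix (Fin n) (Fin n) ℂ) * U = 1 := by
          rw [OneMemClass.coe_one, Matrix.mul_one, Matrix.mem_unitaryGroup_iff'.mp hUG]
        show (Matrix.of fun a b =>
          (star U * ((1 : ↥𝒜) : Matrix (Fin n) (Fin n) ℂ) * U) (τ (Sum.inr a)) (τ (Sum.inr b))) = 1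
        rw [h0]
        exact block_one _ hτinj₂
      have hL₁mul : ∀ X Y : ↥𝒜, L₁ (X * Y) = L₁ X * L₁ Y := by
        intro X Y
        show (Matrix.of fun a b =>
            (star U * ((X * Y : ↥𝒜) : Matrix (Fin n) (Fin n) ℂ) * U) (τ (Sum.inl a)) (τ (Sum.inl b)))
          = _
        rw [MulMemClass.coe_mul, hconjmul]
        exact block11_mul τ _ _ (hlow (Y : Matrix (Fin n) (Fin n) ℂ) Y.2)
      have hL₂mul : ∀ X Y : ↥𝒜, L₂ (X * Y) = L₂ X * L₂ Y := by
        intro X Y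
        show (Matrix.of fun a b =>
            (star U * ((X * Y : ↥𝒜) : Matrix (Fin n) (Fin n) ℂ) * U) (τ (Sum.inr a)) (τ (Sum.inr b)))
          = _
        rw [MulMemClass.coe_mul, hconjmul]
        exact block22_mul τ _ _ (hlow (X : Matrix (Fin n) (Fin n) ℂ) X.2)
      set F₁ : ↥𝒜 →ₐ[ℂ] Matrix (Fin k) (Fin k) ℂ := AlgHom.ofLinearMap L₁ hL₁one hL₁mul
        with hF₁
      set F₂ : ↥𝒜 →ₐ[ℂ] Matrix (Fin l) (Fin l) ℂ := AlgHom.ofLinearMap L₂ hL₂one hL₂mul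
        with hF₂
      obtain ⟨m₁, hm₁, d₁, hd₁, hsum₁, e₁, U₁, hU₁, htri₁, hsurj₁⟩ :=
        IH k (by omega) F₁.range hk
      obtain ⟨m₂, hm₂, d₂, hd₂, hsum₂, e₂, U₂, hU₂, htri₂, hsurj₂⟩ :=
        IH l (by omega) F₂.range hl
      obtain ⟨d, h₁, h₂, e, he₁, he₂⟩ := glue d₁ d₂ e₁ e₂ τ
      set B : Matrix (Fin n) (Fin n) ℂ :=
        (Matrix.fromBlocks U₁ 0 0 U₂).submatrix ⇑τ.symm ⇑τ.symm with hB
      have hBU : B ∈ Matrix.unitaryGroup (Fin n) ℂ :=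
        fromBlocks_submatrix_unitary τ U₁ U₂ hU₁ hU₂
      have hcc : ∀ M : Matrix (Fin n) (Fin n) ℂ,
          star (U * B) * M * (U * B) = star B * (star U * M * U) * B := by
        intro M
        rw [StarMul.star_mul]
        simp only [Matrix.mul_assoc]
      have key : ∀ M : Matrix (Fin n) (Fin n) ℂ, M ∈ 𝒜 →
          ∀ s t, (star (U * B) * M * (U * B)) (τ s) (τ t)
            = (Matrix.fromBlocks
                (star U₁ * (Matrix.of fun a b =>
                  (star U * M * U) (τ (Sum.inl a)) (τ (Sum.inl b))) * U₁)
                (star U₁ * (Matrix.of fun a b =>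
                  (star U * M * U) (τ (Sum.inl a)) (τ (Sum.inr b))) * U₂)
                0
                (star U₂ * (Matrix.of fun a b =>
                  (star U * M * U) (τ (Sum.inr a)) (τ (Sum.inr b))) * U₂)) s t := by
        intro M hM s t
        rw [hcc, hB, conj_block τ U₁ U₂ _ (hlow M hM)]
        rw [Matrix.submatrix_apply, Equiv.symm_apply_apply, Equiv.symm_apply_apply]
      refine ⟨m₁ + m₂, by omega, d, ?_, ?_, e, U * B, mul_mem hUG hBU, ?_, ?_⟩
      · intro i
        rcases fin_split i with ⟨i', rfl⟩ | ⟨i', rfl⟩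
        · rw [h₁]; exact hd₁ i'
        · rw [h₂]; exact hd₂ i'
      · rw [Fin.sum_univ_add]
        have e1 : ∀ i, d (Fin.castAdd m₂ i) = d₁ i := h₁
        have e2 : ∀ i, d (Fin.natAdd m₁ i) = d₂ i := h₂
        rw [Finset.sum_congr rfl (fun i _ => e1 i), Finset.sum_congr rfl (fun i _ => e2 i),
          hsum₁, hsum₂, hkl]
      · -- upper triangular
        intro M hM i j hij a b
        rcases fin_split i with ⟨i', rfl⟩ | ⟨i', rfl⟩ <;>
          rcases fin_split j with ⟨j', rfl⟩ | ⟨j', rfl⟩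
        · have hij' : j' < i' := hij
          rw [he₁, he₁, key M hM]
          rw [Matrix.fromBlocks_apply₁₁]
          exact htri₁ _ ⟨⟨M, hM⟩, rfl⟩ i' j' hij' _ _
        · exfalso
          have h3 := i'.isLt
          simp only [Fin.lt_def, Fin.coe_castAdd, Fin.coe_natAdd] at hij
          omega
        · rw [he₂, he₁, key M hM]
          rw [Matrix.fromBlocks_apply₂₁]
          simp
        · have hij' : j' < i' := by
            have h7 : m₁ + (j' : ℕ) < m₁ + (i' : ℕ) := hij
            exact Nat.lt_of_add_lt_add_left h7
          rw [he₂, he₂, key M hM]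
          rw [Matrix.fromBlocks_apply₂₂]
          exact htri₂ _ ⟨⟨M, hM⟩, rfl⟩ i' j' hij' _ _
      · -- diagonal surjectivity
        intro i N
        rcases fin_split i with ⟨i', rfl⟩ | ⟨i', rfl⟩
        · obtain ⟨X, hX, hXN⟩ := hsurj₁ i' (Matrix.of fun a b =>
            N (Fin.cast (h₁ i').symm a) (Fin.cast (h₁ i').symm b))
          obtain ⟨⟨M, hM⟩, hFX⟩ := hX
          refine ⟨M, hM, ?_⟩
          intro a b
          rw [he₁, he₁, key M hM]
          rw [Matrix.fromBlocks_apply₁₁]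
          have h5 := hXN (Fin.cast (h₁ i') a) (Fin.cast (h₁ i') b)
          rw [← hFX] at h5
          have h6 : (Matrix.of fun a b =>
              N (Fin.cast (h₁ i').symm a) (Fin.cast (h₁ i').symm b))
              (Fin.cast (h₁ i') a) (Fin.cast (h₁ i') b) = N a b := by
            show N (Fin.cast (h₁ i').symm (Fin.cast (h₁ i') a)) _ = _
            congr 1 <;> exact Fin.ext rfl
          rw [h6] at h5
          exact h5
        · obtain ⟨X, hX, hXN⟩ := hsurj₂ i' (Matrix.of fun a b =>
            N (Fin.cast (h₂ i').symm a) (Fin.cast (h₂ i').symm b))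
          obtain ⟨⟨M, hM⟩, hFX⟩ := hX
          refine ⟨M, hM, ?_⟩
          intro a b
          rw [he₂, he₂, key M hM]
          rw [Matrix.fromBlocks_apply₂₂]
          have h5 := hXN (Fin.cast (h₂ i') a) (Fin.cast (h₂ i') b)
          rw [← hFX] at h5
          have h6 : (Matrix.of fun a b =>
              N (Fin.cast (h₂ i').symm a) (Fin.cast (h₂ i').symm b))
              (Fin.cast (h₂ i') a) (Fin.cast (h₂ i') b) = N a b := by
            show N (Fin.cast (h₂ i').symm (Fin.cast (h₂ i') a)) _ = _
            congr 1 <;> exact Fin.ext rfl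
          rw [h6] at h5
          exact h5
    · apply goal_of_top hn
      apply burnside hn
      intro W hWinv
      by_contra hc
      push_neg at hc
      exact hred ⟨W, hWinv, hc.1, hc.2⟩

end BurnsideAux

/-- **Burnside decomposition.** Every unital `ℂ`-subalgebra of `Matrix (Fin n) (Fin n) ℂ`
can be put, by a unitary change of basis, into block upper triangular form whose
diagonal blocks are full matrix algebras. -/
theorem subalgebra_block_upper_triangular_full_diagonal_blocks
    (n : ℕ) (hn : 1 ≤ n) (𝒜 : Subalgebra ℂ (Matrix (Fin n) (Fin n) ℂ)) :
    ∃ (m : ℕ) (_ : 1 ≤ m) (d : Fin m → ℕ) (_ : ∀ i, 1 ≤ d i) (_ : ∑ i, d i = n)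
      (e : (Σ i : Fin m, Fin (d i)) ≃ Fin n)
      (U : Matrix (Fin n) (Fin n) ℂ), U ∈ Matrix.unitaryGroup (Fin n) ℂ ∧
      (∀ M ∈ 𝒜, ∀ i j : Fin m, j < i →
        ∀ (a : Fin (d i)) (b : Fin (d j)),
          (star U * M * U) (e ⟨i, a⟩) (e ⟨j, b⟩) = 0) ∧
      (∀ i : Fin m, ∀ N : Matrix (Fin (d i)) (Fin (d i)) ℂ,
        ∃ M ∈ 𝒜, ∀ (a b : Fin (d i)),
          (star U * M * U) (e ⟨i, a⟩) (e ⟨i, b⟩) = N a b) := by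
  exact BurnsideAux.main_goal n 𝒜 hn
end

section
/- Let n ≥ 1 and let H, K : Matrix (Fin n × Fin 2) (Fin n × Fin 2) ℂ with Hᴴ = H. Assume: (1) K is the diagonal matrix with paired eigenvalues determined by an injective k : Fin n → ℝ; (2) the Burnside graph of the pair (H, K) (the relation E on Fin n × Fin 2 with E p q ↔ p ≠ q ∧ (H p q ≠ 0 ∨ K p q ≠ 0)) is strongly connected, i.e. ∀ p q, Relation.ReflTransGen E p q; (3) all top-row 2-blocks of H are invertible: for every j : Fin n, IsUnit (blk H 0 j); (4) there exist j, j' : Fin n with j ≠ j' such that the matrices (blk H 0 j) * (blk H 0 j)ᴴ and (blk H 0 j') * (blk H 0 j')ᴴ do not commute. Then Algebra.adjoin ℂ {H, K} = ⊤, i.e. H and K generate the full matrix algebra M_{2n}(ℂ). -/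
open Matrix

/-- The `(i, j)` 2-block of a `2n × 2n` matrix indexed by `Fin n × Fin 2`. -/
def blk {n : ℕ} (M : Matrix (Fin n × Fin 2) (Fin n × Fin 2) ℂ) (i j : Fin n) :
    Matrix (Fin 2) (Fin 2) ℂ :=
  Matrix.of fun a b => M (i, a) (j, b)

namespace EvenOrderAux

abbrev M2 := Matrix (Fin 2) (Fin 2) ℂ

/-- The big matrix supported on the `(i,j)` 2-block, with that block equal to `B`. -/
def emb {n : ℕ} (i j : Fin n) (B : M2) :
    Matrix (Fin n × Fin 2) (Fin n × Fin 2) ℂ :=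
  Matrix.of fun p q => if p.1 = i ∧ q.1 = j then B p.2 q.2 else 0

lemma emb_apply {n : ℕ} (i j : Fin n) (B : M2) (p q) :
    emb i j B p q = if p.1 = i ∧ q.1 = j then B p.2 q.2 else 0 := rfl

lemma emb_mul {n : ℕ} (i j l : Fin n) (B C : M2) :
    emb i j B * emb j l C = emb i l (B * C) := by
  ext p q
  simp only [Matrix.mul_apply, emb_apply, Fintype.sum_prod_type, ite_and]
  by_cases hp : p.1 = i <;> by_cases hq : q.1 = l <;>
    simp [hp, hq, Finset.sum_ite_eq, Matrix.mul_apply]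

lemma emb_add {n : ℕ} (i j : Fin n) (B C : M2) :
    emb i j (B + C) = emb i j B + emb i j C := by
  ext p q
  simp only [emb_apply, Matrix.add_apply]
  split <;> simp

lemma emb_smul {n : ℕ} (i j : Fin n) (c : ℂ) (B : M2) :
    emb i j (c • B) = c • emb i j B := by
  ext p q
  simp only [emb_apply, Matrix.smul_apply, smul_eq_mul]
  split <;> simp

lemma emb_zero {n : ℕ} (i j : Fin n) : emb i j (0 : M2) = 0 := by
  ext p q
  simp only [emb_apply, Matrix.zero_apply]
  split <;> rfl

lemma emb_conjTranspose {n : ℕ} (i j : Fin n) (B : M2) :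
    (emb i j B)ᴴ = emb j i Bᴴ := by
  ext p q
  simp only [Matrix.conjTranspose_apply, emb_apply, and_comm]
  split <;> simp

lemma emb_eq_diagonal {n : ℕ} (i : Fin n) :
    emb i i (1 : M2) =
      Matrix.diagonal (fun p : Fin n × Fin 2 => if p.1 = i then 1 else 0) := by
  ext ⟨p1, p2⟩ ⟨q1, q2⟩
  simp only [emb, Matrix.of_apply, Matrix.diagonal_apply, Matrix.one_apply, Prod.mk.injEq]
  by_cases h1 : p1 = i <;> by_cases h2 : q1 = i <;> by_cases h3 : p2 = q2 <;>
    subst_eqs <;> simp_all [eq_comm]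

lemma P_mul_mul_P {n : ℕ} (i j : Fin n)
    (M : Matrix (Fin n × Fin 2) (Fin n × Fin 2) ℂ) :
    emb i i 1 * M * emb j j 1 = emb i j (blk M i j) := by
  rw [emb_eq_diagonal, emb_eq_diagonal]
  ext ⟨p1, p2⟩ ⟨q1, q2⟩
  simp only [Matrix.diagonal_mul, Matrix.mul_diagonal, emb, blk, Matrix.of_apply]
  by_cases h1 : p1 = i <;> by_cases h2 : q1 = j <;> subst_eqs <;> simp_all

lemma P_mem {n : ℕ} (K : Matrix (Fin n × Fin 2) (Fin n × Fin 2) ℂ)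
    (k : Fin n → ℝ) (hk : Function.Injective k)
    (hK : ∀ p q : Fin n × Fin 2, K p q = if p = q then (k p.1 : ℂ) else 0)
    (i : Fin n) :
    emb i i (1 : M2) ∈ Algebra.adjoin ℂ ({K} : Set _) := by
  have hKd : K = Matrix.diagonal (fun p : Fin n × Fin 2 => (k p.1 : ℂ)) := by
    ext p q
    rw [hK, Matrix.diagonal_apply]
  set v : Fin n → ℂ := fun j => (k j : ℂ) with hv
  have hvinj : Function.Injective v := fun a b hab => hk (Complex.ofReal_injective hab)
  set L := Lagrange.basis Finset.univ v i with hL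
  have key : Polynomial.aeval K L = emb i i 1 := by
    rw [hKd, emb_eq_diagonal]
    have : Matrix.diagonal (fun p : Fin n × Fin 2 => (k p.1 : ℂ)) =
        Matrix.diagonalAlgHom (R := ℂ) (fun p : Fin n × Fin 2 => v p.1) := rfl
    rw [this, Polynomial.aeval_algHom_apply]
    have : (Polynomial.aeval (fun p : Fin n × Fin 2 => v p.1) L) =
        fun p : Fin n × Fin 2 => Polynomial.eval (v p.1) L := by
      funext p
      have h2 := Polynomial.aeval_algHom_apply (Pi.evalAlgHom ℂ (fun _ => ℂ) p)
        (fun p : Fin n × Fin 2 => v p.1) L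
      simpa using h2.symm
    rw [this]
    have hdiag : ∀ p : Fin n × Fin 2, Polynomial.eval (v p.1) L =
        if p.1 = i then 1 else 0 := by
      intro p
      by_cases h : p.1 = i
      · rw [h, if_pos rfl, hL, Lagrange.eval_basis_self hvinj.injOn (Finset.mem_univ i)]
      · rw [if_neg h, hL, Lagrange.eval_basis_of_ne (Ne.symm ?_) (Finset.mem_univ p.1)]
        · exact h
    simp only [Matrix.diagonalAlgHom_apply]
    rw [show (fun p : Fin n × Fin 2 => Polynomial.eval (v p.1) L) =
        (fun p : Fin n × Fin 2 => if p.1 = i then (1:ℂ) else 0) from funext hdiag]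
  rw [← key, Algebra.adjoin_singleton_eq_range_aeval]
  exact ⟨L, rfl⟩
lemma m2_gen (S : Subalgebra ℂ M2)
    (hstar : ∀ x ∈ S, xᴴ ∈ S)
    (A B : M2) (hA : A ∈ S) (hB : B ∈ S)
    (hAh : Aᴴ = A) (hBh : Bᴴ = B) (hcomm : A * B ≠ B * A) : S = ⊤ := by
  -- traceless hermitian part of A
  set τ : ℂ := (A 0 0 + A 1 1) / 2 with hτ
  have hd : ∀ i, star (A i i) = A i i := by
    intro i
    have := congrFun (congrFun hAh i) i
    simpa [Matrix.conjTranspose_apply] using this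
  have hτr : star τ = τ := by
    simp [hτ, Complex.star_def, map_div₀, map_add, ← Complex.star_def, hd]
  set X : M2 := A - τ • 1 with hX
  have hXS : X ∈ S := S.sub_mem hA (S.smul_mem S.one_mem τ)
  have hXh : Xᴴ = X := by
    rw [hX, conjTranspose_sub, hAh, conjTranspose_smul, conjTranspose_one, hτr]

  have hXB : X * B ≠ B * X := by
    intro h
    apply hcomm
    have : A = X + τ • 1 := by rw [hX]; abel
    rw [this]
    simp only [add_mul, mul_add, smul_mul_assoc, mul_smul_comm, one_mul, mul_one, h]
  have hXne : X ≠ 0 := by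
    intro h
    exact hXB (by rw [h, zero_mul, mul_zero])
  -- entries
  set a : ℂ := X 0 0 with ha
  set b : ℂ := X 0 1 with hb
  have har : star a = a := by
    have := congrFun (congrFun hXh 0) 0
    simpa [Matrix.conjTranspose_apply, ← ha] using this
  have h10 : X 1 0 = star b := by
    have := congrFun (congrFun hXh 1) 0
    simpa [Matrix.conjTranspose_apply, ← hb] using this.symm
  have h11 : X 1 1 = -a := by
    have : X 0 0 + X 1 1 = 0 := by
      simp [hX, Matrix.sub_apply, Matrix.smul_apply, Matrix.one_apply, hτ]
      ring
    linear_combination this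
  -- X² = t • 1
  set t : ℝ := (a.re) ^ 2 + Complex.normSq b with hts
  have hat : a = (a.re : ℂ) := (Complex.conj_eq_iff_re.mp har).symm
  have htc : (t : ℂ) = a ^ 2 + b * star b := by
    rw [Complex.star_def, Complex.mul_conj, hts]
    push_cast
    rw [← hat]
  have hX2 : X * X = (t : ℂ) • 1 := by
    ext p q
    fin_cases p <;> fin_cases q <;>
      simp [Matrix.mul_apply, Fin.sum_univ_two, Matrix.one_apply, h10, h11, htc, ← ha, ← hb] <;>
      ring
  have htpos : 0 < t := by
    rcases lt_or_eq_of_le (by rw [hts]; exact add_nonneg (sq_nonneg _) (Complex.normSq_nonneg _) : (0:ℝ) ≤ t) with h | h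
    · exact h
    exfalso
    apply hXne
    have ha0 : a = 0 := by
      have : a.re = 0 := by nlinarith [Complex.normSq_nonneg b, sq_nonneg a.re]
      rw [hat, this]; simp
    have hb0 : b = 0 := by
      have : Complex.normSq b = 0 := by nlinarith [Complex.normSq_nonneg b, sq_nonneg a.re]
      exact Complex.normSq_eq_zero.mp this
    ext p q
    fin_cases p <;> fin_cases q <;>
      simp [← ha, ← hb, h10, h11, ha0, hb0]
  set s : ℝ := Real.sqrt t with hss
  have hs : 0 < s := Real.sqrt_pos.mpr htpos
  have hs2 : (s : ℂ) ^ 2 = (t : ℂ) := by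
    norm_cast
    rw [hss, Real.sq_sqrt htpos.le]
  have hsne : (s : ℂ) ≠ 0 := by exact_mod_cast hs.ne'
  set Y : M2 := X + (s : ℂ) • 1 with hY
  have hYY : Y * Y = (2 * s : ℂ) • Y := by
    rw [hY]
    simp only [add_mul, mul_add, smul_mul_assoc, mul_smul_comm, one_mul, mul_one, hX2,
      smul_smul, smul_add]
    rw [← hs2]
    module
  set p : M2 := (2 * (s:ℂ))⁻¹ • Y with hp
  have hpS : p ∈ S := S.smul_mem (S.add_mem hXS (S.smul_mem S.one_mem _)) _
  have hpp : p * p = p := by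
    rw [hp, smul_mul_assoc, mul_smul_comm, hYY, smul_smul, smul_smul]
    congr 1
    field_simp
  have hph : pᴴ = p := by
    rw [hp, conjTranspose_smul, hY, conjTranspose_add, hXh, conjTranspose_smul,
      conjTranspose_one]
    simp [Complex.star_def, map_inv₀, _root_.map_mul, Complex.conj_ofReal]
  have htrX : X 0 0 + X 1 1 = 0 := by rw [h11]; ring
  have htrp : p 0 0 + p 1 1 = 1 := by
    have e : p 0 0 + p 1 1 = (2*(s:ℂ))⁻¹ * (X 0 0 + X 1 1 + 2*s) := by
      simp [hp, hY, Matrix.smul_apply, Matrix.add_apply, Matrix.one_apply]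
      ring
    rw [e, htrX, zero_add]
    field_simp
  have hpne : p ≠ 0 := by
    intro h
    rw [h] at htrp
    simp at htrp
  set q : M2 := 1 - p with hq
  have hqS : q ∈ S := S.sub_mem S.one_mem hpS
  have htrq : q 0 0 + q 1 1 = 1 := by
    rw [hq]
    simp only [Matrix.sub_apply, Matrix.one_apply]
    simp
    linear_combination -htrp
  have hqne : q ≠ 0 := by
    intro h
    rw [h] at htrq
    simp at htrq
  have hpq : p * q = 0 := by rw [hq, mul_sub, mul_one, hpp, sub_self]
  have hqp : q * p = 0 := by rw [hq, sub_mul, one_mul, hpp, sub_self]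
  have hqq : q * q = q := by rw [hq, sub_mul, one_mul, mul_sub, mul_one, hpp]; abel
  have hqh : qᴴ = q := by rw [hq, conjTranspose_sub, conjTranspose_one, hph]
  -- p does not commute with B
  have hpB : p * B ≠ B * p := by
    intro h
    apply hXB
    have hYp : Y = (2 * (s:ℂ)) • p := by
      rw [hp, smul_smul]
      field_simp
      rw [one_smul]
    have hXY : X = Y - (s:ℂ) • 1 := by rw [hY]; abel
    rw [hXY, hYp]
    simp only [sub_mul, mul_sub, smul_mul_assoc, mul_smul_comm, one_mul, mul_one, h]
  set c : M2 := p * B * q with hc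
  have hcS : c ∈ S := S.mul_mem (S.mul_mem hpS hB) hqS
  have hch : cᴴ = q * B * p := by
    rw [hc, conjTranspose_mul, conjTranspose_mul, hph, hqh, hBh, mul_assoc]
  have hchS : cᴴ ∈ S := hstar c hcS
  have hcne : c ≠ 0 := by
    intro h
    apply hpB
    have h' : q * B * p = 0 := by rw [← hch, h, conjTranspose_zero]
    have this2 : p * B - B * p = c - q * B * p := by
      rw [hc, hq]
      noncomm_ring
    rw [h, h'] at this2
    rw [sub_zero] at this2
    exact sub_eq_zero.mp this2
  have hchne : cᴴ ≠ 0 := fun h => hcne (by simpa using congrArg conjTranspose h)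
  have hpc : p * c = c := by rw [hc, ← mul_assoc, ← mul_assoc, hpp]
  have hcq : c * q = c := by rw [hc, mul_assoc, hqq]
  have hcp : c * p = 0 := by rw [hc, mul_assoc, hqp, mul_zero]
  have hqc : q * c = 0 := by rw [hc, ← mul_assoc, ← mul_assoc, hqp, zero_mul, zero_mul]
  have hqc' : q * cᴴ = cᴴ := by rw [hch, ← mul_assoc, ← mul_assoc, hqq]
  have hc'p : cᴴ * p = cᴴ := by rw [hch, mul_assoc, hpp]
  have hpc' : p * cᴴ = 0 := by rw [hch, ← mul_assoc, ← mul_assoc, hpq, zero_mul, zero_mul]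
  have hc'q : cᴴ * q = 0 := by rw [hch, mul_assoc, hpq, mul_zero]
  have hli : LinearIndependent ℂ ![p, q, c, cᴴ] := by
    rw [Fintype.linearIndependent_iff]
    intro g hg
    have hsum : g 0 • p + g 1 • q + g 2 • c + g 3 • cᴴ = 0 := by
      simpa [Fin.sum_univ_four] using hg
    have e0 : g 0 • p = 0 := by
      have h' := congrArg (fun M => p * M * p) hsum
      simpa [mul_add, add_mul, mul_smul_comm, smul_mul_assoc, mul_assoc,
        hpp, hqp, hcp, hc'p, hpc'] using h'
    have e1 : g 1 • q = 0 := by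
      have h' := congrArg (fun M => q * M * q) hsum
      simpa [mul_add, add_mul, mul_smul_comm, smul_mul_assoc, mul_assoc,
        hqq, hpq, hcq, hqc, hc'q] using h'
    have e2 : g 2 • c = 0 := by
      have h' := congrArg (fun M => p * M * q) hsum
      simpa [mul_add, add_mul, mul_smul_comm, smul_mul_assoc, mul_assoc,
        hpq, hqq, hcq, hpc, hc'q] using h'
    have e3 : g 3 • cᴴ = 0 := by
      have h' := congrArg (fun M => q * M * p) hsum
      simpa [mul_add, add_mul, mul_smul_comm, smul_mul_assoc, mul_assoc,
        hpp, hqp, hcp, hc'p, hqc'] using h'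
    have z0 : g 0 = 0 := by
      rcases smul_eq_zero.mp e0 with h | h
      · exact h
      · exact absurd h hpne
    have z1 : g 1 = 0 := by
      rcases smul_eq_zero.mp e1 with h | h
      · exact h
      · exact absurd h hqne
    have z2 : g 2 = 0 := by
      rcases smul_eq_zero.mp e2 with h | h
      · exact h
      · exact absurd h hcne
    have z3 : g 3 = 0 := by
      rcases smul_eq_zero.mp e3 with h | h
      · exact h
      · exact absurd h hchne
    intro i
    fin_cases i <;> assumption
  have hspan : Submodule.span ℂ (Set.range ![p, q, c, cᴴ]) ≤ Subalgebra.toSubmodule S := by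
    rw [Submodule.span_le]
    rintro x ⟨i, rfl⟩
    fin_cases i
    · exact hpS
    · exact hqS
    · exact hcS
    · exact hchS
  have h4 : Module.finrank ℂ
      (Submodule.span ℂ (Set.range ![p, q, c, cᴴ])) = 4 := by
    rw [finrank_span_eq_card hli]
    simp
  have hfr : Module.finrank ℂ M2 = 4 := by
    rw [Module.finrank_matrix]
    simp
  have htop : Subalgebra.toSubmodule S = ⊤ := by
    apply Submodule.eq_top_of_finrank_eq
    rw [hfr]
    refine le_antisymm (hfr ▸ Submodule.finrank_le _) ?_
    calc (4:ℕ) = _ := h4.symm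
      _ ≤ _ := Submodule.finrank_mono hspan
  exact Algebra.toSubmodule_eq_top.mp htop

end EvenOrderAux

open EvenOrderAux

/-- **Even-order constructibility, special case.** If `K` is diagonal with `n`
distinct real eigenvalues each of multiplicity 2, the Burnside graph of the pair
`(H, K)` is strongly connected, the top-row 2-blocks of `H` are all invertible,
and two of them `H₀ⱼ`, `H₀ⱼ'` are such that `H₀ⱼ H₀ⱼᴴ` and `H₀ⱼ' H₀ⱼ'ᴴ` do not
commute, then `H` and `K` generate the full matrix algebra `M_{2n}(ℂ)`. -/
theorem even_order_constructibility_special_case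
    (n : ℕ) (hn : 0 < n)
    (H K : Matrix (Fin n × Fin 2) (Fin n × Fin 2) ℂ)
    (hH : Hᴴ = H)
    (k : Fin n → ℝ) (hk : Function.Injective k)
    (hK : ∀ p q : Fin n × Fin 2, K p q = if p = q then (k p.1 : ℂ) else 0)
    (hconn : ∀ p q : Fin n × Fin 2,
      Relation.ReflTransGen (fun p q => p ≠ q ∧ (H p q ≠ 0 ∨ K p q ≠ 0)) p q)
    (hinv : ∀ j : Fin n, IsUnit (blk H ⟨0, hn⟩ j))
    (hnc : ∃ j j' : Fin n, j ≠ j' ∧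
      (blk H ⟨0, hn⟩ j * (blk H ⟨0, hn⟩ j)ᴴ) * (blk H ⟨0, hn⟩ j' * (blk H ⟨0, hn⟩ j')ᴴ) ≠
      (blk H ⟨0, hn⟩ j' * (blk H ⟨0, hn⟩ j')ᴴ) * (blk H ⟨0, hn⟩ j * (blk H ⟨0, hn⟩ j)ᴴ)) :
    Algebra.adjoin ℂ {H, K} = ⊤ := by
  set z : Fin n := ⟨0, hn⟩ with hz
  set A := Algebra.adjoin ℂ {H, K} with hA
  have hHA : H ∈ A := Algebra.subset_adjoin (Set.mem_insert _ _)
  have hKA : K ∈ A := Algebra.subset_adjoin (by simp)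
  have hP : ∀ i : Fin n, emb i i (1 : M2) ∈ A := by
    intro i
    exact Algebra.adjoin_mono (by simp : ({K} : Set _) ⊆ {H, K}) (P_mem K k hk hK i)
  have hblkc : ∀ i j, (blk H i j)ᴴ = blk H j i := by
    intro i j
    ext a b
    have := congrFun (congrFun hH (j, a)) (i, b)
    simpa [Matrix.conjTranspose_apply, blk] using this
  have hKh : Kᴴ = K := by
    ext p q
    rw [Matrix.conjTranspose_apply, hK p q, hK q p]
    by_cases h : p = q
    · subst h
      simp
    · rw [if_neg h, if_neg (fun h' => h h'.symm), star_zero]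
  have hstar : ∀ x ∈ A, xᴴ ∈ A := by
    intro x hx
    refine Algebra.adjoin_induction ?_ ?_ ?_ ?_ hx
    · rintro y (rfl | rfl)
      · rw [hH]; exact hHA
      · rw [hKh]
        exact hKA
    · intro r
      rw [Algebra.algebraMap_eq_smul_one]
      rw [conjTranspose_smul, conjTranspose_one]
      exact A.smul_mem A.one_mem _
    · intro x y _ _ hx' hy'
      rw [conjTranspose_add]
      exact A.add_mem hx' hy'
    · intro x y _ _ hx' hy'
      rw [conjTranspose_mul]
      exact A.mul_mem hy' hx'
  have hPH : ∀ i j, emb i j (blk H i j) ∈ A := by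
    intro i j
    rw [← P_mul_mul_P]
    exact A.mul_mem (A.mul_mem (hP i) hHA) (hP j)
  let S : Subalgebra ℂ M2 :=
    { carrier := {B : M2 | emb z z B ∈ A}
      mul_mem' := fun {x y} hx hy => by
        show emb z z (x * y) ∈ A
        rw [← emb_mul z z z]
        exact A.mul_mem hx hy
      one_mem' := hP z
      add_mem' := fun {x y} hx hy => by
        show emb z z (x + y) ∈ A
        rw [emb_add]
        exact A.add_mem hx hy
      zero_mem' := by
        show emb z z (0 : M2) ∈ A
        rw [emb_zero]
        exact A.zero_mem
      algebraMap_mem' := fun r => by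
        show emb z z (algebraMap ℂ M2 r) ∈ A
        rw [Algebra.algebraMap_eq_smul_one, emb_smul]
        exact A.smul_mem (hP z) r }
  have hmemS : ∀ B : M2, B ∈ S ↔ emb z z B ∈ A := fun B => Iff.rfl
  have hstarS : ∀ x ∈ S, xᴴ ∈ S := by
    intro x hx
    rw [hmemS, ← emb_conjTranspose]
    exact hstar _ hx
  obtain ⟨j, j', _, hnc'⟩ := hnc
  rw [hblkc z j, hblkc z j'] at hnc'
  have hmemJ : ∀ l : Fin n, blk H z l * blk H l z ∈ S := by
    intro l
    rw [hmemS, ← emb_mul z l z]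
    exact A.mul_mem (hPH z l) (hPH l z)
  have hhermJ : ∀ l : Fin n, (blk H z l * blk H l z)ᴴ = blk H z l * blk H l z := by
    intro l
    rw [conjTranspose_mul, hblkc, hblkc]
  have hStop : S = ⊤ :=
    m2_gen S hstarS _ _ (hmemJ j) (hmemJ j') (hhermJ j) (hhermJ j') hnc'
  have hSall : ∀ B : M2, emb z z B ∈ A := by
    intro B
    rw [← hmemS, hStop]
    trivial
  have h0j : ∀ (l : Fin n) (B : M2), emb z l B ∈ A := by
    intro l B
    obtain ⟨u, hu⟩ := hinv l
    have h1 : emb z l B = emb z z (B * ↑u⁻¹) * emb z l (blk H z l) := by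
      rw [emb_mul]
      congr 1
      rw [mul_assoc, ← hu, Units.inv_mul, mul_one]
    rw [h1]
    exact A.mul_mem (hSall _) (hPH z l)
  have hi0 : ∀ (i : Fin n) (B : M2), emb i z B ∈ A := by
    intro i B
    obtain ⟨u, hu⟩ := hinv i
    have hkey : blk H i z * ((↑u⁻¹ : M2))ᴴ = 1 := by
      rw [← hblkc z i, ← conjTranspose_mul, ← hu, Units.inv_mul, conjTranspose_one]
    have h1 : emb i z B = emb i z (blk H i z) * emb z z ((↑u⁻¹ : M2)ᴴ * B) := by
      rw [emb_mul]
      congr 1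
      rw [← mul_assoc, hkey, one_mul]
    rw [h1]
    exact A.mul_mem (hPH i z) (hSall _)
  have hij : ∀ (i l : Fin n) (B : M2), emb i l B ∈ A := by
    intro i l B
    have h1 : emb i l B = emb i z B * emb z l 1 := by rw [emb_mul, mul_one]
    rw [h1]
    exact A.mul_mem (hi0 i B) (h0j l 1)
  rw [eq_top_iff]
  intro M _
  have hdecomp : M = ∑ i : Fin n, ∑ l : Fin n, emb i l (blk M i l) := by
    ext ⟨p1, p2⟩ ⟨q1, q2⟩
    simp only [Matrix.sum_apply, emb, Matrix.of_apply, blk, ite_and]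
    rw [Finset.sum_eq_single p1, Finset.sum_eq_single q1]
    · simp
    · intro b _ hb
      simp [Ne.symm hb]
    · simp
    · intro b _ hb
      rw [Finset.sum_eq_zero]
      intro c _
      simp [Ne.symm hb]
    · simp
  rw [hdecomp]
  exact A.sum_mem fun i _ => A.sum_mem fun l _ => hij i l _
end

section
/- (Laffey's Generation Theorem.) Let F be a field, n > 1, k ≥ 1, let A : Fin k → Matrix (Fin n) (Fin n) F, let d : Fin n → F be injective, and set B := Matrix.diagonal d. Let 𝒜 := Algebra.adjoin F (Set.range A ∪ {B}). Then the following are equivalent: (1) 𝒜 is a simple ring (IsSimpleRing ↥𝒜); (2) 𝒜 = ⊤, i.e. 𝒜 is the full matrix algebra M_n(F); (3) the Burnside graph of A is strongly connected. -/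
open Matrix Polynomial

private lemma aeval_diagonal_lg {R : Type*} [CommRing R] {n : ℕ} (d : Fin n → R) (p : R[X]) :
    aeval (Matrix.diagonal d) p = Matrix.diagonal fun i => p.eval (d i) := by
  induction p using Polynomial.induction_on' with
  | add p q hp hq =>
      simp [hp, hq, Matrix.diagonal_add]
  | monomial m a =>
      simp [aeval_monomial, Matrix.algebraMap_eq_diagonal, Matrix.diagonal_pow,
        Matrix.diagonal_mul_diagonal, eval_monomial]

private lemma stdBasis_diag_mem {F : Type*} [Field F] {n : ℕ} (d : Fin n → F)
    (hd : Function.Injective d) (i : Fin n) :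
    Matrix.single i i (1 : F) ∈ Algebra.adjoin F {Matrix.diagonal d} := by
  rw [Algebra.adjoin_singleton_eq_range_aeval]
  refine ⟨Lagrange.basis Finset.univ d i, ?_⟩
  show aeval (Matrix.diagonal d) _ = _
  rw [aeval_diagonal_lg]
  ext a b
  by_cases hab : a = b
  · subst hab
    by_cases hia : i = a
    · subst hia
      simp [Lagrange.eval_basis_self hd.injOn (Finset.mem_univ i)]
    · rw [Matrix.single_apply_of_ne i i 1 a a (by tauto), Matrix.diagonal_apply_eq]
      exact Lagrange.eval_basis_of_ne hia (Finset.mem_univ a)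
  · rw [Matrix.single_apply_of_ne i i 1 a b (by rintro ⟨rfl, rfl⟩; exact hab rfl), Matrix.diagonal_apply_ne _ hab]

private lemma isSimpleRing_of_ringEquiv' {R S : Type*} [Ring R] [Ring S] [IsSimpleRing R]
    (e : R ≃+* S) : IsSimpleRing S := by
  have : Nontrivial S := e.symm.toEquiv.nontrivial
  refine IsSimpleRing.of_eq_bot_or_eq_top (fun I => ?_)
  rcases IsSimpleOrder.eq_bot_or_eq_top (TwoSidedIdeal.comap (e : R →+* S) I) with h | h
  · left
    refine SetLike.ext fun x => ?_
    rw [TwoSidedIdeal.mem_bot]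
    constructor
    · intro hx
      have h2 : e.symm x ∈ TwoSidedIdeal.comap (e : R →+* S) I := by
        rw [TwoSidedIdeal.mem_comap]
        simpa using hx
      rw [h, TwoSidedIdeal.mem_bot] at h2
      have := congrArg e h2
      simpa using this
    · rintro rfl; exact I.zero_mem
  · right
    refine SetLike.ext fun x => ?_
    simp only [TwoSidedIdeal.mem_top, iff_true]
    have h2 : e.symm x ∈ TwoSidedIdeal.comap (e : R →+* S) I := h ▸ TwoSidedIdeal.mem_top _
    rw [TwoSidedIdeal.mem_comap] at h2
    simpa using h2
/-- **Laffey's Generation Theorem.** For a tuple `A` of `n × n` matrices over a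
field `F` together with a diagonal matrix `B` with distinct diagonal entries,
the algebra `𝒜` generated by the `A m` and `B` satisfies: `𝒜` is simple iff
`𝒜` is the full matrix algebra iff the Burnside graph of `A` is strongly
connected. -/
theorem laffey_generation_theorem
    (F : Type*) [Field F] (n k : ℕ) (hn : 1 < n) (hk : 1 ≤ k)
    (A : Fin k → Matrix (Fin n) (Fin n) F)
    (d : Fin n → F) (hd : Function.Injective d) :
    let B : Matrix (Fin n) (Fin n) F := Matrix.diagonal d
    let 𝒜 := Algebra.adjoin F (Set.range A ∪ {B})
    (IsSimpleRing ↥𝒜 ↔ 𝒜 = ⊤) ∧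
    (𝒜 = ⊤ ↔
      ∀ i j : Fin n,
        Relation.ReflTransGen (fun i j : Fin n => i ≠ j ∧ ∃ m, A m i j ≠ 0) i j) := by
  intro B 𝒜
  set E : Fin n → Fin n → Prop := fun i j : Fin n => i ≠ j ∧ ∃ m, A m i j ≠ 0 with hE
  have hAmem : ∀ m, A m ∈ 𝒜 := fun m => Algebra.subset_adjoin (Or.inl ⟨m, rfl⟩)
  have hdiag : ∀ i : Fin n, Matrix.single i i (1 : F) ∈ 𝒜 := fun i =>
    Algebra.adjoin_mono (by intro x hx; exact Or.inr hx) (stdBasis_diag_mem d hd i)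
  -- edge lemma
  have hedge : ∀ {a b : Fin n}, E a b → Matrix.single a b (1 : F) ∈ 𝒜 := by
    rintro a b ⟨hne, m, hm⟩
    have h1 : Matrix.single a a (1 : F) * (A m * Matrix.single b b 1) =
        Matrix.single a b (A m a b) := by
      ext x y
      by_cases hx : a = x
      · subst hx
        rw [Matrix.single_mul_apply_same]
        by_cases hy : b = y
        · subst hy
          rw [Matrix.mul_single_apply_same]
          simp
        · rw [Matrix.mul_single_apply_of_ne _ _ _ _ _ (Ne.symm hy),
            Matrix.single_apply_of_ne a b _ a y (fun h => hy h.2), mul_zero]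
      · rw [Matrix.single_mul_apply_of_ne _ _ _ _ _ (Ne.symm hx),
          Matrix.single_apply_of_ne a b _ x y (fun h => hx h.1)]
    have h2 : Matrix.single a b (A m a b) ∈ 𝒜 := by
      rw [← h1]
      exact 𝒜.mul_mem (hdiag a) (𝒜.mul_mem (hAmem m) (hdiag b))
    have h3 := 𝒜.smul_mem h2 (A m a b)⁻¹
    rwa [Matrix.smul_single, smul_eq_mul, inv_mul_cancel₀ hm] at h3
  -- L1 : connectivity implies top
  have L1 : (∀ i j : Fin n, Relation.ReflTransGen E i j) → 𝒜 = ⊤ := by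
    intro hconn
    have hstd : ∀ i j : Fin n, Matrix.single i j (1 : F) ∈ 𝒜 := by
      intro i j
      induction hconn i j with
      | refl => exact hdiag i
      | tail _ hbc ih =>
          have := 𝒜.mul_mem ih (hedge hbc)
          rwa [Matrix.single_mul_single_same, one_mul] at this
    rw [eq_top_iff]
    intro M _
    rw [Matrix.matrix_eq_sum_single M]
    refine Subalgebra.sum_mem _ fun i _ => Subalgebra.sum_mem _ fun j _ => ?_
    have : Matrix.single i j (M i j) = (M i j) • Matrix.single i j (1 : F) := by
      rw [Matrix.smul_single, smul_eq_mul, mul_one]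
    rw [this]
    exact 𝒜.smul_mem (hstd i j) _
  -- L2 : top implies simple
  have L2 : 𝒜 = ⊤ → IsSimpleRing ↥𝒜 := by
    intro h
    rw [h]
    haveI : Nonempty (Fin n) := ⟨⟨0, by omega⟩⟩
    exact isSimpleRing_of_ringEquiv' (Subalgebra.topEquiv (R := F)
      (A := Matrix (Fin n) (Fin n) F)).symm.toRingEquiv
  -- L3 : not connected implies not simple
  have L3 : ¬(∀ i j : Fin n, Relation.ReflTransGen E i j) → ¬ IsSimpleRing ↥𝒜 := by
    intro hnc hsimp
    push_neg at hnc
    obtain ⟨i0, j0, hij⟩ := hnc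
    set S : Set (Fin n) := {j | Relation.ReflTransGen E i0 j} with hS
    have hi0 : i0 ∈ S := Relation.ReflTransGen.refl
    have hj0 : j0 ∉ S := hij
    have hi0j0 : i0 ≠ j0 := fun h => hj0 (h ▸ hi0)
    -- the block subalgebra
    let T : Subalgebra F (Matrix (Fin n) (Fin n) F) :=
      { carrier := {M | ∀ i ∈ S, ∀ j ∉ S, M i j = 0}
        mul_mem' := by
          intro a b ha hb i hiS j hjS
          rw [Matrix.mul_apply]
          refine Finset.sum_eq_zero fun l _ => ?_
          by_cases hl : l ∈ S
          · rw [hb l hl j hjS, mul_zero]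
          · rw [ha i hiS l hl, zero_mul]
        one_mem' := by
          intro i hiS j hjS
          exact Matrix.one_apply_ne (fun h => hjS (h ▸ hiS))
        add_mem' := by
          intro a b ha hb i hiS j hjS
          rw [Matrix.add_apply, ha i hiS j hjS, hb i hiS j hjS, add_zero]
        zero_mem' := by intro i _ j _; rfl
        algebraMap_mem' := by
          intro r i hiS j hjS
          rw [Matrix.algebraMap_eq_diagonal]
          exact Matrix.diagonal_apply_ne _ (fun h => hjS (h ▸ hiS)) }
    have hsub : 𝒜 ≤ T := by
      refine Algebra.adjoin_le ?_
      rintro x (⟨m, rfl⟩ | rfl)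
      · intro i hiS j hjS
        by_contra hne0
        have hij' : i ≠ j := fun h => hjS (h ▸ hiS)
        exact hjS (Relation.ReflTransGen.tail hiS ⟨hij', m, hne0⟩)
      · intro i hiS j hjS
        exact Matrix.diagonal_apply_ne _ (fun h => hjS (h ▸ hiS))
    -- the two-sided ideal
    let I : TwoSidedIdeal ↥𝒜 := TwoSidedIdeal.mk'
      {x : ↥𝒜 | ∀ i ∈ S, ∀ j ∈ S, (x : Matrix (Fin n) (Fin n) F) i j = 0}
      (by intro i _ j _; rfl)
      (by intro x y hx hy i hiS j hjS
          show ((x : Matrix (Fin n) (Fin n) F) + y) i j = 0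
          rw [Matrix.add_apply, hx i hiS j hjS, hy i hiS j hjS, add_zero])
      (by intro x hx i hiS j hjS
          show (-(x : Matrix (Fin n) (Fin n) F)) i j = 0
          rw [Matrix.neg_apply, hx i hiS j hjS, neg_zero])
      (by intro x y hy i hiS j hjS
          show ((x : Matrix (Fin n) (Fin n) F) * y) i j = 0
          rw [Matrix.mul_apply]
          refine Finset.sum_eq_zero fun l _ => ?_
          by_cases hl : l ∈ S
          · rw [hy l hl j hjS, mul_zero]
          · rw [hsub x.2 i hiS l hl, zero_mul])
      (by intro x y hx i hiS j hjS
          show ((x : Matrix (Fin n) (Fin n) F) * y) i j = 0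
          rw [Matrix.mul_apply]
          refine Finset.sum_eq_zero fun l _ => ?_
          by_cases hl : l ∈ S
          · rw [hx i hiS l hl, zero_mul]
          · rw [hsub x.2 i hiS l hl, zero_mul])
    have hej0 : (⟨Matrix.single j0 j0 (1 : F), hdiag j0⟩ : ↥𝒜) ∈ I := by
      refine (TwoSidedIdeal.mem_mk' _ _ _ _ _ _ _).2 ?_
      intro i hiS j _
      exact Matrix.single_apply_of_ne j0 j0 1 i j
        (fun h => hj0 (h.1 ▸ hiS))
    have hne0 : (⟨Matrix.single j0 j0 (1 : F), hdiag j0⟩ : ↥𝒜) ≠ 0 := by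
      intro h
      have := congrArg (fun x : ↥𝒜 => (x : Matrix (Fin n) (Fin n) F) j0 j0) h
      simp at this
    have hone : (1 : ↥𝒜) ∉ I := by
      refine mt (TwoSidedIdeal.mem_mk' _ _ _ _ _ _ _).1 ?_
      intro h
      have := h i0 hi0 i0 hi0
      rw [show ((1 : ↥𝒜) : Matrix (Fin n) (Fin n) F) = 1 from rfl, Matrix.one_apply_eq] at this
      exact one_ne_zero this
    rcases hsimp.simple.eq_bot_or_eq_top I with h | h
    · rw [h, TwoSidedIdeal.mem_bot] at hej0
      exact hne0 hej0
    · exact hone (h ▸ TwoSidedIdeal.mem_top _)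
  constructor
  · constructor
    · intro hs
      by_contra ht
      by_cases hc : ∀ i j : Fin n, Relation.ReflTransGen E i j
      · exact ht (L1 hc)
      · exact L3 hc hs
    · exact L2
  · constructor
    · intro ht
      by_contra hc
      exact L3 hc (L2 ht)
    · exact L1
end

section
/- Let n > 1, k > 1, and let E be an irreflexive relation on Fin n that is strongly connected (∀ i j, Relation.ReflTransGen E i j). Let V := {(m, i, j) : Fin k × Fin n × Fin n // i = j ∨ E i j} be the set of allowed entry positions. Then there exists a nonzero multivariate polynomial P ∈ MvPolynomial V ℂ such that for every tuple A : Fin k → Matrix (Fin n) (Fin n) ℂ supported on the pattern E (i.e. A m i j = 0 whenever i ≠ j and ¬ E i j), if the evaluation of P at the assignment (m,i,j) ↦ A m i j is nonzero, then Algebra.adjoin ℂ (Set.range A) = ⊤. In particular, a generic tuple of matrices whose Burnside graph is the strongly connected graph E generates the full matrix algebra M_n(ℂ). -/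
open Matrix Polynomial

namespace BurnsideAux

/-- Evaluating a polynomial at a diagonal matrix gives the diagonal of entrywise evaluations. -/
lemma aeval_diagonal {n : ℕ} (d : Fin n → ℂ) (p : ℂ[X]) :
    Polynomial.aeval (Matrix.diagonal d) p
      = Matrix.diagonal (fun i => p.eval (d i)) := by
  have h := Polynomial.aeval_algHom_apply (Matrix.diagonalAlgHom (n := Fin n) ℂ) d p
  simp only [Matrix.diagonalAlgHom_apply] at h
  rw [h]
  have hfun : Polynomial.aeval d p = fun i => p.eval (d i) := by
    funext i
    have h2 := Polynomial.aeval_algHom_apply (Pi.evalAlgHom ℂ (fun _ : Fin n => ℂ) i) d p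
    simpa [Polynomial.coe_aeval_eq_eval] using h2.symm
  rw [hfun]

lemma aeval_mem {A : Type*} [Ring A] [Algebra ℂ A]
    (T : Subalgebra ℂ A) {x : A} (hx : x ∈ T) (p : ℂ[X]) :
    Polynomial.aeval x p ∈ T := by
  rw [Polynomial.aeval_eq_sum_range]
  exact T.sum_mem fun m _ => T.smul_mem (T.pow_mem hx m) _

variable {n : ℕ} (E : Fin n → Fin n → Prop) [DecidableRel E]

/-- The witness diagonal matrix with distinct entries. -/
noncomputable def D (n : ℕ) : Matrix (Fin n) (Fin n) ℂ :=
  Matrix.diagonal fun i => (i : ℂ)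

/-- The witness adjacency matrix of `E`. -/
def B : Matrix (Fin n) (Fin n) ℂ :=
  Matrix.of fun i j => if E i j then 1 else 0

/-- The diagonal matrix unit. -/
def Eii (i : Fin n) : Matrix (Fin n) (Fin n) ℂ :=
  Matrix.diagonal fun j => if j = i then 1 else 0

lemma eii_mem (T : Subalgebra ℂ (Matrix (Fin n) (Fin n) ℂ)) (hD : D n ∈ T) (i : Fin n) :
    Eii i ∈ T := by
  have hinj : Set.InjOn (fun i : Fin n => (i : ℂ)) (Finset.univ : Finset (Fin n)) := by
    intro a _ b _ hab
    have : (a : ℕ) = (b : ℕ) := Nat.cast_injective hab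
    exact Fin.ext this
  have key : Polynomial.aeval (D n) (Lagrange.basis Finset.univ (fun i : Fin n => (i : ℂ)) i)
      = Eii i := by
    rw [D, aeval_diagonal]
    unfold Eii
    have hfun : (fun j : Fin n =>
        (Lagrange.basis Finset.univ (fun i : Fin n => (i : ℂ)) i).eval ((j : Fin n) : ℂ))
        = fun j => if j = i then (1 : ℂ) else 0 := by
      funext j
      by_cases hji : j = i
      · subst hji
        rw [if_pos rfl]
        exact Lagrange.eval_basis_self hinj (Finset.mem_univ j)
      · rw [if_neg hji]
        exact Lagrange.eval_basis_of_ne (v := fun i : Fin n => (i : ℂ)) (Ne.symm hji) (Finset.mem_univ j)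
    rw [hfun]
  rw [← key]
  exact aeval_mem T hD _

lemma eii_mul_mul_eii (M : Matrix (Fin n) (Fin n) ℂ) (i j : Fin n) :
    Eii i * M * Eii j = Matrix.single i j (M i j) := by
  ext a b
  simp only [Eii]
  rw [Matrix.mul_diagonal, Matrix.diagonal_mul]
  simp only [Matrix.single, Matrix.of_apply]
  by_cases hai : a = i <;> by_cases hbj : b = j <;>
    simp_all [eq_comm]

lemma witness_gen (hconn : ∀ i j : Fin n, Relation.ReflTransGen E i j) :
    Algebra.adjoin ℂ {D n, B E} = ⊤ := by
  set T := Algebra.adjoin ℂ {D n, B E} with hT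
  have hD : D n ∈ T := Algebra.subset_adjoin (by simp)
  have hB : B E ∈ T := Algebra.subset_adjoin (by simp)
  have hEii : ∀ i, Eii i ∈ T := eii_mem T hD
  -- matrix units for edges
  have hedge : ∀ i j, E i j → Matrix.single i j (1 : ℂ) ∈ T := by
    intro i j hij
    have : Eii i * B E * Eii j = Matrix.single i j (1 : ℂ) := by
      rw [eii_mul_mul_eii]
      congr 1
      simp [B, hij]
    rw [← this]
    exact T.mul_mem (T.mul_mem (hEii i) hB) (hEii j)
  -- diagonal matrix units
  have hdiag : ∀ i, Matrix.single i i (1 : ℂ) ∈ T := by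
    intro i
    have : Eii i * (1 : Matrix (Fin n) (Fin n) ℂ) * Eii i
        = Matrix.single i i ((1 : Matrix (Fin n) (Fin n) ℂ) i i) := eii_mul_mul_eii _ i i
    simp only [mul_one, Matrix.one_apply_eq] at this
    rw [← this]
    exact T.mul_mem (hEii i) (hEii i)
  -- all matrix units by strong connectivity
  have hall : ∀ i j, Matrix.single i j (1 : ℂ) ∈ T := by
    intro i j
    have h := hconn i j
    induction h with
    | refl => exact hdiag i
    | tail hab hbc ih =>
        rename_i b c
        have : Matrix.single i b (1 : ℂ) * Matrix.single b c (1 : ℂ)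
            = Matrix.single i c (1 : ℂ) := by
          rw [Matrix.single_mul_single_same, one_mul]
        rw [← this]
        exact T.mul_mem ih (hedge b c hbc)
  rw [eq_top_iff]
  intro M _
  rw [Matrix.matrix_eq_sum_single M]
  refine T.sum_mem fun i _ => T.sum_mem fun j _ => ?_
  have : Matrix.single i j (M i j) = (M i j) • Matrix.single i j (1 : ℂ) := by
    rw [Matrix.smul_single, smul_eq_mul, mul_one]
  rw [this]
  exact T.smul_mem (hall i j) _

end BurnsideAux

open BurnsideAux

/-- A generic tuple of complex matrices whose Burnside graph is a given
strongly connected graph `E` generates the full matrix algebra: there is a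
nonzero polynomial `P` in the allowed entries whose nonvanishing at a tuple
supported on the pattern `E` guarantees generation of `M_n(ℂ)`. -/
theorem generic_strongly_connected_generates_full_algebra
    (n k : ℕ) (hn : 1 < n) (hk : 1 < k)
    (E : Fin n → Fin n → Prop) (hirr : ∀ i, ¬ E i i)
    (hconn : ∀ i j : Fin n, Relation.ReflTransGen E i j) :
    ∃ P : MvPolynomial {x : Fin k × Fin n × Fin n // x.2.1 = x.2.2 ∨ E x.2.1 x.2.2} ℂ,
      P ≠ 0 ∧
      ∀ A : Fin k → Matrix (Fin n) (Fin n) ℂ,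
        (∀ (m : Fin k) (i j : Fin n), i ≠ j → ¬ E i j → A m i j = 0) →
        MvPolynomial.eval (fun v => A v.1.1 v.1.2.1 v.1.2.2) P ≠ 0 →
        Algebra.adjoin ℂ (Set.range A) = ⊤ := by
  classical
  set V := {x : Fin k × Fin n × Fin n // x.2.1 = x.2.2 ∨ E x.2.1 x.2.2} with hV
  set R := MvPolynomial V ℂ with hR
  set M := Matrix (Fin n) (Fin n) ℂ with hM
  -- the coordinate basis of the matrix algebra
  let e : M ≃ₗ[ℂ] (Fin n × Fin n → ℂ) :=
    { toFun := fun X p => X p.1 p.2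
      invFun := fun f => Matrix.of fun i j => f (i, j)
      map_add' := fun _ _ => rfl
      map_smul' := fun _ _ => rfl
      left_inv := fun _ => rfl
      right_inv := fun _ => rfl }
  let b : Module.Basis (Fin n × Fin n) ℂ M := Module.Basis.ofEquivFun e
  -- the witness tuple
  let k0 : Fin k := ⟨0, by omega⟩
  let k1 : Fin k := ⟨1, by omega⟩
  have h01 : k0 ≠ k1 := by
    intro h
    have := congrArg Fin.val h
    simp [k0, k1] at this
  let A₀ : Fin k → M := fun m => if m = k0 then D n else if m = k1 then B E else 0
  have hA₀supp : ∀ (m : Fin k) (i j : Fin n), i ≠ j → ¬ E i j → A₀ m i j = 0 := by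
    intro m i j hij hnE
    simp only [A₀]
    split
    · simp [D, Matrix.diagonal_apply_ne _ hij]
    · split
      · simp [B, hnE]
      · rfl
  have hgen₀ : Algebra.adjoin ℂ (Set.range A₀) = ⊤ := by
    rw [eq_top_iff, ← witness_gen E hconn]
    apply Algebra.adjoin_mono
    intro x hx
    rw [Set.mem_insert_iff, Set.mem_singleton_iff] at hx
    rcases hx with rfl | rfl
    · exact ⟨k0, by simp [A₀]⟩
    · exact ⟨k1, by simp [A₀, h01.symm]⟩
  -- words representing a basis inside the multiplicative closure of the witness
  have hspan : Submodule.span ℂ ((Submonoid.closure (Set.range A₀) : Submonoid M) : Set M) = ⊤ := by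
    have := Algebra.adjoin_eq_span ℂ (Set.range A₀)
    rw [hgen₀] at this
    exact this.symm
  obtain ⟨t, hts, hspan', hli⟩ :=
    exists_linearIndependent ℂ ((Submonoid.closure (Set.range A₀) : Submonoid M) : Set M)
  rw [hspan] at hspan'
  let c₀ : Module.Basis t ℂ M := Module.Basis.mk hli (by rw [Subtype.range_coe, hspan'])
  let eq : t ≃ (Fin n × Fin n) := Module.Basis.indexEquiv c₀ b
  let c : Module.Basis (Fin n × Fin n) ℂ M := c₀.reindex eq
  have hc : ∀ s, c s ∈ Submonoid.closure (Set.range A₀) := by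
    intro s
    have : c s = c₀ (eq.symm s) := c₀.reindex_apply eq s
    rw [this, Module.Basis.coe_mk]
    exact hts (eq.symm s).2
  -- choose the word lists
  have hword : ∀ x ∈ Submonoid.closure (Set.range A₀),
      ∃ L : List (Fin k), (L.map A₀).prod = x := by
    intro x hx
    induction hx using Submonoid.closure_induction with
    | mem y hy => obtain ⟨m, hm⟩ := hy; exact ⟨[m], by simp [hm]⟩
    | one => exact ⟨[], rfl⟩
    | mul y z _ _ ihy ihz =>
        obtain ⟨Ly, hLy⟩ := ihy
        obtain ⟨Lz, hLz⟩ := ihz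
        exact ⟨Ly ++ Lz, by rw [List.map_append, List.prod_append, hLy, hLz]⟩
  choose L hL using fun s => hword (c s) (hc s)
  -- generic matrices
  let G : Fin k → Matrix (Fin n) (Fin n) R := fun m =>
    Matrix.of fun i j => if h : i = j ∨ E i j then MvPolynomial.X ⟨(m, i, j), h⟩ else 0
  -- evaluation of generic words
  have hGeval : ∀ (A : Fin k → M),
      (∀ (m : Fin k) (i j : Fin n), i ≠ j → ¬ E i j → A m i j = 0) →
      ∀ (Lw : List (Fin k)),
        ((Lw.map G).prod).map (MvPolynomial.eval fun v : V => A v.1.1 v.1.2.1 v.1.2.2)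
          = (Lw.map A).prod := by
    intro A hA Lw
    set φ : R →+* ℂ := (MvPolynomial.eval fun v : V => A v.1.1 v.1.2.1 v.1.2.2) with hφ
    have hGA : ∀ m, (G m).map φ = A m := by
      intro m
      ext i j
      simp only [G, Matrix.map_apply, Matrix.of_apply]
      split
      · next h => rw [MvPolynomial.eval_X]
      · next h =>
          push_neg at h
          obtain ⟨hij, hnE⟩ := h
          simp [φ, (hA m i j hij hnE).symm]
    have h3 : ((Lw.map G).prod).map φ = ((Lw.map G).map (φ.mapMatrix)).prod :=
      map_list_prod (φ.mapMatrix) (Lw.map G)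
    rw [h3, List.map_map]
    have hfun : (⇑φ.mapMatrix ∘ G) = A := by
      funext m
      simpa [RingHom.mapMatrix_apply] using hGA m
    rw [hfun]
  -- the polynomial
  let N : Matrix (Fin n × Fin n) (Fin n × Fin n) R :=
    Matrix.of fun p s => (((L s).map G).prod) p.1 p.2
  have hdet : ∀ (A : Fin k → M),
      (∀ (m : Fin k) (i j : Fin n), i ≠ j → ¬ E i j → A m i j = 0) →
      MvPolynomial.eval (fun v : V => A v.1.1 v.1.2.1 v.1.2.2) N.det
        = b.det (fun s => ((L s).map A).prod) := by
    intro A hA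
    rw [(MvPolynomial.eval fun v : V => A v.1.1 v.1.2.1 v.1.2.2).map_det, Module.Basis.det_apply]
    rw [show ((MvPolynomial.eval fun v : V => A v.1.1 v.1.2.1 v.1.2.2).mapMatrix N)
      = N.map (MvPolynomial.eval fun v : V => A v.1.1 v.1.2.1 v.1.2.2) from rfl]
    have hmat : N.map (MvPolynomial.eval fun v : V => A v.1.1 v.1.2.1 v.1.2.2)
        = b.toMatrix (fun s => ((L s).map A).prod) := by
      ext p s
      have h2 := congrArg (fun X : Matrix (Fin n) (Fin n) ℂ => X p.1 p.2) (hGeval A hA (L s))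
      simp only [Matrix.map_apply] at h2
      rw [Matrix.map_apply, Module.Basis.toMatrix_apply, Module.Basis.ofEquivFun_repr_apply]
      exact h2
    rw [hmat]
  refine ⟨N.det, ?_, ?_⟩
  · intro hP0
    have h1 : b.det (fun s => ((L s).map A₀).prod) ≠ 0 := by
      have hc' : (fun s => ((L s).map A₀).prod) = c := by funext s; exact hL s
      rw [hc']
      have : IsUnit (b.det c) :=
        (Module.Basis.is_basis_iff_det b).mp ⟨c.linearIndependent, c.span_eq⟩
      exact this.ne_zero
    rw [← hdet A₀ hA₀supp, hP0] at h1
    simp at h1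
  · intro A hA hP
    rw [hdet A hA] at hP
    have hunit : IsUnit (b.det fun s => ((L s).map A).prod) := isUnit_iff_ne_zero.mpr hP
    obtain ⟨-, hspanA⟩ := (Module.Basis.is_basis_iff_det b).mpr hunit
    rw [eq_top_iff]
    intro x _
    have hx : x ∈ Submodule.span ℂ (Set.range fun s => ((L s).map A).prod) := by
      rw [hspanA]; trivial
    have hsub : Set.range (fun s => ((L s).map A).prod)
        ⊆ (Algebra.adjoin ℂ (Set.range A) : Set M) := by
      rintro y ⟨s, rfl⟩
      apply Subalgebra.list_prod_mem
      intro z hz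
      rw [List.mem_map] at hz
      obtain ⟨m, _, rfl⟩ := hz
      exact Algebra.subset_adjoin ⟨m, rfl⟩
    exact Submodule.span_le.mpr
      (hsub.trans (by exact le_rfl : (Algebra.adjoin ℂ (Set.range A) : Set M)
        ⊆ (Subalgebra.toSubmodule (Algebra.adjoin ℂ (Set.range A)) : Set M))) hx
end

section
/- Let F be a field, n, k ≥ 1, and A : Fin k → Matrix (Fin n) (Fin n) F. Then the underlying F-submodule of the unital algebra generated by the A m equals the linear span of the identity matrix together with all products of at most n² of the matrices: Subalgebra.toSubmodule (Algebra.adjoin F (Set.range A)) = Submodule.span F ({1} ∪ {M : ∃ L : List (Fin k), L ≠ [] ∧ L.length ≤ n^2 ∧ M = (L.map A).prod}). -/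
/-- The unital algebra generated by a tuple of `n × n` matrices is spanned, as a
submodule, by the identity matrix together with all products of at most `n²` of
the matrices. -/
theorem adjoin_eq_span_words_of_length_le_sq
    (F : Type*) [Field F] (n k : ℕ) (hn : 1 ≤ n) (hk : 1 ≤ k)
    (A : Fin k → Matrix (Fin n) (Fin n) F) :
    Subalgebra.toSubmodule (Algebra.adjoin F (Set.range A)) =
      Submodule.span F
        ({1} ∪ {M : Matrix (Fin n) (Fin n) F |
          ∃ L : List (Fin k), L ≠ [] ∧ L.length ≤ n ^ 2 ∧ M = (L.map A).prod}) := by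
  haveI : Nonempty (Fin n) := Fin.pos_iff_nonempty.mp hn
  set W : ℕ → Set (Matrix (Fin n) (Fin n) F) :=
    fun d => {M | ∃ L : List (Fin k), L.length ≤ d ∧ M = (L.map A).prod} with hWdef
  set S : ℕ → Submodule F (Matrix (Fin n) (Fin n) F) := fun d => Submodule.span F (W d) with hSdef
  have Sspan : ∀ d, S d = Submodule.span F (W d) := fun _ => rfl
  -- the set on the RHS is exactly `W (n ^ 2)`
  have hset : ({1} ∪ {M : Matrix (Fin n) (Fin n) F |
      ∃ L : List (Fin k), L ≠ [] ∧ L.length ≤ n ^ 2 ∧ M = (L.map A).prod}) = W (n ^ 2) := by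
    ext M
    constructor
    · rintro (h | ⟨L, _, hlen, hM⟩)
      · exact ⟨[], Nat.zero_le _, by simpa using h⟩
      · exact ⟨L, hlen, hM⟩
    · rintro ⟨L, hlen, hM⟩
      rcases eq_or_ne L [] with rfl | hL
      · left; simpa using hM
      · right; exact ⟨L, hL, hlen, hM⟩
  have Wmono : ∀ {d e : ℕ}, d ≤ e → W d ⊆ W e := by
    rintro d e h M ⟨L, hl, hM⟩; exact ⟨L, hl.trans h, hM⟩
  have Smono : ∀ {d e : ℕ}, d ≤ e → S d ≤ S e := fun h => Submodule.span_mono (Wmono h)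
  -- left multiplication by a generator raises the filtration degree by one
  have hmul : ∀ (d : ℕ) (m : Fin k), ∀ x ∈ S d, A m * x ∈ S (d + 1) := by
    intro d m x hx
    induction hx using Submodule.span_induction with
    | mem y hy =>
      obtain ⟨L, hl, rfl⟩ := hy
      exact Submodule.subset_span ⟨m :: L, by simpa using Nat.succ_le_succ hl, by simp⟩
    | zero => simpa using (S (d + 1)).zero_mem
    | add y z _ _ hy hz => rw [mul_add]; exact add_mem hy hz
    | smul c y _ hy => rw [mul_smul_comm]; exact Submodule.smul_mem _ _ hy
  -- once the filtration stabilizes, it stays constant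
  have hstab : ∀ d : ℕ, S d = S (d + 1) → ∀ e : ℕ, S (d + e) = S d := by
    intro d hd e
    induction e with
    | zero => rfl
    | succ e ih =>
      refine le_antisymm ?_ (Smono (Nat.le_add_right _ _))
      rw [Sspan, Submodule.span_le]
      rintro x ⟨L, hl, rfl⟩
      cases L with
      | nil => exact Submodule.subset_span ⟨[], Nat.zero_le _, rfl⟩
      | cons m L' =>
        have h1 : (L'.map A).prod ∈ S d := by
          rw [← ih]
          exact Submodule.subset_span ⟨L', by simp only [List.length_cons] at hl; omega, rfl⟩
        have h2 := hmul d m _ h1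
        rw [← hd] at h2
        simpa using h2
  -- the filtration stabilizes before step `n ^ 2`, by a dimension count
  have hex : ∃ d < n ^ 2, S d = S (d + 1) := by
    by_contra hcon
    push_neg at hcon
    have hstrict : ∀ d < n ^ 2, S d < S (d + 1) :=
      fun d hd => lt_of_le_of_ne (Smono (Nat.le_succ d)) (hcon d hd)
    have hrank : ∀ d ≤ n ^ 2, d + 1 ≤ Module.finrank F (S d) := by
      intro d
      induction d with
      | zero =>
        intro _
        have h1 : (1 : Matrix (Fin n) (Fin n) F) ∈ S 0 := Submodule.subset_span ⟨[], le_rfl, by simp⟩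
        have hbot : S 0 ≠ ⊥ := by
          intro h
          rw [h, Submodule.mem_bot] at h1
          exact one_ne_zero h1
        rcases Nat.eq_zero_or_pos (Module.finrank F (S 0)) with h0 | h0
        · exact absurd (Submodule.finrank_eq_zero.mp h0) hbot
        · omega
      | succ d ih =>
        intro hd
        have hlt := Submodule.finrank_lt_finrank_of_lt (hstrict d (by omega))
        have := ih (by omega)
        omega
    have h1 := hrank (n ^ 2) le_rfl
    have h2 : Module.finrank F (S (n ^ 2)) ≤ Module.finrank F (Matrix (Fin n) (Fin n) F) := Submodule.finrank_le _
    have h3 : Module.finrank F (Matrix (Fin n) (Fin n) F) = n ^ 2 := by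
      rw [Module.finrank_matrix, Module.finrank_self, Fintype.card_fin]
      ring
    omega
  obtain ⟨d, hd, hSd⟩ := hex
  have hle : ∀ e : ℕ, S e ≤ S (n ^ 2) := by
    intro e
    rcases le_total e (n ^ 2) with h | h
    · exact Smono h
    · have hde : d ≤ e := le_trans (le_of_lt hd) h
      have heq : S e = S d := by
        have := hstab d hSd (e - d)
        rwa [Nat.add_sub_cancel' hde] at this
      rw [heq]; exact Smono (le_of_lt hd)
  have hlist : ∀ l : List (Matrix (Fin n) (Fin n) F), (∀ y ∈ l, y ∈ Set.range A) → ∃ L : List (Fin k), l = L.map A := by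
    intro l
    induction l with
    | nil => exact fun _ => ⟨[], rfl⟩
    | cons y l ih =>
      intro h
      obtain ⟨L', hL'⟩ := ih fun z hz => h z (List.mem_cons_of_mem _ hz)
      obtain ⟨m, hm⟩ := h y List.mem_cons_self
      exact ⟨m :: L', by simp [hL', hm]⟩
  rw [hset]
  apply le_antisymm
  · rw [Algebra.adjoin_eq_span, Submodule.span_le]
    intro x hx
    obtain ⟨l, hl, rfl⟩ := Submonoid.exists_list_of_mem_closure hx
    obtain ⟨L, rfl⟩ := hlist l hl
    exact hle L.length (Submodule.subset_span ⟨L, le_rfl, rfl⟩)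
  · rw [Submodule.span_le]
    rintro x ⟨L, -, rfl⟩
    show (L.map A).prod ∈ Algebra.adjoin F (Set.range A)
    induction L with
    | nil => simpa using one_mem (Algebra.adjoin F (Set.range A))
    | cons m L ih => simpa using mul_mem (Algebra.subset_adjoin (Set.mem_range_self m)) ih
end

section
/- Let S, T : Matrix (Fin 2) (Fin 2) ℂ be hermitian matrices (Sᴴ = S and Tᴴ = T) with S * T ≠ T * S. Then S and T generate the full matrix algebra: Algebra.adjoin ℂ {S, T} = ⊤. -/
open Matrix

lemma trace_conjT_mul_self_ne {n : ℕ} (M : Matrix (Fin n) (Fin n) ℂ) (h : M ≠ 0) :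
    trace (Mᴴ * M) ≠ 0 := by
  have key : trace (Mᴴ * M) = ↑(∑ i, ∑ j, Complex.normSq (M j i)) := by
    simp only [trace, Matrix.mul_apply, diag, conjTranspose_apply]
    push_cast
    congr 1; ext i; congr 1; ext j
    rw [mul_comm]
    simpa using Complex.mul_conj (M j i)
  rw [key]
  intro hz
  apply h
  have hsum : (∑ i, ∑ j, Complex.normSq (M j i)) = 0 := by exact_mod_cast hz
  ext i j
  have h1 := (Finset.sum_eq_zero_iff_of_nonneg (fun i _ => Finset.sum_nonneg
    (fun j _ => Complex.normSq_nonneg _))).mp hsum j (Finset.mem_univ _)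
  have h2 := (Finset.sum_eq_zero_iff_of_nonneg (fun j _ => Complex.normSq_nonneg _)).mp
    h1 i (Finset.mem_univ _)
  simpa using Complex.normSq_eq_zero.mp h2

/-- Two noncommuting hermitian `2 × 2` complex matrices generate the full
matrix algebra `M₂(ℂ)`. -/
theorem noncommuting_hermitian_two_by_two_generate_full_algebra
    (S T : Matrix (Fin 2) (Fin 2) ℂ)
    (hS : Sᴴ = S) (hT : Tᴴ = T) (hST : S * T ≠ T * S) :
    Algebra.adjoin ℂ {S, T} = ⊤ := by
  set C : Matrix (Fin 2) (Fin 2) ℂ := S * T - T * S with hC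
  have hCne : C ≠ 0 := sub_ne_zero.mpr hST
  have hCH : Cᴴ = -C := by
    simp [hC, conjTranspose_sub, conjTranspose_mul, hS, hT]
  have htrC2 : trace (C * C) ≠ 0 := by
    have h : C * C = -(Cᴴ * C) := by rw [hCH, neg_mul, neg_neg]
    rw [h, trace_neg, neg_ne_zero]
    exact trace_conjT_mul_self_ne C hCne
  have htrC : trace C = 0 := by simp [hC, trace_mul_comm S T]
  have htrSC : trace (S * C) = 0 := by
    simp [hC, mul_sub, ← mul_assoc, trace_mul_cycle S T S]
  have htrTC : trace (T * C) = 0 := by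
    simp [hC, mul_sub, ← mul_assoc, trace_mul_cycle T S T]
  set v : Fin 4 → Matrix (Fin 2) (Fin 2) ℂ := ![1, S, T, C] with hv
  have hli : LinearIndependent ℂ v := by
    rw [Fintype.linearIndependent_iff]
    intro g hg
    have hsum : g 0 • (1 : Matrix (Fin 2) (Fin 2) ℂ) + g 1 • S + g 2 • T + g 3 • C = 0 := by
      simpa [hv, Fin.sum_univ_four, add_assoc] using hg
    have hg3 : g 3 = 0 := by
      have h := congrArg (fun M => trace (M * C)) hsum
      simp only [add_mul, smul_mul_assoc, one_mul, trace_add, trace_smul, zero_mul,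
        trace_zero, htrSC, htrTC, htrC] at h
      simp only [smul_eq_mul, mul_zero, zero_add, add_zero] at h
      rcases mul_eq_zero.mp h with h' | h'
      · exact h'
      · exact absurd h' htrC2
    rw [hg3, zero_smul, add_zero] at hsum
    have hg2 : g 2 = 0 := by
      have h2 : g 2 • C = 0 := by
        have heq : g 2 • C = S * (g 0 • 1 + g 1 • S + g 2 • T)
            - (g 0 • 1 + g 1 • S + g 2 • T) * S := by
          rw [hC]; noncomm_ring; module
        rw [heq, hsum, mul_zero, zero_mul, sub_zero]
      rcases smul_eq_zero.mp h2 with h' | h'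
      · exact h'
      · exact absurd h' hCne
    rw [hg2, zero_smul, add_zero] at hsum
    have hg1 : g 1 = 0 := by
      have h2 : g 1 • C = 0 := by
        have heq : g 1 • C = (g 0 • 1 + g 1 • S) * T - T * (g 0 • 1 + g 1 • S) := by
          rw [hC]; noncomm_ring; module
        rw [heq, hsum, mul_zero, zero_mul, sub_zero]
      rcases smul_eq_zero.mp h2 with h' | h'
      · exact h'
      · exact absurd h' hCne
    rw [hg1, zero_smul, add_zero] at hsum
    have hg0 : g 0 = 0 := by
      rcases smul_eq_zero.mp hsum with h' | h'
      · exact h'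
      · exact absurd h' one_ne_zero
    intro i
    fin_cases i <;> assumption
  -- membership
  have hSmem : S ∈ Algebra.adjoin ℂ {S, T} :=
    Algebra.subset_adjoin (Set.mem_insert _ _)
  have hTmem : T ∈ Algebra.adjoin ℂ {S, T} :=
    Algebra.subset_adjoin (Set.mem_insert_of_mem _ rfl)
  have hmem : ∀ i, v i ∈ Subalgebra.toSubmodule (Algebra.adjoin ℂ {S, T}) := by
    intro i
    fin_cases i
    · exact Subalgebra.one_mem _
    · exact (Subalgebra.mem_toSubmodule _).mpr hSmem
    · exact (Subalgebra.mem_toSubmodule _).mpr hTmem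
    · exact (Subalgebra.mem_toSubmodule _).mpr (sub_mem (mul_mem hSmem hTmem) (mul_mem hTmem hSmem))
  have hspan : Submodule.span ℂ (Set.range v) ≤
      Subalgebra.toSubmodule (Algebra.adjoin ℂ {S, T}) :=
    Submodule.span_le.mpr (Set.range_subset_iff.mpr hmem)
  have hfr : Module.finrank ℂ (Matrix (Fin 2) (Fin 2) ℂ) = 4 := by
    rw [Module.finrank_matrix]; simp
  have hspanfr : Module.finrank ℂ (Submodule.span ℂ (Set.range v)) = 4 := by
    rw [finrank_span_eq_card hli]; simp
  have h4 : 4 ≤ Module.finrank ℂ (Subalgebra.toSubmodule (Algebra.adjoin ℂ {S, T})) := by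
    rw [← hspanfr]
    exact Submodule.finrank_mono hspan
  have htop : Subalgebra.toSubmodule (Algebra.adjoin ℂ {S, T}) = ⊤ := by
    apply Submodule.eq_top_of_finrank_eq
    rw [hfr]
    exact le_antisymm (hfr ▸ Submodule.finrank_le _) h4
  exact Algebra.toSubmodule_eq_top.mp htop
end

section
/- Let n ≥ 1 and let A, B : Matrix (Fin (2*n)) (Fin (2*n)) ℝ be skew-symmetric (Aᵀ = −A and Bᵀ = −B) with B * B = −1. Set H := A * A and K := A * B + B * A. Then for all x, y : ℝ with x ≠ 0, every eigenvalue of x • H + y • K has even multiplicity; precisely, there exists a monic polynomial g ∈ Polynomial ℝ such that (x • H + y • K).charpoly = g ^ 2. -/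
open Matrix

open Polynomial in
lemma coeff_comp_neg_X' (p : Polynomial ℝ) (k : ℕ) :
    (p.comp (-Polynomial.X)).coeff k = (-1)^k * p.coeff k := by
  induction p using Polynomial.induction_on' with
  | add f g hf hg => simp [add_comp, hf, hg, mul_add]
  | monomial m a =>
    rw [monomial_comp, neg_pow, ← C_1, ← C_neg, ← C_pow, coeff_C_mul, coeff_C_mul,
      coeff_X_pow, coeff_monomial]
    rcases eq_or_ne m k with rfl | h
    · simp; ring
    · rw [if_neg (Ne.symm h), if_neg h]; ring

open Polynomial in
lemma even_part' (p : Polynomial ℝ) (hp : p.comp (-Polynomial.X) = p) :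
    ∃ g : Polynomial ℝ, p = g.comp (Polynomial.X^2) := by
  refine ⟨∑ k ∈ Finset.range (p.natDegree + 1), Polynomial.C (p.coeff (2*k)) * Polynomial.X^k, ?_⟩
  have hodd : ∀ k, p.coeff (2*k+1) = 0 := by
    intro k
    have := coeff_comp_neg_X' p (2*k+1)
    rw [hp] at this
    have h2 : ((-1:ℝ))^(2*k+1) = -1 := Odd.neg_one_pow ⟨k, by ring⟩
    rw [h2] at this
    linarith
  have hcomp : (∑ k ∈ Finset.range (p.natDegree + 1),
      Polynomial.C (p.coeff (2*k)) * Polynomial.X^k).comp (Polynomial.X^2)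
      = ∑ k ∈ Finset.range (p.natDegree + 1), Polynomial.C (p.coeff (2*k)) * Polynomial.X^(2*k) := by
    rw [Polynomial.comp, Polynomial.eval₂_finset_sum]
    refine Finset.sum_congr rfl fun k _ => ?_
    rw [← Polynomial.comp, Polynomial.mul_comp, Polynomial.C_comp, Polynomial.X_pow_comp,
      ← pow_mul]
  rw [hcomp]
  ext m
  rw [Polynomial.finset_sum_coeff]
  simp only [Polynomial.coeff_C_mul, Polynomial.coeff_X_pow]
  rcases Nat.even_or_odd m with ⟨k, hk⟩ | ⟨k, hk⟩
  · have hk2 : m = 2*k := by omega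
    subst hk2
    rcases lt_or_ge k (p.natDegree + 1) with hlt | hge
    · rw [Finset.sum_eq_single k]
      · simp
      · intro b _ hb
        rw [if_neg (by omega), mul_zero]
      · intro h; exact absurd (Finset.mem_range.mpr hlt) h
    · have h0 : p.coeff (2*k) = 0 := Polynomial.coeff_eq_zero_of_natDegree_lt (by omega)
      rw [h0, Finset.sum_eq_zero]
      intro b hb
      have hb' := Finset.mem_range.mp hb
      rw [if_neg (by omega), mul_zero]
  · have hk2 : m = 2*k+1 := by omega
    subst hk2
    rw [hodd k, Finset.sum_eq_zero]
    intro b _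
    rw [if_neg (by omega), mul_zero]

lemma my_eval_charpoly {m : ℕ} (M : Matrix (Fin m) (Fin m) ℝ) (t : ℝ) :
    M.charpoly.eval t = (t • (1 : Matrix (Fin m) (Fin m) ℝ) - M).det := by
  rw [Matrix.charpoly, ← Polynomial.coe_evalRingHom, RingHom.map_det]
  congr 1
  ext i j
  rcases eq_or_ne i j with rfl | h
  · simp [Matrix.charmatrix_apply_eq, Matrix.one_apply]
  · simp [Matrix.charmatrix_apply_ne _ _ _ h, Matrix.one_apply_ne h, h]

/-- If `A` and `B` are skew-symmetric real `2n × 2n` matrices with `B² = -1`,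
then for `H := A²` and `K := AB + BA`, every real linear combination
`x • H + y • K` with `x ≠ 0` has characteristic polynomial a perfect square of a
monic polynomial; in particular all its eigenvalues have even multiplicity. -/
theorem skew_square_pencil_charpoly_is_square
    (n : ℕ) (hn : 1 ≤ n)
    (A B : Matrix (Fin (2 * n)) (Fin (2 * n)) ℝ)
    (hA : Aᵀ = -A) (hB : Bᵀ = -B) (hB2 : B * B = -1) :
    ∀ x y : ℝ, x ≠ 0 →
      ∃ g : Polynomial ℝ, g.Monic ∧
        (x • (A * A) + y • (A * B + B * A)).charpoly = g ^ 2 := by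
  intro x y hx
  set S : Matrix (Fin (2*n)) (Fin (2*n)) ℝ := x • A + y • B with hS
  have hSskew : Sᵀ = -S := by
    rw [hS, transpose_add, transpose_smul, transpose_smul, hA, hB]
    module
  have hSsq : S * S = (x*x) • (A*A) + (x*y) • (A*B) + (x*y) • (B*A) + (y*y) • (B*B) := by
    rw [hS]
    simp only [add_mul, mul_add, smul_mul_assoc, mul_smul_comm, smul_smul]
    module
  have hM : x • (A*A) + y • (A*B + B*A)
      = x⁻¹ • (S*S + (y*y) • (1 : Matrix (Fin (2*n)) (Fin (2*n)) ℝ)) := by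
    rw [hSsq, hB2]
    match_scalars <;> field_simp <;> ring
  have hdetneg : ∀ t : ℝ, (t • (1 : Matrix (Fin (2*n)) (Fin (2*n)) ℝ) + S).det
      = (t • (1 : Matrix (Fin (2*n)) (Fin (2*n)) ℝ) - S).det := by
    intro t
    conv_lhs => rw [← det_transpose, transpose_add, transpose_smul, transpose_one, hSskew]
    rw [← sub_eq_add_neg]
  have hpeven : S.charpoly.comp (-Polynomial.X) = S.charpoly := by
    apply Polynomial.funext
    intro t
    rw [Polynomial.eval_comp]
    simp only [Polynomial.eval_neg, Polynomial.eval_X]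
    rw [my_eval_charpoly, my_eval_charpoly]
    have hneg : (-t) • (1 : Matrix (Fin (2*n)) (Fin (2*n)) ℝ) - S = -(t • 1 + S) := by module
    rw [hneg, det_neg, Fintype.card_fin, Even.neg_one_pow ⟨n, by ring⟩, one_mul, hdetneg]
  obtain ⟨g0, hg0⟩ := even_part' S.charpoly hpeven
  have hq : (S*S).charpoly = g0^2 := by
    apply Polynomial.eq_of_infinite_eval_eq
    apply Set.Infinite.mono (s := Set.Ici (0:ℝ)) _ (Set.Ici_infinite 0)
    intro t ht
    have ht' : (0:ℝ) ≤ t := ht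
    set s := Real.sqrt t with hs
    have hss : s * s = t := Real.mul_self_sqrt ht'
    have hfac : (s • (1 : Matrix (Fin (2*n)) (Fin (2*n)) ℝ) - S) * (s • 1 + S)
        = t • 1 - S*S := by
      rw [← hss]
      simp only [sub_mul, mul_add, smul_mul_assoc, mul_smul_comm, smul_smul, one_mul, mul_one]
      module
    show (S*S).charpoly.eval t = (g0^2).eval t
    rw [my_eval_charpoly, ← hfac, det_mul, hdetneg, ← my_eval_charpoly, hg0]
    rw [Polynomial.eval_comp]
    simp only [Polynomial.eval_pow, Polynomial.eval_X]
    rw [sq, hss]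
    ring
  have key : ∀ t : ℝ,
      (x⁻¹ • (S*S + (y*y) • (1 : Matrix (Fin (2*n)) (Fin (2*n)) ℝ))).charpoly.eval t
      = (x⁻¹^(2*n)) * (g0.eval (x*t - y*y))^2 := by
    intro t
    rw [my_eval_charpoly]
    have hsm : t • (1 : Matrix (Fin (2*n)) (Fin (2*n)) ℝ) - x⁻¹ • (S*S + (y*y) • 1)
        = x⁻¹ • ((x*t - y*y) • 1 - S*S) := by
      match_scalars <;> field_simp <;> ring
    rw [hsm, det_smul, Fintype.card_fin, ← my_eval_charpoly, hq]
    simp [Polynomial.eval_pow]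
  set h : Polynomial ℝ :=
    Polynomial.C (x⁻¹^n) * g0.comp (Polynomial.C x * Polynomial.X - Polynomial.C (y*y)) with hh
  have hpow : (x⁻¹^n)^2 = x⁻¹^(2*n) := by rw [← pow_mul, Nat.mul_comm]
  have hsq : (x⁻¹ • (S*S + (y*y) • (1 : Matrix (Fin (2*n)) (Fin (2*n)) ℝ))).charpoly = h^2 := by
    apply Polynomial.funext
    intro t
    rw [key t, hh]
    simp only [Polynomial.eval_pow, Polynomial.eval_mul, Polynomial.eval_C,
      Polynomial.eval_comp, Polynomial.eval_sub, Polynomial.eval_X]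
    rw [mul_pow, hpow]
  have hmono : ((x⁻¹ • (S*S + (y*y) • (1 : Matrix (Fin (2*n)) (Fin (2*n)) ℝ))).charpoly).Monic :=
    Matrix.charpoly_monic _
  have hlc : h.leadingCoeff^2 = 1 := by
    have h1 : (h^2).leadingCoeff = 1 := by rw [← hsq]; exact hmono
    rwa [Polynomial.leadingCoeff_pow] at h1
  rcases mul_eq_zero.mp (show (h.leadingCoeff - 1) * (h.leadingCoeff + 1) = 0 by
      linear_combination hlc) with h1 | h1
  · refine ⟨h, ?_, ?_⟩
    · have : h.leadingCoeff = 1 := by linarith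
      exact this
    · rw [hM]; exact hsq
  · refine ⟨-h, ?_, ?_⟩
    · have : h.leadingCoeff = -1 := by linarith
      show (-h).leadingCoeff = 1
      rw [Polynomial.leadingCoeff_neg, this, neg_neg]
    · rw [hM, hsq, neg_pow]
      simp [Even.neg_one_pow (even_two)]
end

section
/- With A и B the matrices of Laffey-type family (see context), the matrix K := A * B + B * A is the block-diagonal matrix with i-th diagonal 2×2 block equal to −2(i+1)·I₂; that is, K (i,a) (j,b) = −2*(i+1) if (i,a) = (j,b) and 0 otherwise. -/
open Matrix

/-- The 2×2 matrix `α`. -/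
noncomputable def alphaM : Matrix (Fin 2) (Fin 2) ℝ := !![1, 0; 0, -1]

/-- The 2×2 matrix `β`. -/
noncomputable def betaM (b : ℝ) : Matrix (Fin 2) (Fin 2) ℝ := !![0, b; b, 0]

/-- The 2×2 matrix `U`. -/
noncomputable def uM : Matrix (Fin 2) (Fin 2) ℝ := !![0, -1; 1, 0]

/-- The strictly-upper 2-blocks of the Laffey-type family matrix `A`:
`blk A 0 3 = α + β`, `blk A 0 j = α` for the other `j > 0`,
`blk A 1 2 = blk A 1 3 = α`, and all other strictly-upper 2-blocks vanish. -/
noncomputable def upBlk (b : ℝ) (i j : ℕ) : Matrix (Fin 2) (Fin 2) ℝ :=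
  if i = 0 then (if j = 3 then alphaM + betaM b else alphaM)
  else if i = 1 ∧ (j = 2 ∨ j = 3) then alphaM
  else 0

/-- The Laffey-type family matrix `A`: skew-symmetric, with diagonal 2-blocks
`(i+1) • U` and strictly-upper 2-blocks given by `upBlk`. -/
noncomputable def laffeyA (n : ℕ) (b : ℝ) : Matrix (Fin n × Fin 2) (Fin n × Fin 2) ℝ :=
  Matrix.of fun p q =>
    if p.1 = q.1 then (((p.1 : ℕ) + 1) • uM) p.2 q.2
    else if (p.1 : ℕ) < (q.1 : ℕ) then upBlk b (p.1 : ℕ) (q.1 : ℕ) p.2 q.2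
    else (-(upBlk b (q.1 : ℕ) (p.1 : ℕ))ᵀ) p.2 q.2

/-- The matrix `B`: block diagonal with every diagonal 2-block equal to `U`. -/
noncomputable def laffeyB (n : ℕ) : Matrix (Fin n × Fin 2) (Fin n × Fin 2) ℝ :=
  Matrix.of fun p q => if p.1 = q.1 then uM p.2 q.2 else 0


lemma anti_up (b : ℝ) (i j : ℕ) :
    upBlk b i j * uM + uM * upBlk b i j = 0 := by
  unfold upBlk
  split_ifs <;>
    (ext a c; fin_cases a <;> fin_cases c <;>
      simp [alphaM, betaM, uM, Matrix.mul_apply, Fin.sum_univ_two] <;> ring)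

lemma anti_up' (b : ℝ) (i j : ℕ) :
    (-(upBlk b i j)ᵀ) * uM + uM * (-(upBlk b i j)ᵀ) = 0 := by
  unfold upBlk
  split_ifs <;>
    (ext a c; fin_cases a <;> fin_cases c <;>
      simp [alphaM, betaM, uM, Matrix.mul_apply, Fin.sum_univ_two,
        Matrix.transpose_apply, Matrix.neg_apply, Matrix.vecHead, Matrix.vecTail,
        Function.comp, Matrix.vecMul, dotProduct] <;> ring_nf)

lemma mulB (n : ℕ) (M : Matrix (Fin n × Fin 2) (Fin n × Fin 2) ℝ) (i j : Fin n) (a c : Fin 2) :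
    (M * laffeyB n) (i,a) (j,c) = ∑ d, M (i,a) (j,d) * uM d c := by
  rw [Matrix.mul_apply, Fintype.sum_prod_type]
  rw [Finset.sum_eq_single j]
  · simp [laffeyB]
  · intro k _ hk
    simp [laffeyB, hk]
  · simp

lemma Bmul (n : ℕ) (M : Matrix (Fin n × Fin 2) (Fin n × Fin 2) ℝ) (i j : Fin n) (a c : Fin 2) :
    (laffeyB n * M) (i,a) (j,c) = ∑ d, uM a d * M (i,d) (j,c) := by
  rw [Matrix.mul_apply, Fintype.sum_prod_type]
  rw [Finset.sum_eq_single i]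
  · simp [laffeyB]
  · intro k _ hk
    simp [laffeyB, hk.symm]
  · simp

/-- For the Laffey-type family, `K := AB + BA` is the block diagonal matrix whose
`i`-th diagonal 2×2 block is `-2(i+1) • I₂`. -/
theorem laffey_family_K_eq_block_diagonal
    (n : ℕ) (hn : 4 ≤ n) (b : ℝ) (hb : b ≠ 0) :
    ∀ p q : Fin n × Fin 2,
      (laffeyA n b * laffeyB n + laffeyB n * laffeyA n b) p q =
        if p = q then -2 * (((p.1 : ℕ) : ℝ) + 1) else 0 := by
  rintro ⟨i, a⟩ ⟨j, c⟩
  rw [Matrix.add_apply, mulB, Bmul]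
  have key : ∀ N : Matrix (Fin 2) (Fin 2) ℝ, N * uM + uM * N = 0 →
      (∀ x y : Fin 2, laffeyA n b (i,x) (j,y) = N x y) →
      (∑ d, laffeyA n b (i,a) (j,d) * uM d c) +
        (∑ d, uM a d * laffeyA n b (i,d) (j,c)) = 0 := by
    intro N h hN
    have h2 := congrFun (congrFun h a) c
    simp only [Matrix.add_apply, Matrix.mul_apply, Matrix.zero_apply] at h2
    simp only [hN]
    exact h2
  by_cases hij : i = j
  · subst hij
    simp only [Prod.mk.injEq, true_and]
    have hA : ∀ x y : Fin 2, laffeyA n b (i,x) (i,y) = (((i:ℕ)+1 : ℕ) : ℝ) * uM x y := by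
      intro x y
      simp [laffeyA, Matrix.smul_apply, nsmul_eq_mul]
    simp only [hA]
    fin_cases a <;> fin_cases c <;>
      simp [uM, Fin.sum_univ_two] <;> push_cast <;> ring
  · have hij' : ¬ ((i,a) = (j,c)) := by simp [Prod.ext_iff, hij]
    rw [if_neg hij']
    rcases lt_or_gt_of_ne (fun h => hij (Fin.ext h) : (i:ℕ) ≠ (j:ℕ)) with hlt | hgt
    · refine key (upBlk b i j) (anti_up b i j) (fun x y => ?_)
      show (Matrix.of _ : Matrix _ _ ℝ) _ _ = _
      rw [Matrix.of_apply]
      simp only []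
      rw [if_neg hij, if_pos hlt]
    · refine key (-(upBlk b j i)ᵀ) (anti_up' b j i) (fun x y => ?_)
      show (Matrix.of _ : Matrix _ _ ℝ) _ _ = _
      rw [Matrix.of_apply]
      simp only []
      rw [if_neg hij, if_neg (not_lt.mpr hgt.le)]
end

section
/- With A and B the matrices of the Laffey-type family (see context), set H := A * A and K := A * B + B * A (both real symmetric 2n×2n matrices). Then for all x, y : ℝ, every eigenvalue of x • H + y • K has even multiplicity; precisely, there exists a monic polynomial g ∈ Polynomial ℝ such that (x • H + y • K).charpoly = g ^ 2. -/
open Matrix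

namespace LaffeyAux

open Polynomial
open scoped Kronecker

/-! ### Polynomial lemmas -/

variable {ι : Type*} [Fintype ι] [DecidableEq ι]

lemma charpoly_comp (M : Matrix ι ι ℝ) (t : ℝ[X]) :
    M.charpoly.comp t
      = (Matrix.scalar ι t - M.map (C : ℝ → ℝ[X])).det := by
  have hmap : (charmatrix M).map (eval₂RingHom (C : ℝ →+* ℝ[X]) t)
      = Matrix.scalar ι t - M.map (C : ℝ → ℝ[X]) := by
    refine Matrix.ext fun i j => ?_
    by_cases hij : i = j
    · subst hij
      simp [charmatrix_apply_eq, Matrix.scalar_apply, Matrix.sub_apply]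
    · simp [charmatrix_apply_ne _ _ _ hij, Matrix.scalar_apply, Matrix.sub_apply,
        Matrix.diagonal_apply_ne _ hij]
  have h := RingHom.map_det (eval₂RingHom (C : ℝ →+* ℝ[X]) t) (charmatrix M)
  rw [RingHom.mapMatrix_apply, hmap] at h
  rw [← h]
  rfl

lemma charpoly_smul_add_smul_one (M : Matrix ι ι ℝ) {a : ℝ} (ha : a ≠ 0) (c : ℝ)
    {q : ℝ[X]} (hq : q.Monic) (h : M.charpoly = q ^ 2) :
    ∃ g : ℝ[X], g.Monic ∧ (a • M + c • (1 : Matrix ι ι ℝ)).charpoly = g ^ 2 := by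
  have ha' : a⁻¹ ≠ 0 := inv_ne_zero ha
  set t : ℝ[X] := C a⁻¹ * X + C (-(a⁻¹ * c)) with ht
  have key : (a • M + c • (1 : Matrix ι ι ℝ)).charpoly
      = C a ^ Fintype.card ι * (M.charpoly.comp t) := by
    have hmat : charmatrix (a • M + c • (1 : Matrix ι ι ℝ))
        = (C a : ℝ[X]) • (Matrix.scalar ι t - M.map (C : ℝ → ℝ[X])) := by
      refine Matrix.ext fun i j => ?_
      by_cases hij : i = j
      · subst hij
        have h1 : a * a⁻¹ = 1 := mul_inv_cancel₀ ha
        have h2 : a * -(a⁻¹ * c) = -c := by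
          rw [mul_neg, ← mul_assoc, h1, one_mul]
        simp only [charmatrix_apply_eq, Matrix.add_apply, Matrix.smul_apply,
          Matrix.one_apply_eq, Matrix.scalar_apply, Matrix.sub_apply,
          Matrix.diagonal_apply_eq, Matrix.map_apply, smul_eq_mul, ht]
        rw [mul_sub, mul_add, ← mul_assoc, ← C_mul, h1, C_1, one_mul, ← C_mul, h2,
          ← C_mul, mul_one, C_add, C_neg]
        ring
      · simp only [charmatrix_apply_ne _ _ _ hij, Matrix.add_apply, Matrix.smul_apply,
          Matrix.one_apply_ne hij, Matrix.scalar_apply, Matrix.sub_apply,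
          Matrix.diagonal_apply_ne _ hij, Matrix.map_apply, smul_eq_mul, mul_zero, add_zero,
          zero_sub, mul_neg, ← C_mul]
    rw [Matrix.charpoly, hmat, Matrix.det_smul, charpoly_comp]
  have hdim : Fintype.card ι = q.natDegree * 2 := by
    have h1 := M.charpoly_natDegree_eq_dim
    rw [h, natDegree_pow] at h1
    omega
  have htdeg : t.natDegree = 1 := natDegree_linear ha'
  have htlead : t.leadingCoeff = a⁻¹ := leadingCoeff_linear ha'
  refine ⟨C a ^ q.natDegree * (q.comp t), ?_, ?_⟩
  · have hlc : (q.comp t).leadingCoeff = a⁻¹ ^ q.natDegree := by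
      rw [leadingCoeff_comp (by omega), hq.leadingCoeff, one_mul, htlead]
    have : (C a ^ q.natDegree * q.comp t).leadingCoeff
        = a ^ q.natDegree * (a⁻¹) ^ q.natDegree := by
      rw [leadingCoeff_mul, leadingCoeff_pow, leadingCoeff_C, hlc]
    rw [Polynomial.Monic, this, ← mul_pow, mul_inv_cancel₀ ha, one_pow]
  · rw [key, h, pow_comp, mul_pow, ← pow_mul, ← hdim]

lemma coeff_comp_neg_X (p : ℝ[X]) (k : ℕ) :
    (p.comp (-X)).coeff k = (-1) ^ k * p.coeff k := by
  induction p using Polynomial.induction_on' with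
  | add p q hp hq => simp only [add_comp, coeff_add, hp, hq]; ring
  | monomial m a =>
    have key : C a * (-X : ℝ[X]) ^ m = C ((-1 : ℝ) ^ m * a) * X ^ m := by
      rw [C_mul, map_pow, C_neg, C_1, neg_pow]
      ring
    rw [monomial_comp, key, coeff_C_mul, coeff_X_pow, coeff_monomial]
    by_cases hm : m = k
    · subst hm
      simp [mul_comm]
    · simp [hm, Ne.symm hm]

lemma expand_two_of_even {p : ℝ[X]} (hodd : ∀ k, ¬ 2 ∣ k → p.coeff k = 0) :
    Polynomial.expand ℝ 2 (p.contract 2) = p := by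
  ext k
  rw [coeff_expand (by norm_num : 0 < 2)]
  split_ifs with h
  · rw [coeff_contract two_ne_zero, Nat.div_mul_cancel h]
  · exact (hodd k h).symm

lemma charpoly_sq_of_skew (hcard : Even (Fintype.card ι)) {S : Matrix ι ι ℝ}
    (hS : Sᵀ = -S) :
    ∃ q : ℝ[X], q.Monic ∧ (S * S).charpoly = q ^ 2 := by
  set p := S.charpoly with hp
  have hpm : p.Monic := S.charpoly_monic
  have hpd : p.natDegree = Fintype.card ι := S.charpoly_natDegree_eq_dim
  have hchar : charmatrix S
      = Matrix.scalar ι (X : ℝ[X]) - S.map (C : ℝ → ℝ[X]) := by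
    rw [charmatrix, RingHom.mapMatrix_apply]
  have hZt : (S.map (C : ℝ → ℝ[X]))ᵀ = -(S.map (C : ℝ → ℝ[X])) := by
    rw [← Matrix.transpose_map, hS]
    exact Matrix.ext fun i j => by
      simp [Matrix.map_apply, Matrix.neg_apply]
  have hWt : (Matrix.scalar ι (X : ℝ[X]))ᵀ = Matrix.scalar ι (X : ℝ[X]) := by
    rw [Matrix.scalar_apply, Matrix.diagonal_transpose]
  have hdetZ : (Matrix.scalar ι (X : ℝ[X]) + S.map (C : ℝ → ℝ[X])).det = p := by
    have htr : (Matrix.scalar ι (X : ℝ[X]) + S.map (C : ℝ → ℝ[X]))ᵀ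
        = Matrix.scalar ι (X : ℝ[X]) - S.map (C : ℝ → ℝ[X]) := by
      rw [Matrix.transpose_add, hZt, hWt, sub_eq_add_neg]
    rw [← Matrix.det_transpose, htr, ← hchar, ← Matrix.charpoly]
  have h1 : (S * S).charpoly.comp ((X : ℝ[X]) ^ 2) = p ^ 2 := by
    rw [charpoly_comp]
    have hmul : Matrix.scalar ι ((X : ℝ[X]) ^ 2) - (S * S).map (C : ℝ → ℝ[X])
        = (Matrix.scalar ι (X : ℝ[X]) - S.map (C : ℝ → ℝ[X]))
          * (Matrix.scalar ι (X : ℝ[X]) + S.map (C : ℝ → ℝ[X])) := by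
      have hWZ : Matrix.scalar ι (X : ℝ[X]) * S.map (C : ℝ → ℝ[X])
          = S.map (C : ℝ → ℝ[X]) * Matrix.scalar ι (X : ℝ[X]) :=
        (Matrix.scalar_commute (X : ℝ[X]) (fun r => Commute.all _ r) _).eq
      have hm : (S * S).map (C : ℝ → ℝ[X])
          = S.map (C : ℝ → ℝ[X]) * S.map (C : ℝ → ℝ[X]) := Matrix.map_mul
      have hsc : Matrix.scalar ι ((X : ℝ[X]) ^ 2)
          = Matrix.scalar ι (X : ℝ[X]) * Matrix.scalar ι (X : ℝ[X]) := by
        rw [pow_two, _root_.map_mul]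
      rw [hm, hsc, sub_mul, mul_add, mul_add, hWZ]
      abel
    rw [hmul, Matrix.det_mul, hdetZ, ← hchar, ← Matrix.charpoly, ← hp, pow_two]
  have hsq : (p.comp (-X)) ^ 2 = p ^ 2 := by
    have h2 : (p ^ 2).comp (-X) = p ^ 2 := by
      rw [← h1, comp_assoc]
      congr 1
      rw [pow_comp, X_comp, neg_pow, neg_one_sq, one_mul]
    rw [← pow_comp, h2]
  have heq : p.comp (-X) = p := by
    have h0 : (p.comp (-X) + p) * (p.comp (-X) - p) = 0 := by
      rw [← sq_sub_sq, hsq, sub_self]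
    rcases mul_eq_zero.mp h0 with h | h
    · exfalso
      have hcomp : (p.comp (-X)).leadingCoeff = 1 := by
        rw [leadingCoeff_comp (by simp : (-X : ℝ[X]).natDegree ≠ 0), hpm.leadingCoeff,
          one_mul, leadingCoeff_neg, leadingCoeff_X, hpd, hcard.neg_one_pow]
      have hneg : p.comp (-X) = -p := add_eq_zero_iff_eq_neg.mp h
      rw [hneg, leadingCoeff_neg, hpm.leadingCoeff] at hcomp
      norm_num at hcomp
    · exact sub_eq_zero.mp h
  have hodd : ∀ k, ¬ 2 ∣ k → p.coeff k = 0 := by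
    intro k hk
    have hO : Odd k := Nat.odd_iff.mpr (by omega)
    have h2 := coeff_comp_neg_X p k
    rw [heq, hO.neg_one_pow] at h2
    linarith
  set q := p.contract 2 with hqdef
  have hexp : Polynomial.expand ℝ 2 q = p := expand_two_of_even hodd
  have hinj := Polynomial.expand_injective (R := ℝ) (n := 2) (by norm_num)
  refine ⟨q, ?_, ?_⟩
  · have hnd : p.natDegree = q.natDegree * 2 := by rw [← hexp, natDegree_expand]
    have : q.leadingCoeff = 1 := by
      rw [Polynomial.leadingCoeff, hqdef, coeff_contract two_ne_zero, ← hnd]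
      exact hpm.coeff_natDegree
    exact this
  · apply hinj
    rw [map_pow, hexp]
    calc Polynomial.expand ℝ 2 ((S * S).charpoly)
        = (S * S).charpoly.comp ((X : ℝ[X]) ^ 2) := by rw [expand_eq_comp_X_pow]
      _ = p ^ 2 := h1

/-! ### Diagonal matrices -/

lemma charpoly_diag (d : ι → ℝ) :
    (Matrix.diagonal d).charpoly = ∏ i, ((X : ℝ[X]) - C (d i)) := by
  rw [Matrix.charpoly]
  have : charmatrix (Matrix.diagonal d)
      = Matrix.diagonal (fun i => (X : ℝ[X]) - C (d i)) := by
    refine Matrix.ext fun i j => ?_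
    by_cases hij : i = j
    · subst hij; simp
    · simp [charmatrix_apply_ne _ _ _ hij, Matrix.diagonal_apply_ne _ hij]
  rw [this, Matrix.det_diagonal]

/-! ### Structure of the Laffey matrices -/

noncomputable def pEnt (i j : ℕ) : ℝ :=
  if i < j ∧ (i = 0 ∨ (i = 1 ∧ (j = 2 ∨ j = 3))) then 1 else 0

noncomputable def qEnt (i j : ℕ) : ℝ :=
  if i < j ∧ i = 0 ∧ j = 3 then 1 else 0

lemma pEnt_zero {i j : ℕ} (h : ¬ i < j) : pEnt i j = 0 := by
  rw [pEnt, if_neg (by tauto)]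

lemma qEnt_zero {i j : ℕ} (h : ¬ i < j) : qEnt i j = 0 := by
  rw [qEnt, if_neg (by tauto)]

noncomputable def pMat (n : ℕ) : Matrix (Fin n) (Fin n) ℝ :=
  Matrix.of fun i j => pEnt i j - pEnt j i

noncomputable def qMat (n : ℕ) : Matrix (Fin n) (Fin n) ℝ :=
  Matrix.of fun i j => qEnt i j - qEnt j i

noncomputable def dMat (n : ℕ) : Matrix (Fin n) (Fin n) ℝ :=
  Matrix.diagonal fun i => (i : ℝ) + 1

lemma upBlk_eq {b : ℝ} {i j : ℕ} (h : i < j) :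
    upBlk b i j = pEnt i j • alphaM + qEnt i j • betaM b := by
  unfold upBlk pEnt qEnt
  split_ifs with h1 h2 h3 h4 h5 h6 h7 h8 <;> simp_all

/-- 2×2 facts -/
lemma uM_mul_uM : uM * uM = -1 := by
  ext a c
  fin_cases a <;> fin_cases c <;>
    simp [uM, Matrix.mul_apply, Fin.sum_univ_two, Matrix.one_apply]

lemma uM_transpose : uMᵀ = -uM := by
  ext a c
  fin_cases a <;> fin_cases c <;> simp [uM]

lemma alphaM_transpose : alphaMᵀ = alphaM := by
  ext a c
  fin_cases a <;> fin_cases c <;> simp [alphaM]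

lemma betaM_transpose (b : ℝ) : (betaM b)ᵀ = betaM b := by
  ext a c
  fin_cases a <;> fin_cases c <;> simp [betaM]

lemma alphaM_anticomm : alphaM * uM + uM * alphaM = 0 := by
  ext a c
  fin_cases a <;> fin_cases c <;>
    simp [alphaM, uM, Matrix.mul_apply, Fin.sum_univ_two]

lemma betaM_anticomm (b : ℝ) : betaM b * uM + uM * betaM b = 0 := by
  ext a c
  fin_cases a <;> fin_cases c <;>
    simp [betaM, uM, Matrix.mul_apply, Fin.sum_univ_two]

lemma laffeyB_eq (n : ℕ) :
    laffeyB n = (1 : Matrix (Fin n) (Fin n) ℝ) ⊗ₖ uM := by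
  ext ⟨i, a⟩ ⟨j, c⟩
  by_cases hij : i = j
  · subst hij; simp [laffeyB, Matrix.one_apply]
  · simp [laffeyB, Matrix.one_apply, hij]

lemma laffeyA_eq (n : ℕ) (b : ℝ) :
    laffeyA n b = dMat n ⊗ₖ uM + pMat n ⊗ₖ alphaM + qMat n ⊗ₖ betaM b := by
  ext ⟨i, a⟩ ⟨j, c⟩
  rcases lt_trichotomy (i : ℕ) (j : ℕ) with hij | hij | hij
  · have hne : i ≠ j := by
      intro hcon; rw [hcon] at hij; exact lt_irrefl _ hij
    simp only [laffeyA, Matrix.of_apply, Matrix.add_apply, kroneckerMap_apply,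
      if_neg hne, if_pos hij, dMat, Matrix.diagonal_apply_ne _ hne, zero_mul, zero_add,
      pMat, qMat]
    rw [upBlk_eq hij]
    rw [pEnt_zero (by omega : ¬ (j:ℕ) < (i:ℕ)), qEnt_zero (by omega : ¬ (j:ℕ) < (i:ℕ))]
    simp only [Matrix.add_apply, Matrix.smul_apply, smul_eq_mul, sub_zero]
  · have heq : i = j := Fin.ext hij
    subst heq
    simp only [laffeyA, Matrix.of_apply, if_pos rfl, Matrix.add_apply, kroneckerMap_apply,
      dMat, Matrix.diagonal_apply_eq, pMat, qMat, sub_self, zero_mul, add_zero,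
      Matrix.smul_apply]
    push_cast
    ring
  · have hne : i ≠ j := by
      intro hcon; rw [hcon] at hij; exact lt_irrefl _ hij
    have hnlt : ¬ ((i : ℕ) < (j : ℕ)) := by omega
    simp only [laffeyA, Matrix.of_apply, if_neg hne, if_neg hnlt, Matrix.add_apply,
      kroneckerMap_apply, dMat, Matrix.diagonal_apply_ne _ hne, zero_mul, zero_add,
      pMat, qMat, Matrix.neg_apply, Matrix.transpose_apply]
    rw [upBlk_eq hij]
    rw [pEnt_zero (by omega : ¬ (i:ℕ) < (j:ℕ)), qEnt_zero (by omega : ¬ (i:ℕ) < (j:ℕ))]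
    have ha : alphaM c a = alphaM a c := by
      have := congrFun (congrFun alphaM_transpose a) c
      simpa [Matrix.transpose_apply] using this
    have hbeta : betaM b c a = betaM b a c := by
      have := congrFun (congrFun (betaM_transpose b) a) c
      simpa [Matrix.transpose_apply] using this
    simp [Matrix.smul_apply, smul_eq_mul, ha, hbeta]
    ring

lemma pMat_transpose (n : ℕ) : (pMat n)ᵀ = -(pMat n) := by
  ext i j
  simp [pMat, Matrix.transpose_apply, Matrix.neg_apply]

lemma qMat_transpose (n : ℕ) : (qMat n)ᵀ = -(qMat n) := by
  ext i j
  simp [qMat, Matrix.transpose_apply, Matrix.neg_apply]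

lemma kron_neg_right {m' n' : Type*} (A : Matrix m' m' ℝ) (B : Matrix n' n' ℝ) :
    A ⊗ₖ (-B) = -(A ⊗ₖ B) := by
  ext ⟨i, a⟩ ⟨j, c⟩
  simp [mul_neg]

lemma neg_kron {m' n' : Type*} (A : Matrix m' m' ℝ) (B : Matrix n' n' ℝ) :
    (-A) ⊗ₖ B = -(A ⊗ₖ B) := by
  ext ⟨i, a⟩ ⟨j, c⟩
  simp [neg_mul]

lemma laffeyA_skew (n : ℕ) (b : ℝ) : (laffeyA n b)ᵀ = -(laffeyA n b) := by
  rw [laffeyA_eq]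
  rw [Matrix.transpose_add, Matrix.transpose_add,
    ← Matrix.kroneckerMap_transpose, ← Matrix.kroneckerMap_transpose,
    ← Matrix.kroneckerMap_transpose]
  rw [show (dMat n)ᵀ = dMat n from Matrix.diagonal_transpose _, uM_transpose,
    pMat_transpose, qMat_transpose, alphaM_transpose, betaM_transpose,
    kron_neg_right, neg_kron, neg_kron]
  abel

lemma laffeyB_skew (n : ℕ) : (laffeyB n)ᵀ = -(laffeyB n) := by
  rw [laffeyB_eq, ← Matrix.kroneckerMap_transpose, Matrix.transpose_one, uM_transpose,
    kron_neg_right]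

lemma laffeyB_sq (n : ℕ) : laffeyB n * laffeyB n = -1 := by
  rw [laffeyB_eq, ← Matrix.mul_kronecker_mul, one_mul, uM_mul_uM, kron_neg_right,
    Matrix.one_kronecker_one]

lemma laffeyK_eq (n : ℕ) (b : ℝ) :
    laffeyA n b * laffeyB n + laffeyB n * laffeyA n b
      = Matrix.diagonal (fun p : Fin n × Fin 2 => -2 * ((p.1 : ℝ) + 1)) := by
  rw [laffeyA_eq, laffeyB_eq]
  rw [add_mul, add_mul, mul_add, mul_add]
  rw [← Matrix.mul_kronecker_mul, ← Matrix.mul_kronecker_mul, ← Matrix.mul_kronecker_mul,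
    ← Matrix.mul_kronecker_mul, ← Matrix.mul_kronecker_mul, ← Matrix.mul_kronecker_mul]
  simp only [one_mul, mul_one]
  have hre : dMat n ⊗ₖ (uM * uM) + pMat n ⊗ₖ (alphaM * uM) + qMat n ⊗ₖ (betaM b * uM)
        + (dMat n ⊗ₖ (uM * uM) + pMat n ⊗ₖ (uM * alphaM) + qMat n ⊗ₖ (uM * betaM b))
      = dMat n ⊗ₖ (uM * uM) + dMat n ⊗ₖ (uM * uM)
        + (pMat n ⊗ₖ (alphaM * uM + uM * alphaM))
        + (qMat n ⊗ₖ (betaM b * uM + uM * betaM b)) := by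
    rw [Matrix.kronecker_add, Matrix.kronecker_add]
    abel
  rw [hre, alphaM_anticomm, betaM_anticomm, Matrix.kronecker_zero, Matrix.kronecker_zero,
    add_zero, add_zero, uM_mul_uM, kron_neg_right]
  have h1 : dMat n ⊗ₖ (1 : Matrix (Fin 2) (Fin 2) ℝ)
      = Matrix.diagonal (fun p : Fin n × Fin 2 => (p.1 : ℝ) + 1) := by
    rw [dMat, ← Matrix.diagonal_one, Matrix.diagonal_kronecker_diagonal]
    exact congrArg Matrix.diagonal (funext fun p => mul_one _)
  rw [h1]
  refine Matrix.ext fun p q => ?_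
  by_cases h : p = q
  · subst h
    simp [Matrix.diagonal_apply_eq]
    ring
  · simp [Matrix.diagonal_apply_ne _ h]

end LaffeyAux

/-- For the Laffey-type family, with `H := A²` and `K := AB + BA`, every real
linear combination `x • H + y • K` has characteristic polynomial a perfect
square of a monic polynomial; in particular all its eigenvalues have even
multiplicity. -/
theorem laffey_family_pencil_charpoly_is_square
    (n : ℕ) (hn : 4 ≤ n) (b : ℝ) (hb : b ≠ 0) :
    ∀ x y : ℝ,
      ∃ g : Polynomial ℝ, g.Monic ∧
        (x • (laffeyA n b * laffeyA n b) +
          y • (laffeyA n b * laffeyB n + laffeyB n * laffeyA n b)).charpoly = g ^ 2 := by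
  intro x y
  open Polynomial LaffeyAux in
  by_cases hx : x = 0
  · subst hx
    rw [zero_smul, zero_add, laffeyK_eq n b]
    have hsd : y • Matrix.diagonal (fun p : Fin n × Fin 2 => -2 * ((p.1 : ℝ) + 1))
        = Matrix.diagonal (fun p : Fin n × Fin 2 => y * (-2 * ((p.1 : ℝ) + 1))) := by
      refine Matrix.ext fun p q => ?_
      by_cases h : p = q
      · subst h; simp
      · simp [Matrix.diagonal_apply_ne _ h]
    rw [hsd, charpoly_diag, Fintype.prod_prod_type]
    refine ⟨∏ i : Fin n, ((X : Polynomial ℝ) - C (y * (-2 * ((i : ℝ) + 1)))), ?_, ?_⟩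
    · exact monic_prod_of_monic _ _ fun i _ => monic_X_sub_C _
    · rw [← Finset.prod_pow]
      congr 1
      funext i
      rw [Fin.prod_univ_two]
      ring
  · -- x ≠ 0
    set A := laffeyA n b with hA
    set B := laffeyB n with hB
    set t : ℝ := y / x with htdef
    set Cm : Matrix (Fin n × Fin 2) (Fin n × Fin 2) ℝ := A + t • B with hCm
    have hskew : Cmᵀ = -Cm := by
      rw [hCm, Matrix.transpose_add, Matrix.transpose_smul, laffeyA_skew, laffeyB_skew,
        smul_neg, neg_add]
    have hBB : B * B = -1 := laffeyB_sq n
    have hexp : Cm * Cm = A * A + t • (A * B + B * A) + (t * t) • (B * B) := by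
      rw [hCm]
      simp only [add_mul, mul_add, Matrix.smul_mul, Matrix.mul_smul, smul_smul, smul_add]
      abel
    have hxt : x * t = y := by
      rw [htdef]
      field_simp
    have hxtt : x * (t * t) = y ^ 2 / x := by
      rw [htdef]; field_simp
    have key : x • (A * A) + y • (A * B + B * A)
        = x • (Cm * Cm) + (y ^ 2 / x) • (1 : Matrix (Fin n × Fin 2) (Fin n × Fin 2) ℝ) := by
      rw [hexp, hBB]
      simp only [smul_add, smul_smul, smul_neg]
      rw [hxt, hxtt]
      abel
    have hcard : Even (Fintype.card (Fin n × Fin 2)) := by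
      simp only [Fintype.card_prod, Fintype.card_fin]
      exact ⟨n, by ring⟩
    obtain ⟨q, hq, hq2⟩ := charpoly_sq_of_skew hcard hskew
    rw [key]
    exact charpoly_smul_add_smul_one (Cm * Cm) hx (y ^ 2 / x) hq hq2
end

section
/- With A and B the matrices of the Laffey-type family (see context), set H := A * A and K := A * B + B * A, and let H' and K' be the complex matrices obtained by mapping the entries of H and K along the inclusion ℝ → ℂ. Then H' and K' generate the full matrix algebra: Algebra.adjoin ℂ {H', K'} = ⊤ in Matrix (Fin n × Fin 2) (Fin n × Fin 2) ℂ. (Together with the even-multiplicity property of the eigenvalues of x • H + y • K, this gives a one-parameter family of counterexamples to Kippenhahn's conjecture in every even size 2n ≥ 8.) -/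
open Matrix

namespace Laffey

open Matrix Finset

lemma uM_transpose : uMᵀ = -uM := by
  ext a c; fin_cases a <;> fin_cases c <;> simp [uM]

/-- block function on ℕ indices -/
noncomputable def blkA (b : ℝ) (i j : ℕ) : Matrix (Fin 2) (Fin 2) ℝ :=
  if i = j then (i + 1 : ℕ) • uM
  else if i < j then upBlk b i j
  else -(upBlk b j i)ᵀ

lemma laffeyA_apply (n : ℕ) (b : ℝ) (p q : Fin n × Fin 2) :
    laffeyA n b p q = blkA b (p.1 : ℕ) (q.1 : ℕ) p.2 q.2 := by
  unfold laffeyA blkA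
  simp only [Matrix.of_apply]
  rcases eq_or_ne p.1 q.1 with h | h
  · rw [if_pos h, if_pos (by exact_mod_cast congrArg Fin.val h)]
  · rw [if_neg h, if_neg (fun hc => h (Fin.val_injective hc))]
    rcases lt_or_gt_of_ne (fun hc => h (Fin.val_injective hc)) with h2 | h2
    · rw [if_pos h2, if_pos h2]
    · rw [if_neg (by omega), if_neg (by omega)]

lemma blkA_skew (b : ℝ) (i j : ℕ) : blkA b j i = -(blkA b i j)ᵀ := by
  unfold blkA
  rcases lt_trichotomy i j with h | h | h
  · rw [if_neg (by omega), if_neg (by omega), if_pos h, if_neg (by omega)]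
  · subst h
    rw [if_pos rfl, transpose_smul, uM_transpose, smul_neg, neg_neg]
  · rw [if_neg (by omega), if_pos h, if_neg (by omega), if_neg (by omega),
      transpose_neg, transpose_transpose, neg_neg]

lemma laffeyA_skew (n : ℕ) (b : ℝ) (p q : Fin n × Fin 2) :
    laffeyA n b q p = -laffeyA n b p q := by
  simp only [laffeyA_apply]
  rw [blkA_skew b p.1 q.1]
  simp

/-- anticommutation with U -/
lemma alpha_anti : alphaM * uM + uM * alphaM = 0 := by
  ext a c; fin_cases a <;> fin_cases c <;>
    simp [alphaM, uM, Matrix.mul_apply, Fin.sum_univ_two]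

lemma beta_anti (b : ℝ) : betaM b * uM + uM * betaM b = 0 := by
  ext a c; fin_cases a <;> fin_cases c <;>
    simp [betaM, uM, Matrix.mul_apply, Fin.sum_univ_two]

lemma upBlk_anti (b : ℝ) (i j : ℕ) : upBlk b i j * uM + uM * upBlk b i j = 0 := by
  unfold upBlk
  split_ifs with h1 h2 h3
  · rw [add_mul, mul_add,
      show alphaM * uM + betaM b * uM + (uM * alphaM + uM * betaM b)
        = (alphaM * uM + uM * alphaM) + (betaM b * uM + uM * betaM b) from by abel,
      alpha_anti, beta_anti, add_zero]
  · exact alpha_anti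
  · exact alpha_anti
  · simp

lemma anti_transpose {M : Matrix (Fin 2) (Fin 2) ℝ}
    (h : M * uM + uM * M = 0) : (-Mᵀ) * uM + uM * (-Mᵀ) = 0 := by
  have hu := uM_transpose
  have h2 := congrArg Matrix.transpose h
  rw [transpose_add, transpose_mul, transpose_mul, hu, transpose_zero,
    neg_mul, mul_neg] at h2
  rw [neg_mul, mul_neg, add_comm]
  exact h2

lemma blkA_anti (b : ℝ) (i j : ℕ) (h : i ≠ j) :
    blkA b i j * uM + uM * blkA b i j = 0 := by
  unfold blkA
  rw [if_neg h]
  split_ifs with h2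
  · exact upBlk_anti b i j
  · exact anti_transpose (upBlk_anti b j i)

end Laffey
namespace Laffey
open Matrix Finset Polynomial

variable {n : ℕ} {b : ℝ}

lemma uM_sq : uM * uM = -1 := by
  ext a c; fin_cases a <;> fin_cases c <;>
    simp [uM, Matrix.mul_apply, Fin.sum_univ_two]

lemma mulB_apply (n : ℕ) (b : ℝ) (p q : Fin n × Fin 2) :
    (laffeyA n b * laffeyB n) p q = (blkA b (p.1 : ℕ) (q.1 : ℕ) * uM) p.2 q.2 := by
  rw [Matrix.mul_apply, Fintype.sum_prod_type]
  have h : ∀ k : Fin n, ∑ c : Fin 2, laffeyA n b p (k, c) * laffeyB n (k, c) q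
      = if k = q.1 then (blkA b (p.1 : ℕ) (q.1 : ℕ) * uM) p.2 q.2 else 0 := by
    intro k
    rcases eq_or_ne k q.1 with h | h
    · subst h
      rw [if_pos rfl, Matrix.mul_apply]
      refine Finset.sum_congr rfl fun c _ => ?_
      rw [laffeyA_apply]
      simp [laffeyB]
    · rw [if_neg h]
      refine Finset.sum_eq_zero fun c _ => ?_
      simp [laffeyB, h]
  rw [Finset.sum_congr rfl fun k _ => h k]
  simp

lemma Bmul_apply (n : ℕ) (b : ℝ) (p q : Fin n × Fin 2) :
    (laffeyB n * laffeyA n b) p q = (uM * blkA b (p.1 : ℕ) (q.1 : ℕ)) p.2 q.2 := by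
  rw [Matrix.mul_apply, Fintype.sum_prod_type]
  have h : ∀ k : Fin n, ∑ c : Fin 2, laffeyB n p (k, c) * laffeyA n b (k, c) q
      = if p.1 = k then (uM * blkA b (p.1 : ℕ) (q.1 : ℕ)) p.2 q.2 else 0 := by
    intro k
    rcases eq_or_ne p.1 k with h | h
    · subst h
      rw [if_pos rfl, Matrix.mul_apply]
      refine Finset.sum_congr rfl fun c _ => ?_
      rw [laffeyA_apply]
      simp [laffeyB]
    · rw [if_neg h]
      refine Finset.sum_eq_zero fun c _ => ?_
      simp [laffeyB, h]
  rw [Finset.sum_congr rfl fun k _ => h k]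
  simp

lemma K_eq (n : ℕ) (b : ℝ) :
    laffeyA n b * laffeyB n + laffeyB n * laffeyA n b
      = diagonal (fun p : Fin n × Fin 2 => (-2 * ((p.1 : ℕ) + 1) : ℝ)) := by
  ext p q
  rw [Matrix.add_apply, mulB_apply, Bmul_apply]
  rcases eq_or_ne p.1 q.1 with h | h
  · have hv : (p.1 : ℕ) = (q.1 : ℕ) := congrArg Fin.val h
    rw [← Matrix.add_apply, show blkA b (p.1 : ℕ) (q.1 : ℕ) = ((p.1 : ℕ) + 1) • uM from by
      rw [← hv]; unfold blkA; rw [if_pos rfl]]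
    rw [smul_mul_assoc, mul_smul_comm, ← smul_add, ← two_smul ℝ, uM_sq]
    rcases eq_or_ne p.2 q.2 with h2 | h2
    · have : p = q := Prod.ext h h2
      subst this
      simp [diagonal_apply_eq]
      push_cast
      ring
    · have hpq : p ≠ q := fun hc => h2 (congrArg Prod.snd hc)
      rw [diagonal_apply_ne _ hpq]
      simp [Matrix.smul_apply, Matrix.one_apply_ne h2]
  · have hv : (p.1 : ℕ) ≠ (q.1 : ℕ) := fun hc => h (Fin.val_injective hc)
    rw [← Matrix.add_apply, blkA_anti b _ _ hv,
      diagonal_apply_ne _ (fun hc => h (congrArg Prod.fst hc))]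
    simp

/-- block-supported complex matrices -/
noncomputable def eB (n : ℕ) (i j : Fin n) (m : Matrix (Fin 2) (Fin 2) ℂ) :
    Matrix (Fin n × Fin 2) (Fin n × Fin 2) ℂ :=
  Matrix.of fun p q => if p.1 = i ∧ q.1 = j then m p.2 q.2 else 0

lemma eB_mul_same (i j l : Fin n) (m m' : Matrix (Fin 2) (Fin 2) ℂ) :
    eB n i j m * eB n j l m' = eB n i l (m * m') := by
  ext p q
  rw [Matrix.mul_apply, Fintype.sum_prod_type]
  have h : ∀ k : Fin n, ∑ c : Fin 2, eB n i j m p (k, c) * eB n j l m' (k, c) q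
      = if k = j then (if p.1 = i ∧ q.1 = l then (m * m') p.2 q.2 else 0) else 0 := by
    intro k
    rcases eq_or_ne k j with h | h
    · subst h
      simp only [if_pos rfl, eB, Matrix.of_apply]
      by_cases h1 : p.1 = i <;> by_cases h2 : q.1 = l <;>
        simp [h1, h2, Matrix.mul_apply]
    · simp [eB, h]
  rw [Finset.sum_congr rfl fun k _ => h k]
  simp [eB]

lemma eB_mul_ne {j k : Fin n} (h : j ≠ k) (i l : Fin n)
    (m m' : Matrix (Fin 2) (Fin 2) ℂ) :
    eB n i j m * eB n k l m' = 0 := by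
  ext p q
  rw [Matrix.mul_apply, Fintype.sum_prod_type]
  rw [Finset.sum_eq_zero, Matrix.zero_apply]
  intro t _
  refine Finset.sum_eq_zero fun c _ => ?_
  rcases eq_or_ne t j with h1 | h1
  · simp only [eB, Matrix.of_apply]
    rw [if_neg (fun hc : t = k ∧ q.1 = l => h (by rw [← h1, hc.1])), mul_zero]
  · simp only [eB, Matrix.of_apply]
    rw [if_neg (fun hc : p.1 = i ∧ t = j => h1 hc.2), zero_mul]

lemma eB_add (i j : Fin n) (m m' : Matrix (Fin 2) (Fin 2) ℂ) :
    eB n i j (m + m') = eB n i j m + eB n i j m' := by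
  ext p q; simp only [eB, Matrix.of_apply, Matrix.add_apply]
  split_ifs <;> simp

lemma eB_smul (i j : Fin n) (c : ℂ) (m : Matrix (Fin 2) (Fin 2) ℂ) :
    eB n i j (c • m) = c • eB n i j m := by
  ext p q; simp only [eB, Matrix.of_apply, Matrix.smul_apply]
  split_ifs <;> simp

lemma eq_sum_eB (M : Matrix (Fin n × Fin 2) (Fin n × Fin 2) ℂ) :
    M = ∑ i : Fin n, ∑ j : Fin n, eB n i j (Matrix.of fun a c => M (i, a) (j, c)) := by
  ext p q
  rw [Matrix.sum_apply]
  simp [Matrix.sum_apply, eB, Matrix.of_apply, ite_and, Finset.sum_ite_eq]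

end Laffey
namespace Laffey
open Matrix Finset Polynomial

variable {n : ℕ} {b : ℝ}

/-- the generated subalgebra -/
noncomputable def Sgen (n : ℕ) (b : ℝ) :
    Subalgebra ℂ (Matrix (Fin n × Fin 2) (Fin n × Fin 2) ℂ) :=
  Algebra.adjoin ℂ
    {(laffeyA n b * laffeyA n b).map (algebraMap ℝ ℂ),
     (laffeyA n b * laffeyB n + laffeyB n * laffeyA n b).map (algebraMap ℝ ℂ)}

lemma aeval_diagonal {m : Type*} [Fintype m] [DecidableEq m]
    (d : m → ℂ) (f : ℂ[X]) :
    Polynomial.aeval (diagonal d) f = diagonal fun p => f.eval (d p) := by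
  have h0 : diagonal d = diagonalAlgHom ℂ d := rfl
  rw [h0, Polynomial.aeval_algHom_apply]
  have h1 : (Polynomial.aeval d f : m → ℂ) = fun p => f.eval (d p) := by
    funext p
    rw [Polynomial.aeval_fn_apply, ← Polynomial.coe_aeval_eq_eval]
  rw [h1]
  rfl

lemma Kc_eq (n : ℕ) (b : ℝ) :
    (laffeyA n b * laffeyB n + laffeyB n * laffeyA n b).map (algebraMap ℝ ℂ)
      = diagonal (fun p : Fin n × Fin 2 => (-2 * ((p.1 : ℕ) + 1) : ℂ)) := by
  rw [K_eq, Matrix.diagonal_map (map_zero _)]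
  congr 1
  funext p
  push_cast
  simp

lemma Pj_mem (i : Fin n) :
    eB n i i 1 ∈ Sgen n b := by
  classical
  set v : Fin n → ℂ := fun k => -2 * ((k : ℕ) + 1) with hv
  have hinj : Set.InjOn v (univ : Finset (Fin n)) := by
    intro x _ y _ hxy
    have h1 : ((x : ℕ) : ℂ) = ((y : ℕ) : ℂ) := by
      simp only [v] at hxy
      linear_combination hxy * (-1/2)
    exact Fin.val_injective (Nat.cast_injective h1)
  have hKmem : (laffeyA n b * laffeyB n + laffeyB n * laffeyA n b).map (algebraMap ℝ ℂ)
      ∈ Sgen n b :=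
    Algebra.subset_adjoin (Set.mem_insert_iff.mpr (Or.inr rfl))
  have haev := Polynomial.aeval_mem_adjoin_singleton ℂ
    ((laffeyA n b * laffeyB n + laffeyB n * laffeyA n b).map (algebraMap ℝ ℂ))
    (p := Lagrange.basis univ v i)
  have hsub : ({(laffeyA n b * laffeyB n + laffeyB n * laffeyA n b).map (algebraMap ℝ ℂ)} :
      Set (Matrix (Fin n × Fin 2) (Fin n × Fin 2) ℂ)) ⊆
      {(laffeyA n b * laffeyA n b).map (algebraMap ℝ ℂ),
       (laffeyA n b * laffeyB n + laffeyB n * laffeyA n b).map (algebraMap ℝ ℂ)} := by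
    intro x hx
    rw [Set.mem_singleton_iff] at hx
    exact hx ▸ Set.mem_insert_iff.mpr (Or.inr rfl)
  have hmono : Polynomial.aeval
      ((laffeyA n b * laffeyB n + laffeyB n * laffeyA n b).map (algebraMap ℝ ℂ))
      (Lagrange.basis univ v i) ∈ Sgen n b := Algebra.adjoin_mono hsub haev
  have heq : Polynomial.aeval
      ((laffeyA n b * laffeyB n + laffeyB n * laffeyA n b).map (algebraMap ℝ ℂ))
      (Lagrange.basis univ v i) = eB n i i 1 := by
    rw [Kc_eq, aeval_diagonal]
    ext p q
    rcases eq_or_ne p q with rfl | hpq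
    · rw [diagonal_apply_eq]
      rcases eq_or_ne p.1 i with h1 | h1
      · rw [show (-2 * ((p.1 : ℕ) + 1) : ℂ) = v p.1 from rfl, h1,
          Lagrange.eval_basis_self hinj (mem_univ i)]
        simp [eB, h1, Matrix.one_apply]
      · rw [show (-2 * ((p.1 : ℕ) + 1) : ℂ) = v p.1 from rfl,
          Lagrange.eval_basis_of_ne (Ne.symm h1) (mem_univ p.1)]
        simp [eB, h1]
    · rw [diagonal_apply_ne _ hpq]
      simp only [eB, Matrix.of_apply]
      rcases eq_or_ne p.1 i with h1 | h1
      · rcases eq_or_ne q.1 i with h2 | h2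
        · have h3 : p.2 ≠ q.2 := fun hc => hpq (Prod.ext (h1.trans h2.symm) hc)
          rw [if_pos ⟨h1, h2⟩, Matrix.one_apply_ne h3]
        · rw [if_neg (fun hc => h2 hc.2)]
      · rw [if_neg (fun hc => h1 hc.1)]
  exact heq ▸ hmono

end Laffey
namespace Laffey
open Matrix Finset

variable {n : ℕ}

/-- The 2-blocks of `H = A²` in block row 0 (for column `j ≥ 1`). -/
noncomputable def mBlk (b : ℝ) (j : ℕ) : Matrix (Fin 2) (Fin 2) ℝ :=
  if j = 1 then !![-2, -1+b; -1-b, -2]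
  else if j = 2 then !![1, -2; -2, 1]
  else if j = 3 then !![1+3*b, -3; -3, 1-3*b]
  else !![0, -(j:ℝ); -(j:ℝ), 0]

lemma upBlk_zero (b : ℝ) {i j : ℕ} (h0 : i ≠ 0) (h1 : ¬(i = 1 ∧ (j = 2 ∨ j = 3))) :
    upBlk b i j = 0 := by
  unfold upBlk; rw [if_neg h0, if_neg h1]

lemma H_apply (b : ℝ) (p q : Fin n × Fin 2) :
    (laffeyA n b * laffeyA n b) p q
      = (∑ k : Fin n, blkA b (p.1 : ℕ) (k : ℕ) * blkA b (k : ℕ) (q.1 : ℕ)) p.2 q.2 := by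
  rw [Matrix.mul_apply, Fintype.sum_prod_type, Matrix.sum_apply]
  refine Finset.sum_congr rfl fun k _ => ?_
  rw [Matrix.mul_apply]
  refine Finset.sum_congr rfl fun c _ => ?_
  rw [laffeyA_apply, laffeyA_apply]

lemma sum_blk (hn : 4 ≤ n) (b : ℝ) {j : ℕ} (hj1 : 1 ≤ j) (hjn : j < n) :
    (∑ k : Fin n, blkA b 0 (k : ℕ) * blkA b (k : ℕ) j) = mBlk b j := by
  rw [Fin.sum_univ_eq_sum_range (fun k => blkA b 0 k * blkA b k j) n]
  by_cases hj4 : 4 ≤ j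
  · -- support {0, j}
    have hzero : ∀ k ∈ Finset.range n, k ∉ ({0, j} : Finset ℕ) →
        blkA b 0 k * blkA b k j = 0 := by
      intro k _ hk
      simp only [Finset.mem_insert, Finset.mem_singleton, not_or] at hk
      have h2 : blkA b k j = 0 := by
        unfold blkA
        rw [if_neg hk.2]
        rcases lt_or_gt_of_ne hk.2 with h | h
        · rw [if_pos h, upBlk_zero b hk.1 (by omega)]
        · rw [if_neg (by omega), upBlk_zero b (by omega) (by omega)]
          simp
      rw [h2, mul_zero]
    rw [← Finset.sum_subset (by
        intro x hx
        simp only [Finset.mem_insert, Finset.mem_singleton] at hx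
        rcases hx with rfl | rfl <;> simp [Finset.mem_range] <;> omega) hzero,
      Finset.sum_pair (by omega : (0:ℕ) ≠ j)]
    have h00 : blkA b 0 0 = (1:ℕ) • uM := by unfold blkA; rw [if_pos rfl]
    have h0j : blkA b 0 j = alphaM := by
      unfold blkA
      rw [if_neg (by omega), if_pos (by omega)]
      unfold upBlk
      rw [if_pos rfl, if_neg (by omega)]
    have hjj : blkA b j j = (j+1) • uM := by unfold blkA; rw [if_pos rfl]
    rw [h00, h0j, hjj, mBlk, if_neg (by omega), if_neg (by omega), if_neg (by omega)]
    ext a c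
    fin_cases a <;> fin_cases c <;>
      simp [alphaM, uM, Matrix.mul_apply, Fin.sum_univ_two] <;> push_cast <;> ring
  · -- j ∈ {1,2,3}: support in range 4
    have hzero : ∀ k ∈ Finset.range n, k ∉ Finset.range 4 →
        blkA b 0 k * blkA b k j = 0 := by
      intro k _ hk
      rw [Finset.mem_range, not_lt] at hk
      have h2 : blkA b k j = 0 := by
        unfold blkA
        rw [if_neg (by omega), if_neg (by omega), upBlk_zero b (by omega) (by omega)]
        simp
      rw [h2, mul_zero]
    rw [← Finset.sum_subset (Finset.range_subset_range.mpr hn) hzero]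
    rw [Finset.sum_range_succ, Finset.sum_range_succ, Finset.sum_range_succ,
      Finset.sum_range_one]
    interval_cases j
    · -- j = 1
      simp only [blkA, upBlk, mBlk]
      ext a c
      fin_cases a <;> fin_cases c <;>
        simp (config := { decide := true }) [alphaM, betaM, uM, Matrix.mul_apply,
          Fin.sum_univ_two, Matrix.vecHead, Matrix.vecTail, Matrix.transpose_apply,
          Matrix.vecMul, dotProduct, Matrix.smul_apply, nsmul_eq_mul] <;> ring
    · -- j = 2
      simp only [blkA, upBlk, mBlk]
      ext a c
      fin_cases a <;> fin_cases c <;>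
        simp (config := { decide := true }) [alphaM, betaM, uM, Matrix.mul_apply,
          Fin.sum_univ_two, Matrix.vecHead, Matrix.vecTail, Matrix.transpose_apply,
          Matrix.vecMul, dotProduct, Matrix.smul_apply, nsmul_eq_mul] <;> ring
    · -- j = 3
      simp only [blkA, upBlk, mBlk]
      ext a c
      fin_cases a <;> fin_cases c <;>
        simp (config := { decide := true }) [alphaM, betaM, uM, Matrix.mul_apply,
          Fin.sum_univ_two, Matrix.vecHead, Matrix.vecTail, Matrix.transpose_apply,
          Matrix.vecMul, dotProduct, Matrix.smul_apply, nsmul_eq_mul] <;> ring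

end Laffey
namespace Laffey
open Matrix Finset

variable {n : ℕ} {b : ℝ}

noncomputable def mBlkC (b : ℝ) (j : ℕ) : Matrix (Fin 2) (Fin 2) ℂ :=
  (mBlk b j).map (algebraMap ℝ ℂ)

lemma det_mBlk_ne (b : ℝ) {j : ℕ} (hj : 1 ≤ j) : (mBlk b j).det ≠ 0 := by
  unfold mBlk
  split_ifs with h1 h2 h3 <;> rw [Matrix.det_fin_two_of]
  · nlinarith [sq_nonneg b]
  · norm_num
  · nlinarith [sq_nonneg b]
  · have hj4 : 4 ≤ j := by omega
    have : (4:ℝ) ≤ (j:ℝ) := by exact_mod_cast hj4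
    nlinarith

lemma isUnit_det_mBlkC (b : ℝ) {j : ℕ} (hj : 1 ≤ j) : IsUnit (mBlkC b j).det := by
  have h := (algebraMap ℝ ℂ).map_det (mBlk b j)
  have h2 : (mBlkC b j).det = algebraMap ℝ ℂ (mBlk b j).det := by
    rw [h]; rfl
  rw [isUnit_iff_ne_zero, h2]
  intro hc
  exact det_mBlk_ne b hj (by
    have := (algebraMap ℝ ℂ).injective (hc.trans (map_zero (algebraMap ℝ ℂ)).symm)
    exact this)

lemma P_mul (i : Fin n) (M : Matrix (Fin n × Fin 2) (Fin n × Fin 2) ℂ) :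
    eB n i i 1 * M = Matrix.of fun p q => if p.1 = i then M (i, p.2) q else 0 := by
  ext p q
  rw [Matrix.mul_apply, Fintype.sum_prod_type]
  have h : ∀ t : Fin n, ∑ c : Fin 2, eB n i i 1 p (t, c) * M (t, c) q
      = if t = i then (if p.1 = i then M (i, p.2) q else 0) else 0 := by
    intro t
    by_cases h1 : p.1 = i <;> by_cases h2 : t = i
    · subst h2
      simp [eB, h1, Matrix.one_apply, ite_mul, zero_mul, Finset.sum_ite_eq]
    · simp [eB, h2]
    · simp [eB, h1, h2]
    · simp [eB, h2]
  rw [Finset.sum_congr rfl fun t _ => h t, Finset.sum_ite_eq' univ i _]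
  simp

lemma mul_P (j : Fin n) (M : Matrix (Fin n × Fin 2) (Fin n × Fin 2) ℂ) :
    M * eB n j j 1 = Matrix.of fun p q => if q.1 = j then M p (j, q.2) else 0 := by
  ext p q
  rw [Matrix.mul_apply, Fintype.sum_prod_type]
  have h : ∀ t : Fin n, ∑ c : Fin 2, M p (t, c) * eB n j j 1 (t, c) q
      = if t = j then (if q.1 = j then M p (j, q.2) else 0) else 0 := by
    intro t
    by_cases h1 : q.1 = j <;> by_cases h2 : t = j
    · subst h2
      simp only [eB, Matrix.of_apply, h1, and_true, Matrix.one_apply, if_pos rfl]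
      simp [mul_ite, mul_zero, Finset.sum_ite_eq']
    · simp [eB, h2]
    · simp [eB, h1, h2]
    · simp [eB, h2]
  rw [Finset.sum_congr rfl fun t _ => h t, Finset.sum_ite_eq' univ j _]
  simp

lemma sandwich_eq (i j : Fin n) (M : Matrix (Fin n × Fin 2) (Fin n × Fin 2) ℂ) :
    eB n i i 1 * M * eB n j j 1
      = eB n i j (Matrix.of fun a c => M (i, a) (j, c)) := by
  rw [mul_P, P_mul]
  ext p q
  simp only [eB, Matrix.of_apply]
  by_cases h1 : p.1 = i <;> by_cases h2 : q.1 = j <;> simp [h1, h2]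

lemma Hc_mem : (laffeyA n b * laffeyA n b).map (algebraMap ℝ ℂ) ∈ Sgen n b :=
  Algebra.subset_adjoin (Set.mem_insert_iff.mpr (Or.inl rfl))

lemma H_symm (p q : Fin n × Fin 2) :
    (laffeyA n b * laffeyA n b) q p = (laffeyA n b * laffeyA n b) p q := by
  rw [Matrix.mul_apply, Matrix.mul_apply]
  refine Finset.sum_congr rfl fun r _ => ?_
  rw [laffeyA_skew n b q r, laffeyA_skew n b r p]
  ring

lemma conn_mem (hn : 4 ≤ n) (i0 : Fin n) (h0 : (i0 : ℕ) = 0)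
    (j : Fin n) (hj : 1 ≤ (j : ℕ)) :
    eB n i0 j (mBlkC b (j : ℕ)) ∈ Sgen n b ∧
      eB n j i0 (mBlkC b (j : ℕ))ᵀ ∈ Sgen n b := by
  have hH : ∀ a c, ((laffeyA n b * laffeyA n b).map (algebraMap ℝ ℂ)) (i0, a) (j, c)
      = mBlkC b (j : ℕ) a c := by
    intro a c
    rw [Matrix.map_apply, H_apply]
    simp only
    rw [h0, sum_blk hn b hj j.isLt]
    rfl
  constructor
  · have he : eB n i0 i0 1 * ((laffeyA n b * laffeyA n b).map (algebraMap ℝ ℂ)) * eB n j j 1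
        = eB n i0 j (mBlkC b (j : ℕ)) := by
      have harg : (Matrix.of fun a c =>
          ((laffeyA n b * laffeyA n b).map (algebraMap ℝ ℂ)) (i0, a) (j, c))
          = mBlkC b (j : ℕ) := by
        ext a c
        rw [Matrix.of_apply, hH a c]
      rw [sandwich_eq, harg]
    exact he ▸ mul_mem (mul_mem (Pj_mem i0) Hc_mem) (Pj_mem j)
  · have he : eB n j j 1 * ((laffeyA n b * laffeyA n b).map (algebraMap ℝ ℂ)) * eB n i0 i0 1
        = eB n j i0 (mBlkC b (j : ℕ))ᵀ := by
      have harg : (Matrix.of fun a c =>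
          ((laffeyA n b * laffeyA n b).map (algebraMap ℝ ℂ)) (j, a) (i0, c))
          = (mBlkC b (j : ℕ))ᵀ := by
        ext a c
        rw [Matrix.of_apply, Matrix.transpose_apply, ← hH c a, Matrix.map_apply,
          Matrix.map_apply, H_symm]
      rw [sandwich_eq, harg]
    exact he ▸ mul_mem (mul_mem (Pj_mem j) Hc_mem) (Pj_mem i0)

end Laffey
namespace Laffey
open Matrix Finset

variable {n : ℕ} {b : ℝ}

lemma corner_mem (hb : b ≠ 0) (hn : 4 ≤ n) (i0 j1 j3 : Fin n)
    (h0 : (i0 : ℕ) = 0) (h1 : (j1 : ℕ) = 1) (h3 : (j3 : ℕ) = 3)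
    (m : Matrix (Fin 2) (Fin 2) ℂ) : eB n i0 i0 m ∈ Sgen n b := by
  have hb' : (b : ℂ) ≠ 0 := by exact_mod_cast hb
  have hP0 : eB n i0 i0 (1 : Matrix (Fin 2) (Fin 2) ℂ) ∈ Sgen n b := Pj_mem i0
  have hsmulT : ∀ (s : ℂ) (x : Matrix (Fin 2) (Fin 2) ℂ),
      eB n i0 i0 x ∈ Sgen n b → eB n i0 i0 (s • x) ∈ Sgen n b := by
    intro s x hx
    rw [eB_smul]
    exact Subalgebra.smul_mem _ hx s
  have haddT : ∀ (x y : Matrix (Fin 2) (Fin 2) ℂ),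
      eB n i0 i0 x ∈ Sgen n b → eB n i0 i0 y ∈ Sgen n b →
      eB n i0 i0 (x + y) ∈ Sgen n b := by
    intro x y hx hy
    rw [eB_add]
    exact add_mem hx hy
  have hmulT : ∀ (x y : Matrix (Fin 2) (Fin 2) ℂ),
      eB n i0 i0 x ∈ Sgen n b → eB n i0 i0 y ∈ Sgen n b →
      eB n i0 i0 (x * y) ∈ Sgen n b := by
    intro x y hx hy
    rw [← eB_mul_same i0 i0 i0]
    exact mul_mem hx hy
  obtain ⟨hc1a, hc1b⟩ := conn_mem (b := b) hn i0 h0 j1 (by omega)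
  obtain ⟨hc3a, hc3b⟩ := conn_mem (b := b) hn i0 h0 j3 (by omega)
  rw [h1] at hc1a hc1b
  rw [h3] at hc3a hc3b
  have hC1 : eB n i0 i0 (mBlkC b 1 * (mBlkC b 1)ᵀ) ∈ Sgen n b := by
    rw [← eB_mul_same i0 j1 i0]
    exact mul_mem hc1a hc1b
  have hC3 : eB n i0 i0 (mBlkC b 3 * (mBlkC b 3)ᵀ) ∈ Sgen n b := by
    rw [← eB_mul_same i0 j3 i0]
    exact mul_mem hc3a hc3b
  have hwid : ((-1/6 : ℂ)) • ((3:ℂ) • (mBlkC b 1 * (mBlkC b 1)ᵀ + (-(5+(b:ℂ)^2)) • 1)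
      + (mBlkC b 3 * (mBlkC b 3)ᵀ + (-(10+9*(b:ℂ)^2)) • 1))
      = !![(0:ℂ), -1; -1, 0] := by
    ext a c
    fin_cases a <;> fin_cases c <;>
      simp (config := { decide := true }) [mBlkC, mBlk, Matrix.map_apply,
        Matrix.mul_apply, Fin.sum_univ_two, Matrix.transpose_apply, Matrix.smul_apply,
        Matrix.one_apply, Matrix.add_apply, Complex.coe_algebraMap] <;>
      push_cast <;> ring
  have hwmem : eB n i0 i0 !![(0:ℂ), -1; -1, 0] ∈ Sgen n b := by
    rw [← hwid]
    exact hsmulT _ _ (haddT _ _ (hsmulT _ _ (haddT _ _ hC1 (hsmulT _ _ hP0)))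
      (haddT _ _ hC3 (hsmulT _ _ hP0)))
  have hαid : ((6*(b:ℂ))⁻¹) • (mBlkC b 3 * (mBlkC b 3)ᵀ + (-(10+9*(b:ℂ)^2)) • 1
      + (-6:ℂ) • !![(0:ℂ), -1; -1, 0]) = !![(1:ℂ), 0; 0, -1] := by
    ext a c
    fin_cases a <;> fin_cases c <;>
      simp (config := { decide := true }) [mBlkC, mBlk, Matrix.map_apply,
        Matrix.mul_apply, Fin.sum_univ_two, Matrix.transpose_apply, Matrix.smul_apply,
        Matrix.one_apply, Matrix.add_apply, Complex.coe_algebraMap] <;>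
      (try field_simp) <;> (try ring) <;> (try tauto)
  have hαmem : eB n i0 i0 !![(1:ℂ), 0; 0, -1] ∈ Sgen n b := by
    rw [← hαid]
    exact hsmulT _ _ (haddT _ _ (haddT _ _ hC3 (hsmulT _ _ hP0)) (hsmulT _ _ hwmem))
  have huid : !![(1:ℂ), 0; 0, -1] * !![(0:ℂ), -1; -1, 0] = !![(0:ℂ), -1; 1, 0] := by
    ext a c
    fin_cases a <;> fin_cases c <;>
      simp [Matrix.mul_apply, Fin.sum_univ_two]
  have humem : eB n i0 i0 !![(0:ℂ), -1; 1, 0] ∈ Sgen n b := by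
    rw [← huid]
    exact hmulT _ _ hαmem hwmem
  have hspan : m = ((m 0 0 + m 1 1)/2) • (1 : Matrix (Fin 2) (Fin 2) ℂ)
      + ((m 0 0 - m 1 1)/2) • !![(1:ℂ), 0; 0, -1]
      + ((m 1 0 - m 0 1)/2) • !![(0:ℂ), -1; 1, 0]
      + (-(m 0 1 + m 1 0)/2) • !![(0:ℂ), -1; -1, 0] := by
    ext a c
    fin_cases a <;> fin_cases c <;>
      simp [Matrix.one_apply, Matrix.smul_apply, Matrix.add_apply] <;> ring
  rw [hspan]
  exact haddT _ _ (haddT _ _ (haddT _ _ (hsmulT _ _ hP0) (hsmulT _ _ hαmem))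
    (hsmulT _ _ humem)) (hsmulT _ _ hwmem)

end Laffey

namespace Laffey
open Matrix Finset

variable {n : ℕ} {b : ℝ}

lemma eB_mem (hb : b ≠ 0) (hn : 4 ≤ n) (i j : Fin n)
    (m : Matrix (Fin 2) (Fin 2) ℂ) : eB n i j m ∈ Sgen n b := by
  set i0 : Fin n := ⟨0, by omega⟩ with hi0
  set j1 : Fin n := ⟨1, by omega⟩ with hj1
  set j3 : Fin n := ⟨3, by omega⟩ with hj3
  have hcorner := corner_mem hb hn i0 j1 j3 rfl rfl rfl
  by_cases hi : (i : ℕ) = 0 <;> by_cases hj : (j : ℕ) = 0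
  · have h1 : i = i0 := Fin.ext (by rw [hi])
    have h2 : j = i0 := Fin.ext (by rw [hj])
    subst h1; subst h2
    exact hcorner m
  · have h1 : i = i0 := Fin.ext (by rw [hi])
    subst h1
    have hdet := isUnit_det_mBlkC (j := (j : ℕ)) b (by omega)
    obtain ⟨hconn, -⟩ := conn_mem (b := b) hn i0 rfl j (by omega)
    have key : eB n i0 i0 (m * (mBlkC b (j : ℕ))⁻¹) * eB n i0 j (mBlkC b (j : ℕ))
        = eB n i0 j m := by
      rw [eB_mul_same, mul_assoc, Matrix.nonsing_inv_mul _ hdet, mul_one]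
    exact key ▸ mul_mem (hcorner _) hconn
  · have h2 : j = i0 := Fin.ext (by rw [hj])
    subst h2
    have hdetT : IsUnit ((mBlkC b (i : ℕ))ᵀ).det := by
      rw [Matrix.det_transpose]
      exact isUnit_det_mBlkC b (by omega)
    obtain ⟨-, hconn⟩ := conn_mem (b := b) hn i0 rfl i (by omega)
    have key : eB n i i0 ((mBlkC b (i : ℕ))ᵀ)
        * eB n i0 i0 (((mBlkC b (i : ℕ))ᵀ)⁻¹ * m) = eB n i i0 m := by
      rw [eB_mul_same, ← mul_assoc, Matrix.mul_nonsing_inv _ hdetT, one_mul]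
    exact key ▸ mul_mem hconn (hcorner _)
  · have hdetj := isUnit_det_mBlkC (j := (j : ℕ)) b (by omega)
    have hdetiT : IsUnit ((mBlkC b (i : ℕ))ᵀ).det := by
      rw [Matrix.det_transpose]
      exact isUnit_det_mBlkC b (by omega)
    obtain ⟨hconnj, -⟩ := conn_mem (b := b) hn i0 rfl j (by omega)
    obtain ⟨-, hconni⟩ := conn_mem (b := b) hn i0 rfl i (by omega)
    have key : eB n i i0 ((mBlkC b (i : ℕ))ᵀ)
        * eB n i0 i0 (((mBlkC b (i : ℕ))ᵀ)⁻¹ * m * (mBlkC b (j : ℕ))⁻¹)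
        * eB n i0 j (mBlkC b (j : ℕ)) = eB n i j m := by
      rw [eB_mul_same, eB_mul_same]
      congr 1
      rw [show (mBlkC b (i : ℕ))ᵀ * (((mBlkC b (i : ℕ))ᵀ)⁻¹ * m * (mBlkC b (j : ℕ))⁻¹)
          = m * (mBlkC b (j : ℕ))⁻¹ from by
            rw [← mul_assoc, ← mul_assoc, Matrix.mul_nonsing_inv _ hdetiT, one_mul],
        mul_assoc, Matrix.nonsing_inv_mul _ hdetj, mul_one]
    exact key ▸ mul_mem (mul_mem hconni (hcorner _)) hconnj

end Laffey

/-- For the Laffey-type family, the complexifications of `H := A²` and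
`K := AB + BA` generate the full matrix algebra `M_{2n}(ℂ)`. Together with the
even-multiplicity property of the eigenvalues of `x • H + y • K`, this gives a
one-parameter family of counterexamples to Kippenhahn's conjecture in every even
size `2n ≥ 8`. -/
theorem laffey_family_generates_full_algebra
    (n : ℕ) (hn : 4 ≤ n) (b : ℝ) (hb : b ≠ 0) :
    Algebra.adjoin ℂ
      {(laffeyA n b * laffeyA n b).map (algebraMap ℝ ℂ),
       (laffeyA n b * laffeyB n + laffeyB n * laffeyA n b).map (algebraMap ℝ ℂ)} = ⊤ := by
  have htop : ∀ M : Matrix (Fin n × Fin 2) (Fin n × Fin 2) ℂ, M ∈ Laffey.Sgen n b := by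
    intro M
    rw [Laffey.eq_sum_eB M]
    exact Subalgebra.sum_mem _ fun i _ => Subalgebra.sum_mem _ fun j _ =>
      Laffey.eB_mem hb hn i j _
  exact top_unique fun x _ => htop x
end

section
/- Let F be a field, n, k ≥ 1, and A : Fin k → Matrix (Fin n) (Fin n) F. Let F̄ := AlgebraicClosure F. Then the A m generate the full matrix algebra over F if and only if their images generate the full matrix algebra over F̄: Algebra.adjoin F (Set.range A) = ⊤ ↔ Algebra.adjoin F̄ (Set.range (fun m => (A m).map (algebraMap F F̄))) = ⊤. -/
open Submodule

private lemma span_image_top_iff {F K : Type*} [Field F] [Field K] [Algebra F K]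
    {n : ℕ} (t : Set (Matrix (Fin n) (Fin n) F)) :
    Submodule.span F t = ⊤ ↔
      Submodule.span K ((fun M : Matrix (Fin n) (Fin n) F =>
        M.map (algebraMap F K)) '' t) = ⊤ := by
  let g : Matrix (Fin n) (Fin n) F →ₐ[F] Matrix (Fin n) (Fin n) K :=
    (Algebra.ofId F K).mapMatrix
  have hgfun : (fun M : Matrix (Fin n) (Fin n) F => M.map (algebraMap F K)) = ⇑g := by
    funext M; ext a b; simp [g, Algebra.ofId_apply]
  rw [hgfun]
  have hstd : ∀ i j : Fin n, g (Matrix.single i j 1) = Matrix.single i j 1 := by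
    intro i j
    ext a b
    simp [g, Matrix.single, Matrix.map_apply, apply_ite, Algebra.ofId_apply]
  constructor
  · intro h
    have h1 : ∀ M : Matrix (Fin n) (Fin n) F, g M ∈ Submodule.span K (⇑g '' t) := by
      intro M
      have hM : M ∈ Submodule.span F t := h ▸ Submodule.mem_top
      have : g M ∈ (Submodule.span F t).map g.toLinearMap := ⟨M, hM, rfl⟩
      rw [Submodule.map_span] at this
      exact Submodule.span_le_restrictScalars F K _ this
    rw [eq_top_iff]
    intro x _
    rw [Matrix.matrix_eq_sum_single x]
    refine Submodule.sum_mem _ fun i _ => Submodule.sum_mem _ fun j _ => ?_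
    have : Matrix.single i j (x i j) = x i j • Matrix.single i j 1 := by
      rw [Matrix.smul_single, smul_eq_mul, mul_one]
    rw [this]
    exact Submodule.smul_mem _ _ (hstd i j ▸ h1 (Matrix.single i j 1))
  · intro h
    set W := Submodule.span F t with hW
    haveI : FiniteDimensional F (Matrix (Fin n) (Fin n) F) := by infer_instance
    let b := Module.finBasis F W
    have hWspan : Submodule.span F (Set.range fun i => (b i : Matrix (Fin n) (Fin n) F)) = W := by
      have := congrArg (Submodule.map W.subtype) b.span_eq
      rwa [Submodule.map_span, Submodule.map_top, Submodule.range_subtype,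
        ← Set.range_comp] at this
    have key : Submodule.span K (⇑g '' t) ≤
        Submodule.span K (Set.range fun i => g (b i)) := by
      rw [Submodule.span_le]
      rintro x ⟨y, hy, rfl⟩
      have hyW : y ∈ W := Submodule.subset_span hy
      have h2 : g y ∈ W.map g.toLinearMap := ⟨y, hyW, rfl⟩
      rw [← hWspan, Submodule.map_span, ← Set.range_comp] at h2
      exact Submodule.span_le_restrictScalars F K _ h2
    rw [h, top_le_iff] at key
    have hle : Module.finrank K (Matrix (Fin n) (Fin n) K) ≤ Module.finrank F W := by
      rw [← finrank_top K, ← key]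
      simpa [Set.finrank] using finrank_range_le_card (R := K) (fun i => g (b i))
    have : Module.finrank F W = Module.finrank F (Matrix (Fin n) (Fin n) F) := by
      refine le_antisymm (Submodule.finrank_le W) ?_
      have h1 : Module.finrank F (Matrix (Fin n) (Fin n) F) = n * n := by
        simp [Module.finrank_matrix]
      have h2 : Module.finrank K (Matrix (Fin n) (Fin n) K) = n * n := by
        simp [Module.finrank_matrix]
      omega
    exact Submodule.eq_top_of_finrank_eq this

/-- A tuple of `n × n` matrices over a field `F` generates the full matrix
algebra over `F` if and only if their images generate the full matrix algebra
over the algebraic closure of `F`. -/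
theorem adjoin_eq_top_iff_adjoin_algebraicClosure_eq_top
    (F : Type*) [Field F] (n k : ℕ) (hn : 1 ≤ n) (hk : 1 ≤ k)
    (A : Fin k → Matrix (Fin n) (Fin n) F) :
    Algebra.adjoin F (Set.range A) = ⊤ ↔
      Algebra.adjoin (AlgebraicClosure F)
        (Set.range fun m => (A m).map (algebraMap F (AlgebraicClosure F))) = ⊤ := by
  set K := AlgebraicClosure F
  set f : Matrix (Fin n) (Fin n) F → Matrix (Fin n) (Fin n) K :=
    fun M => M.map (algebraMap F K) with hf
  let g : Matrix (Fin n) (Fin n) F →ₐ[F] Matrix (Fin n) (Fin n) K :=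
    (Algebra.ofId F K).mapMatrix
  have hgfun : f = ⇑g := by
    funext M; ext a b; simp [g, hf, Algebra.ofId_apply]
  have hrange : (Set.range fun m => (A m).map (algebraMap F K)) = f '' Set.range A := by
    rw [← Set.range_comp]; rfl
  rw [hrange, ← Algebra.toSubmodule_eq_top, ← Algebra.toSubmodule_eq_top,
    Algebra.adjoin_eq_span, Algebra.adjoin_eq_span]
  have hclos : (↑(Submonoid.closure (f '' Set.range A)) :
      Set (Matrix (Fin n) (Fin n) K)) = f '' ↑(Submonoid.closure (Set.range A)) := by
    rw [hgfun, ← MonoidHom.map_mclosure, Submonoid.coe_map]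
  rw [hclos]
  exact span_image_top_iff _
end
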